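/- arXiv:1311.6201 — 10 statements merged into one kernel-verified Lean document; each statement's English description precedes it below -/
import Mathlib

section
/- There is no finite group G with |Cent(G)| = 3. -/
/-- The set of distinct centralizers of elements of `G`. -/
def Cent (G : Type*) [Group G] : Set (Subgroup G) :=
  Set.range fun x : G => Subgroup.centralizer {x}

lemma aux_cent {G : Type*} [Group G] {H K : Subgroup G}
    (hHm : H ∈ Cent G) (hH : H ≠ ⊤) (hK : K ≠ ⊤)
    (hcov : ∀ x : G, Subgroup.centralizer {x} = ⊤ ∨ Subgroup.centralizer {x} = H ∨
      Subgroup.centralizer {x} = K) : False := by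
  obtain ⟨h, hh⟩ := hHm
  have cover : ∀ x : G, x ∈ H ∨ x ∈ K := by
    intro x
    have hself : x ∈ Subgroup.centralizer ({x} : Set G) := by
      rw [Subgroup.mem_centralizer_iff]
      rintro y rfl; rfl
    rcases hcov x with hx | hx | hx
    · left
      rw [← hh, Subgroup.mem_centralizer_iff]
      intro y hy
      have : y ∈ Subgroup.centralizer ({x} : Set G) := by rw [hx]; trivial
      rw [Subgroup.mem_centralizer_iff] at this
      exact (this x rfl).symm
    · left; rw [← hx]; exact hself
    · right; rw [← hx]; exact hself
  have hexH : ∃ a : G, a ∉ H := by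
    by_contra hc
    push_neg at hc
    exact hH ((Subgroup.eq_top_iff' H).mpr hc)
  have hexK : ∃ b : G, b ∉ K := by
    by_contra hc
    push_neg at hc
    exact hK ((Subgroup.eq_top_iff' K).mpr hc)
  obtain ⟨a, ha⟩ := hexH
  obtain ⟨b, hb⟩ := hexK
  have haK : a ∈ K := (cover a).resolve_left ha
  have hbH : b ∈ H := (cover b).resolve_right hb
  rcases cover (a * b) with hab | hab
  · exact ha (by simpa using H.mul_mem hab (H.inv_mem hbH))
  · exact hb (by simpa using K.mul_mem (K.inv_mem haK) hab)

theorem stmt2 (G : Type*) [Group G] [Finite G] : (Cent G).ncard ≠ 3 := by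
  intro h3
  rw [Set.ncard_eq_three] at h3
  obtain ⟨a, b, c, hab, hac, hbc, hs⟩ := h3
  have htop : (⊤ : Subgroup G) ∈ Cent G := by
    refine ⟨1, ?_⟩
    ext y
    simp [Subgroup.mem_centralizer_iff]
  have hmem : ∀ x : G, Subgroup.centralizer ({x} : Set G) = a ∨
      Subgroup.centralizer ({x} : Set G) = b ∨ Subgroup.centralizer ({x} : Set G) = c := by
    intro x
    have : Subgroup.centralizer ({x} : Set G) ∈ Cent G := ⟨x, rfl⟩
    rw [hs] at this
    simpa using this
  rw [hs] at htop
  simp only [Set.mem_insert_iff, Set.mem_singleton_iff] at htop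
  rcases htop with rfl | rfl | rfl
  · have hbm : b ∈ Cent G := by rw [hs]; simp
    exact aux_cent hbm (Ne.symm hab) (Ne.symm hac)
      (fun x => (hmem x).imp id (Or.imp id id))
  · have ham : a ∈ Cent G := by rw [hs]; simp
    refine aux_cent ham hab (Ne.symm hbc) (fun x => ?_)
    rcases hmem x with hx | hx | hx
    · exact Or.inr (Or.inl hx)
    · exact Or.inl hx
    · exact Or.inr (Or.inr hx)
  · have ham : a ∈ Cent G := by rw [hs]; simp
    refine aux_cent ham hac hbc (fun x => ?_)
    rcases hmem x with hx | hx | hx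
    · exact Or.inr (Or.inl hx)
    · exact Or.inr (Or.inr hx)
    · exact Or.inl hx
end

section
/- If G is a finite group and G/Z(G) is isomorphic to C7 × C7, then |Cent(G)| = 9. -/
section MGroup

private lemma pow7 : ∀ m : Multiplicative (ZMod 7 × ZMod 7), m ^ 7 = 1 := by decide

private lemma ord7 {m : Multiplicative (ZMod 7 × ZMod 7)} (hm : m ≠ 1) : orderOf m = 7 := by
  have hd : orderOf m ∣ 7 := orderOf_dvd_of_pow_eq_one (pow7 m)
  rcases Nat.Prime.eq_one_or_self_of_dvd (by norm_num) _ hd with h | h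
  · exact absurd (orderOf_eq_one_iff.mp h) hm
  · exact h

private lemma zp_eq {m g : Multiplicative (ZMod 7 × ZMod 7)} (hm : m ≠ 1)
    (hmem : m ∈ Subgroup.zpowers g) : Subgroup.zpowers m = Subgroup.zpowers g := by
  have hg : g ≠ 1 := by
    rintro rfl
    simp [Subgroup.zpowers_one_eq_bot] at hmem
    exact hm hmem
  have hle : Subgroup.zpowers m ≤ Subgroup.zpowers g := (Subgroup.zpowers_le).mpr hmem
  refine Subgroup.eq_of_le_of_card_ge hle ?_
  rw [Nat.card_zpowers, Nat.card_zpowers, ord7 hm, ord7 hg]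

private def ff : Option (ZMod 7) → Multiplicative (ZMod 7 × ZMod 7)
  | none => Multiplicative.ofAdd (0, 1)
  | some b => Multiplicative.ofAdd (1, b)

private lemma ff_ne : ∀ i, ff i ≠ 1 := by decide

private lemma ff_cover : ∀ m : Multiplicative (ZMod 7 × ZMod 7), m ≠ 1 →
    ∃ i, ∃ k : Fin 7, ff i ^ (k : ℕ) = m := by decide

private lemma ff_inj : ∀ i j : Option (ZMod 7), (∃ k : Fin 7, ff i ^ (k : ℕ) = ff j) → i = j := by
  decide

private lemma mem_fin {g x : Multiplicative (ZMod 7 × ZMod 7)} (hg : g ≠ 1)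
    (hx : x ∈ Subgroup.zpowers g) : ∃ k : Fin 7, g ^ (k : ℕ) = x := by
  obtain ⟨n, hn⟩ := mem_powers_iff_mem_zpowers.mpr hx
  refine ⟨⟨n % 7, Nat.mod_lt _ (by norm_num)⟩, ?_⟩
  have := pow_mod_orderOf g n
  rw [ord7 hg] at this
  simpa [this] using hn

private lemma count8 : ((fun m : Multiplicative (ZMod 7 × ZMod 7) => Subgroup.zpowers m) ''
    {m | m ≠ 1}).ncard = 8 := by
  have heq : (fun m : Multiplicative (ZMod 7 × ZMod 7) => Subgroup.zpowers m) '' {m | m ≠ 1}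
      = Set.range (fun i => Subgroup.zpowers (ff i)) := by
    ext H
    constructor
    · rintro ⟨m, hm, rfl⟩
      obtain ⟨i, k, hk⟩ := ff_cover m hm
      refine ⟨i, ?_⟩
      exact (zp_eq hm (hk ▸ (Subgroup.zpowers (ff i)).pow_mem (Subgroup.mem_zpowers _) _)).symm
    · rintro ⟨i, rfl⟩
      exact ⟨ff i, ff_ne i, rfl⟩
  rw [heq, ← Set.image_univ, Set.ncard_image_of_injective _ ?hinj, Set.ncard_univ]
  · simp [Nat.card_eq_fintype_card]
  case hinj =>
    intro i j hij
    apply ff_inj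
    have : ff j ∈ Subgroup.zpowers (ff i) := by
      rw [show Subgroup.zpowers (ff i) = Subgroup.zpowers (ff j) from hij]
      exact Subgroup.mem_zpowers _
    exact mem_fin (ff_ne i) this

end MGroup

section Main

variable {G : Type*} [Group G] [Finite G]

private lemma cent_noncentral (x : G) (hx : x ∉ Subgroup.center G)
    (hQ : ∀ q : G ⧸ Subgroup.center G, q ≠ 1 → orderOf q = 7)
    (hcardQ : Nat.card (G ⧸ Subgroup.center G) = 49) :
    Subgroup.centralizer {x} =
      Subgroup.comap (QuotientGroup.mk' (Subgroup.center G))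
        (Subgroup.zpowers (QuotientGroup.mk' (Subgroup.center G) x)) := by
  set π := QuotientGroup.mk' (Subgroup.center G) with hπdef
  have hπ : Function.Surjective π := QuotientGroup.mk'_surjective _
  have hπx : π x ≠ 1 := by
    simpa [π, QuotientGroup.eq_one_iff] using hx
  apply le_antisymm
  · set K := Subgroup.map π (Subgroup.centralizer {x}) with hK
    have hxK : π x ∈ K := ⟨x, Subgroup.mem_centralizer_singleton_iff.mpr rfl, rfl⟩
    have hzK : Subgroup.zpowers (π x) ≤ K := Subgroup.zpowers_le.mpr hxK
    have hcent_ne : Subgroup.centralizer {x} ≠ ⊤ := by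
      intro htop
      exact hx (Subgroup.mem_center_iff.mpr fun g => by
        have : g ∈ Subgroup.centralizer {x} := htop ▸ Subgroup.mem_top g
        exact (Subgroup.mem_centralizer_singleton_iff.mp this))
    have hKne : K ≠ ⊤ := by
      intro htop
      apply hcent_ne
      have h1 : Subgroup.comap π K = ⊤ := by rw [htop]; exact Subgroup.comap_top π
      rw [hK, Subgroup.comap_map_eq, QuotientGroup.ker_mk'] at h1
      have : Subgroup.center G ≤ Subgroup.centralizer {x} := Subgroup.center_le_centralizer _
      rw [sup_of_le_left this] at h1
      exact h1
    have hdvd : Nat.card K ∣ 49 := hcardQ ▸ Subgroup.card_subgroup_dvd_card K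
    have h7le : 7 ≤ Nat.card K := by
      have := Subgroup.card_le_of_le hzK
      rwa [Nat.card_zpowers, hQ _ hπx] at this
    have hne49 : Nat.card K ≠ 49 := by
      intro h49
      exact hKne (Subgroup.eq_top_of_card_eq K (by rw [h49, hcardQ]))
    have hK7 : Nat.card K = 7 := by
      have hmem : Nat.card K ∈ Nat.divisors 49 := Nat.mem_divisors.mpr ⟨hdvd, by norm_num⟩
      have : Nat.divisors 49 = {1, 7, 49} := by decide
      rw [this] at hmem
      simp only [Finset.mem_insert, Finset.mem_singleton] at hmem
      omega
    have hKz : Subgroup.zpowers (π x) = K :=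
      Subgroup.eq_of_le_of_card_ge hzK (by rw [hK7, Nat.card_zpowers, hQ _ hπx])
    calc Subgroup.centralizer {x} ≤ Subgroup.comap π K := Subgroup.le_comap_map π _
      _ = _ := by rw [← hKz]
  · intro g hg
    obtain ⟨k, hk⟩ := hg
    have hz : g * (x ^ k)⁻¹ ∈ Subgroup.center G := by
      rw [← QuotientGroup.ker_mk' (Subgroup.center G)]
      have : π (g * (x ^ k)⁻¹) = 1 := by
        simp only [] at hk
        rw [map_mul, map_inv, map_zpow, hk]
        group
      exact this
    rw [Subgroup.mem_centralizer_singleton_iff]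
    have hgdecomp : g = (g * (x ^ k)⁻¹) * x ^ k := by group
    rw [hgdecomp]
    have hc1 : Commute x (g * (x ^ k)⁻¹) := Subgroup.mem_center_iff.mp hz x
    have hc2 : Commute x (x ^ k) := (Commute.refl x).zpow_right k
    have : Commute x ((g * (x ^ k)⁻¹) * x ^ k) := Commute.mul_right hc1 hc2
    exact this.symm.eq

end Main

theorem stmt3 (G : Type*) [Group G] [Finite G]
    (h : Nonempty ((G ⧸ Subgroup.center G) ≃* Multiplicative (ZMod 7 × ZMod 7))) :
    (Cent G).ncard = 9 := by
  obtain ⟨φ⟩ := h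
  set π := QuotientGroup.mk' (Subgroup.center G) with hπdef
  have hπ : Function.Surjective ⇑π := QuotientGroup.mk'_surjective _
  have hcardQ : Nat.card (G ⧸ Subgroup.center G) = 49 := by
    rw [Nat.card_congr φ.toEquiv]
    simp [Nat.card_eq_fintype_card]
  have hQ : ∀ q : G ⧸ Subgroup.center G, q ≠ 1 → orderOf q = 7 := by
    intro q hq
    have hne : φ q ≠ 1 := fun h1 => hq (by
      apply φ.injective; simpa using h1)
    rw [← orderOf_injective φ.toMonoidHom φ.injective q]
    exact ord7 hne
  have hset : Cent G = insert ⊤ ((fun q => Subgroup.comap π (Subgroup.zpowers q)) ''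
      {q : G ⧸ Subgroup.center G | q ≠ 1}) := by
    ext H
    constructor
    · rintro ⟨x, rfl⟩
      by_cases hx : x ∈ Subgroup.center G
      · exact Set.mem_insert_iff.mpr (Or.inl
          (Subgroup.centralizer_eq_top_iff_subset.mpr (by simpa using hx)))
      · refine Set.mem_insert_iff.mpr (Or.inr ⟨π x, ?_, (cent_noncentral x hx hQ hcardQ).symm⟩)
        simpa [π, QuotientGroup.eq_one_iff] using hx
    · intro hH
      rcases Set.mem_insert_iff.mp hH with rfl | ⟨q, hq, rfl⟩
      · exact ⟨1, Subgroup.centralizer_eq_top_iff_subset.mpr (by simp [Subgroup.one_mem])⟩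
      · obtain ⟨x, rfl⟩ := hπ q
        have hx : x ∉ Subgroup.center G := by
          simpa [π, QuotientGroup.eq_one_iff] using hq
        exact ⟨x, cent_noncentral x hx hQ hcardQ⟩
  rw [hset]
  have hfin : ((fun q => Subgroup.comap π (Subgroup.zpowers q)) ''
      {q : G ⧸ Subgroup.center G | q ≠ 1}).Finite := (Set.toFinite _).image _
  have hnotmem : (⊤ : Subgroup G) ∉ (fun q => Subgroup.comap π (Subgroup.zpowers q)) ''
      {q : G ⧸ Subgroup.center G | q ≠ 1} := by
    rintro ⟨q, hq, htop⟩
    have htop' : Subgroup.comap π (Subgroup.zpowers q) = ⊤ := htop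
    have hmc := Subgroup.map_comap_eq_self_of_surjective hπ (Subgroup.zpowers q)
    rw [htop', Subgroup.map_top_of_surjective _ hπ] at hmc
    have hcard : Nat.card (Subgroup.zpowers q) = 49 := by
      rw [← hmc]
      rw [Nat.card_congr Subgroup.topEquiv.toEquiv]
      exact hcardQ
    rw [Nat.card_zpowers, hQ q hq] at hcard
    norm_num at hcard
  rw [Set.ncard_insert_of_notMem hnotmem hfin]
  have h1 : (fun q => Subgroup.comap π (Subgroup.zpowers q)) ''
        {q : G ⧸ Subgroup.center G | q ≠ 1}
      = (Subgroup.comap π) '' ((fun q => Subgroup.zpowers q) ''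
        {q : G ⧸ Subgroup.center G | q ≠ 1}) := by
    rw [Set.image_image]
  rw [h1, Set.ncard_image_of_injective _ (Subgroup.comap_injective hπ)]
  have h2 : (Subgroup.map φ.toMonoidHom) '' ((fun q => Subgroup.zpowers q) ''
        {q : G ⧸ Subgroup.center G | q ≠ 1})
      = (fun m : Multiplicative (ZMod 7 × ZMod 7) => Subgroup.zpowers m) '' {m | m ≠ 1} := by
    ext H
    constructor
    · rintro ⟨_, ⟨q, hq, rfl⟩, rfl⟩
      refine ⟨φ q, fun h1 => hq (by apply φ.injective; simpa using h1), ?_⟩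
      exact (MonoidHom.map_zpowers φ.toMonoidHom q).symm
    · rintro ⟨m, hm, rfl⟩
      refine ⟨Subgroup.zpowers (φ.symm m), ⟨φ.symm m, fun h1 => hm (by
        simpa using congrArg φ h1), rfl⟩, ?_⟩
      rw [MonoidHom.map_zpowers]
      simp
  have h3 := Set.ncard_image_of_injective ((fun q => Subgroup.zpowers q) ''
    {q : G ⧸ Subgroup.center G | q ≠ 1}) (Subgroup.map_injective (f := φ.toMonoidHom) φ.injective)
  rw [h2] at h3
  rw [← h3, count8]
end

section
/- If G is a finite group and G/Z(G) is isomorphic to the dihedral group D14 of order 14 (equivalently C7 ⋊ C2), then |Cent(G)| = 9. -/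
open Subgroup

/-- If two functions have the same "kernel" equivalence, their ranges have equal cardinality. -/
lemma ncard_range_eq_of_ker {α β γ : Type*} (u : α → β) (v : α → γ)
    (h : ∀ a b, u a = u b ↔ v a = v b) :
    Nat.card (Set.range u) = Nat.card (Set.range v) := by
  have hk : Setoid.ker u = Setoid.ker v := Setoid.ext fun a b => h a b
  calc Nat.card (Set.range u) = Nat.card (Quotient (Setoid.ker u)) :=
        Nat.card_congr (Setoid.quotientKerEquivRange u).symm
    _ = Nat.card (Quotient (Setoid.ker v)) := by rw [hk]
    _ = Nat.card (Set.range v) := Nat.card_congr (Setoid.quotientKerEquivRange v)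

/-- Computable version of the centralizer in `DihedralGroup 7`. -/
def fcen (g : DihedralGroup 7) : Finset (DihedralGroup 7) :=
  Finset.univ.filter (fun h => h * g = g * h)

lemma mem_fcen (g h : DihedralGroup 7) :
    h ∈ Subgroup.centralizer {g} ↔ h ∈ fcen g := by
  simp [fcen, Subgroup.mem_centralizer_singleton_iff]

lemma cent_eq_iff_fcen (a b : DihedralGroup 7) :
    Subgroup.centralizer {a} = Subgroup.centralizer {b} ↔ fcen a = fcen b := by
  constructor
  · intro h
    ext x
    rw [← mem_fcen, ← mem_fcen, h]
  · intro h
    ext x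
    rw [mem_fcen, mem_fcen, h]

lemma card_cent_d7 (g : DihedralGroup 7) :
    Nat.card (Subgroup.centralizer ({g} : Set (DihedralGroup 7))) = (fcen g).card := by
  have e : {x : DihedralGroup 7 // x ∈ Subgroup.centralizer ({g} : Set (DihedralGroup 7))}
      ≃ {x : DihedralGroup 7 // x ∈ fcen g} :=
    Equiv.subtypeEquivRight (fun x => mem_fcen g x)
  rw [← Fintype.card_coe (fcen g), ← Nat.card_eq_fintype_card]
  exact Nat.card_congr e

lemma cyc_cent_d7 (g : DihedralGroup 7) (hg : g ≠ 1) :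
    IsCyclic (Subgroup.centralizer ({g} : Set (DihedralGroup 7))) := by
  have hcard : (fcen g).card = 2 ∨ (fcen g).card = 7 := by
    revert hg; revert g; decide
  rcases hcard with hc | hc
  · haveI : Fact (Nat.Prime 2) := ⟨by norm_num⟩
    exact isCyclic_of_prime_card (p := 2) (by rw [card_cent_d7, hc])
  · haveI : Fact (Nat.Prime 7) := ⟨by norm_num⟩
    exact isCyclic_of_prime_card (p := 7) (by rw [card_cent_d7, hc])

lemma cent_comap {G : Type*} [Group G] (π : G →* DihedralGroup 7)
    (hsurj : Function.Surjective π) (hker : π.ker = Subgroup.center G) (x : G) :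
    Subgroup.centralizer {x} = Subgroup.comap π (Subgroup.centralizer {π x}) := by
  by_cases hx : x ∈ Subgroup.center G
  · have h1 : π x = 1 := by rw [← MonoidHom.mem_ker, hker]; exact hx
    have h2 : Subgroup.centralizer ({x} : Set G) = ⊤ := by
      ext y
      simp only [Subgroup.mem_centralizer_singleton_iff, Subgroup.mem_top, iff_true]
      exact (Subgroup.mem_center_iff.mp hx) y
    have h3 : Subgroup.centralizer ({π x} : Set (DihedralGroup 7)) = ⊤ := by
      ext y
      simp only [h1, Subgroup.mem_centralizer_singleton_iff, Subgroup.mem_top, iff_true,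
        one_mul, mul_one]
    rw [h2, h3, Subgroup.comap_top]
  · have hg1 : π x ≠ 1 := by
      intro h1
      exact hx (hker ▸ MonoidHom.mem_ker.mpr h1)
    haveI : IsCyclic (Subgroup.centralizer ({π x} : Set (DihedralGroup 7))) :=
      cyc_cent_d7 _ hg1
    apply le_antisymm
    · intro y hy
      rw [Subgroup.mem_centralizer_singleton_iff] at hy
      rw [Subgroup.mem_comap, Subgroup.mem_centralizer_singleton_iff, ← map_mul, ← map_mul, hy]
    · set K := Subgroup.comap π (Subgroup.centralizer ({π x} : Set (DihedralGroup 7))) with hK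
      intro y hy
      have hxK : x ∈ K := by
        rw [hK, Subgroup.mem_comap, Subgroup.mem_centralizer_singleton_iff]
      let ψ : K →* Subgroup.centralizer ({π x} : Set (DihedralGroup 7)) :=
        (π.comp K.subtype).codRestrict _ (fun k => k.2)
      have hkc : ψ.ker ≤ Subgroup.center K := by
        intro k hk
        have hk1 : π (k : G) = 1 := by
          have := MonoidHom.mem_ker.mp hk
          exact congrArg Subtype.val this
        have hkcent : (k : G) ∈ Subgroup.center G := by
          rw [← hker]; exact hk1
        rw [Subgroup.mem_center_iff]
        intro g
        exact Subtype.ext ((Subgroup.mem_center_iff.mp hkcent) (g : G))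
      have hcomm := commutative_of_cyclic_center_quotient ψ hkc ⟨y, hy⟩ ⟨x, hxK⟩
      have : y * x = x * y := congrArg Subtype.val hcomm
      rw [Subgroup.mem_centralizer_singleton_iff]
      exact this

lemma ncard_cent_d7 : (Cent (DihedralGroup 7)).ncard = 9 := by
  have h1 : Nat.card (Cent (DihedralGroup 7)) = Nat.card (Set.range fcen) :=
    ncard_range_eq_of_ker _ fcen cent_eq_iff_fcen
  have h2 : Set.range fcen = ↑(Finset.univ.image fcen) := by
    ext s; simp
  rw [← Nat.card_coe_set_eq, h1, h2, Nat.card_coe_set_eq, Set.ncard_coe_finset]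
  decide

theorem stmt4 (G : Type*) [Group G] [Finite G]
    (h : Nonempty ((G ⧸ Subgroup.center G) ≃* DihedralGroup 7)) :
    (Cent G).ncard = 9 := by
  obtain ⟨φ⟩ := h
  let π : G →* DihedralGroup 7 := φ.toMonoidHom.comp (QuotientGroup.mk' (Subgroup.center G))
  have hsurj : Function.Surjective π :=
    φ.surjective.comp (QuotientGroup.mk'_surjective _)
  have hker : π.ker = Subgroup.center G := by
    ext x
    rw [MonoidHom.mem_ker]
    show φ (QuotientGroup.mk' (Subgroup.center G) x) = 1 ↔ _
    rw [MulEquiv.map_eq_one_iff]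
    show (↑x : G ⧸ Subgroup.center G) = 1 ↔ _
    exact QuotientGroup.eq_one_iff x
  have himg : Cent G = Subgroup.comap π '' Cent (DihedralGroup 7) := by
    ext C
    constructor
    · rintro ⟨x, rfl⟩
      exact ⟨Subgroup.centralizer {π x}, ⟨π x, rfl⟩, (cent_comap π hsurj hker x).symm⟩
    · rintro ⟨_, ⟨g, rfl⟩, rfl⟩
      obtain ⟨x, rfl⟩ := hsurj g
      exact ⟨x, cent_comap π hsurj hker x⟩
  rw [himg, Set.ncard_image_of_injective _ (Subgroup.comap_injective hsurj)]
  exact ncard_cent_d7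
end

section
/- If G is a finite group and G/Z(G) is isomorphic to the nonabelian group C7 ⋊ C3 of order 21, then |Cent(G)| = 9. -/
def addAutToMulAut (A : Type*) [AddGroup A] : Multiplicative (AddAut A) →* MulAut (Multiplicative A) where
  toFun f := AddEquiv.toMultiplicative f.toAdd
  map_one' := rfl
  map_mul' _ _ := rfl

/-- The action of `Aut(C7) ≅ C6` on `C7`. -/
def phi42 : (ZMod 7)ˣ →* MulAut (Multiplicative (ZMod 7)) :=
  (addAutToMulAut (ZMod 7)).comp (DistribMulAction.toAddAut (ZMod 7)ˣ (ZMod 7))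

/-- The Frobenius group `C7 ⋊ C6` of order 42, with `C6 ≅ Aut(C7)` acting faithfully. -/
abbrev F42 := Multiplicative (ZMod 7) ⋊[phi42] (ZMod 7)ˣ

def u2 : (ZMod 7)ˣ := ⟨2, 4, by decide, by decide⟩

def phi21 : ↥(Subgroup.zpowers u2) →* MulAut (Multiplicative (ZMod 7)) :=
  phi42.comp (Subgroup.zpowers u2).subtype

/-- The nonabelian group `C7 ⋊ C3` of order 21. -/
abbrev G21 := Multiplicative (ZMod 7) ⋊[phi21] ↥(Subgroup.zpowers u2)

/- Auxiliary material -/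

def uu : ↥(Subgroup.zpowers u2) := ⟨u2, Subgroup.mem_zpowers u2⟩

instance : Fintype ↥(Subgroup.zpowers u2) := by
  apply Fintype.ofSurjective (fun k : Fin 3 => uu ^ (k : ℕ))
  rintro ⟨v, k, rfl⟩
  have h3 : u2 ^ (3 : ℤ) = 1 := by decide
  refine ⟨⟨(k % 3).toNat, by omega⟩, Subtype.ext ?_⟩
  show ((uu : ↥(Subgroup.zpowers u2)) ^ ((k % 3).toNat) : ↥(Subgroup.zpowers u2)).val = u2 ^ k
  rw [SubmonoidClass.coe_pow]
  show u2 ^ ((k % 3).toNat) = u2 ^ k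
  rw [← zpow_natCast, Int.toNat_of_nonneg (Int.emod_nonneg k (by decide))]
  conv_rhs => rw [← Int.mul_ediv_add_emod k 3]
  rw [zpow_add, zpow_mul, h3, one_zpow, one_mul]

instance : Fintype G21 :=
  Fintype.ofEquiv (Multiplicative (ZMod 7) × ↥(Subgroup.zpowers u2))
    ⟨fun p => ⟨p.1, p.2⟩, fun a => (a.left, a.right), fun _ => rfl, fun _ => rfl⟩

lemma hpow21 : ∀ q g : G21, q ≠ 1 → g * q = q * g → ∃ k : Fin 7, q ^ (k : ℕ) = g := by decide +kernel

def r9 : Fin 9 → G21 :=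
  ![⟨1, 1⟩, ⟨Multiplicative.ofAdd 1, 1⟩,
    ⟨Multiplicative.ofAdd 0, uu⟩, ⟨Multiplicative.ofAdd 1, uu⟩, ⟨Multiplicative.ofAdd 2, uu⟩,
    ⟨Multiplicative.ofAdd 3, uu⟩, ⟨Multiplicative.ofAdd 4, uu⟩, ⟨Multiplicative.ofAdd 5, uu⟩,
    ⟨Multiplicative.ofAdd 6, uu⟩]

lemma hcover9 : ∀ q : G21, ∃ i : Fin 9, ∀ g : G21,
    (g * q = q * g ↔ g * r9 i = r9 i * g) := by decide +kernel

lemma hinj9 : ∀ i j : Fin 9,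
    (∀ g : G21, g * r9 i = r9 i * g ↔ g * r9 j = r9 j * g) → i = j := by decide +kernel

lemma cent_G21_eq : Cent G21 = Set.range (fun i => Subgroup.centralizer {r9 i}) := by
  apply Set.Subset.antisymm
  · rintro S ⟨q, rfl⟩
    obtain ⟨i, hi⟩ := hcover9 q
    refine ⟨i, ?_⟩
    ext g
    rw [Subgroup.mem_centralizer_singleton_iff, Subgroup.mem_centralizer_singleton_iff]
    exact (hi g).symm
  · rintro S ⟨i, rfl⟩
    exact ⟨r9 i, rfl⟩

lemma inj9 : Function.Injective (fun i => Subgroup.centralizer ({r9 i} : Set G21)) := by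
  intro i j hij
  apply hinj9 i j
  intro g
  rw [← Subgroup.mem_centralizer_singleton_iff, ← Subgroup.mem_centralizer_singleton_iff]
  exact SetLike.ext_iff.mp hij g

lemma cent_G21_card : (Cent G21).ncard = 9 := by
  rw [cent_G21_eq, ← Set.image_univ, Set.ncard_image_of_injective _ inj9, Set.ncard_univ]
  simp

theorem stmt5 (G : Type*) [Group G] [Finite G]
    (h : Nonempty ((G ⧸ Subgroup.center G) ≃* G21)) :
    (Cent G).ncard = 9 := by
  obtain ⟨e⟩ := h
  let π : G →* G21 := e.toMonoidHom.comp (QuotientGroup.mk' (Subgroup.center G))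
  have hsurj : Function.Surjective π :=
    e.surjective.comp (QuotientGroup.mk'_surjective _)
  have hker : ∀ x : G, π x = 1 ↔ x ∈ Subgroup.center G := by
    intro x
    show e ((QuotientGroup.mk' (Subgroup.center G)) x) = 1 ↔ _
    rw [MulEquiv.map_eq_one_iff, QuotientGroup.mk'_apply, QuotientGroup.eq_one_iff]
  have key : ∀ x : G,
      Subgroup.centralizer {x} = Subgroup.comap π (Subgroup.centralizer {π x}) := by
    intro x
    by_cases hx : π x = 1
    · have hxZ : x ∈ Subgroup.center G := (hker x).mp hx
      have h1 : Subgroup.centralizer ({x} : Set G) = ⊤ := by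
        rw [eq_top_iff]; intro g _
        rw [Subgroup.mem_centralizer_singleton_iff]
        exact Subgroup.mem_center_iff.mp hxZ g
      have h2 : Subgroup.centralizer ({(1 : G21)} : Set G21) = ⊤ := by
        rw [eq_top_iff]; intro g _
        rw [Subgroup.mem_centralizer_singleton_iff]
        rw [mul_one, one_mul]
      rw [hx, h1, h2, Subgroup.comap_top]
    · ext g
      rw [Subgroup.mem_comap, Subgroup.mem_centralizer_singleton_iff,
        Subgroup.mem_centralizer_singleton_iff]
      constructor
      · intro hg
        rw [← map_mul, hg, map_mul]
      · intro hg
        obtain ⟨k, hk⟩ := hpow21 (π x) (π g) hx hg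
        have hz : g * (x ^ (k : ℕ))⁻¹ ∈ Subgroup.center G := by
          apply (hker _).mp
          rw [map_mul, map_inv, map_pow, hk, mul_inv_cancel]
        have c1 : Commute x (g * (x ^ (k : ℕ))⁻¹) :=
          (Subgroup.mem_center_iff.mp hz x)
        have c2 : Commute x (x ^ (k : ℕ)) := (Commute.refl x).pow_right _
        have hgz : g = (g * (x ^ (k : ℕ))⁻¹) * x ^ (k : ℕ) := by
          rw [inv_mul_cancel_right]
        rw [hgz]
        exact ((c1.mul_right c2).eq).symm
  have himg : Cent G = Subgroup.comap π '' Cent G21 := by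
    ext S
    constructor
    · rintro ⟨x, rfl⟩
      exact ⟨Subgroup.centralizer {π x}, ⟨π x, rfl⟩, (key x).symm⟩
    · rintro ⟨T, ⟨q, rfl⟩, rfl⟩
      obtain ⟨x, rfl⟩ := hsurj q
      exact ⟨x, key x⟩
  rw [himg, Set.ncard_image_of_injective _ (Subgroup.comap_injective hsurj)]
  exact cent_G21_card
end

section
/- If G is a finite group and the index of Z(G) in G is a product of at most three primes (i.e., |G : Z(G)| = p, pq, or pqr for primes p, q, r), then G is a CA-group: the centralizer C_G(x) is abelian for every x ∈ G \ Z(G). -/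
open ArithmeticFunction in
lemma aux_omega_pos (t : ℕ) (ht0 : t ≠ 0) (ht1 : t ≠ 1) : 1 ≤ cardFactors t := by
  rw [cardFactors_apply]
  have : t.primeFactorsList ≠ [] := by
    rw [Ne, Nat.primeFactorsList_eq_nil]; tauto
  exact List.length_pos_iff.mpr this

open ArithmeticFunction in
lemma aux_arith (p q r m t a : ℕ) (hp : p.Prime) (hq : q.Prime) (hr : r.Prime)
    (ht0 : t ≠ 0) (ht1 : t ≠ 1) (ha0 : a ≠ 0) (ha1 : a ≠ 1)
    (h : m * t * a = p ∨ m * t * a = p * q ∨ m * t * a = p * q * r) :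
    m = 1 ∨ m.Prime := by
  have hm0 : m ≠ 0 := by
    rintro rfl
    simp only [zero_mul] at h
    rcases h with h | h | h <;>
      first
        | exact hp.ne_zero h.symm
        | exact Nat.mul_ne_zero hp.ne_zero hq.ne_zero h.symm
        | exact Nat.mul_ne_zero (Nat.mul_ne_zero hp.ne_zero hq.ne_zero) hr.ne_zero h.symm
  have hΩ : cardFactors (m * t * a) = cardFactors m + cardFactors t + cardFactors a := by
    rw [cardFactors_mul (Nat.mul_ne_zero hm0 ht0) ha0, cardFactors_mul hm0 ht0]
  have hRHS : cardFactors (m * t * a) ≤ 3 := by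
    rcases h with h | h | h <;> rw [h]
    · rw [cardFactors_apply_prime hp]; omega
    · rw [cardFactors_mul hp.ne_zero hq.ne_zero, cardFactors_apply_prime hp,
        cardFactors_apply_prime hq]; omega
    · rw [cardFactors_mul (Nat.mul_ne_zero hp.ne_zero hq.ne_zero) hr.ne_zero,
        cardFactors_mul hp.ne_zero hq.ne_zero, cardFactors_apply_prime hp,
        cardFactors_apply_prime hq, cardFactors_apply_prime hr]
  have hT := aux_omega_pos t ht0 ht1
  have hA := aux_omega_pos a ha0 ha1
  have hm1 : cardFactors m ≤ 1 := by omega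
  rcases Nat.lt_or_ge (cardFactors m) 1 with hc | hc
  · left
    have h0 : cardFactors m = 0 := by omega
    by_contra hne
    exact absurd h0 (by have := aux_omega_pos m hm0 hne; omega)
  · right
    exact cardFactors_eq_one_iff_prime.mp (le_antisymm hm1 hc)

theorem stmt12 (G : Type*) [Group G] [Finite G]
    (h : ∃ p q r : ℕ, p.Prime ∧ q.Prime ∧ r.Prime ∧
      ((Subgroup.center G).index = p ∨ (Subgroup.center G).index = p * q ∨
        (Subgroup.center G).index = p * q * r)) :
    ∀ x : G, x ∉ Subgroup.center G →
      ∀ a ∈ Subgroup.centralizer {x}, ∀ b ∈ Subgroup.centralizer {x}, a * b = b * a := by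
  obtain ⟨p, q, r, hp, hq, hr, hidx⟩ := h
  intro x hx a ha b hb
  set C := Subgroup.centralizer ({x} : Set G) with hC
  have hxC : x ∈ C := Subgroup.mem_centralizer_iff.mpr (by simp)
  have hZle : Subgroup.center G ≤ C := Subgroup.center_le_centralizer _
  -- x is in the center of C
  have hxZC : (⟨x, hxC⟩ : C) ∈ Subgroup.center C := by
    rw [Subgroup.mem_center_iff]
    intro g
    ext
    exact (Subgroup.mem_centralizer_iff.mp g.2 x rfl).symm
  -- image of center G in C is contained in center C
  have hle : (Subgroup.center G).subgroupOf C ≤ Subgroup.center C := by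
    intro z hz
    rw [Subgroup.mem_subgroupOf] at hz
    rw [Subgroup.mem_center_iff]
    intro g
    ext
    exact Subgroup.mem_center_iff.mp hz g
  -- index decompositions
  have h1 : (Subgroup.center G).relIndex C * C.index = (Subgroup.center G).index :=
    Subgroup.relIndex_mul_index hZle
  have h2 : ((Subgroup.center G).subgroupOf C).relIndex (Subgroup.center C) *
      (Subgroup.center C).index = (Subgroup.center G).relIndex C :=
    Subgroup.relIndex_mul_index hle
  set m := (Subgroup.center C).index with hm
  set t := ((Subgroup.center G).subgroupOf C).relIndex (Subgroup.center C) with ht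
  set aa := C.index with haa
  have hprod : m * t * aa = (Subgroup.center G).index := by
    rw [← h1, ← h2]; ring
  -- t ≠ 0, 1 and aa ≠ 0, 1
  have ht0 : t ≠ 0 := by
    rw [ht, Subgroup.relIndex]; exact Subgroup.index_ne_zero_of_finite
  have ha0 : aa ≠ 0 := Subgroup.index_ne_zero_of_finite
  have ht1 : t ≠ 1 := by
    intro h1
    have := Subgroup.relIndex_eq_one.mp h1 hxZC
    rw [Subgroup.mem_subgroupOf] at this
    exact hx this
  have ha1 : aa ≠ 1 := by
    intro h1
    have hCtop : C = ⊤ := Subgroup.index_eq_one.mp h1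
    apply hx
    rw [Subgroup.mem_center_iff]
    intro g
    have hg : g ∈ C := hCtop ▸ Subgroup.mem_top g
    exact (Subgroup.mem_centralizer_iff.mp hg x rfl).symm
  have key : m = 1 ∨ m.Prime :=
    aux_arith p q r m t aa hp hq hr ht0 ht1 ha0 ha1 (by rw [hprod]; exact hidx)
  -- conclude commutativity
  have habC : (⟨a, ha⟩ : C) * ⟨b, hb⟩ = ⟨b, hb⟩ * ⟨a, ha⟩ := by
    rcases key with h1 | hpr
    · have : Subgroup.center C = ⊤ := Subgroup.index_eq_one.mp h1
      have haZ : (⟨a, ha⟩ : C) ∈ Subgroup.center C := this ▸ Subgroup.mem_top _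
      exact Subgroup.mem_center_iff.mp haZ _ |>.symm
    · have : Fact m.Prime := ⟨hpr⟩
      have hcard : Nat.card (C ⧸ Subgroup.center C) = m := (Subgroup.index_eq_card _).symm
      have hcyc : IsCyclic (C ⧸ Subgroup.center C) := isCyclic_of_prime_card hcard
      exact commutative_of_cyclic_center_quotient (QuotientGroup.mk' (Subgroup.center C))
        (by rw [QuotientGroup.ker_mk']) _ _
  exact congrArg Subtype.val habC
end

section
/- If G is a finite group with G/Z(G) isomorphic to the dihedral group D18 of order 18, then |Cent(G)| = 11. -/
open Subgroup DihedralGroup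

lemma r_inv' {n : ℕ} (i : ZMod n) : (r i : DihedralGroup n)⁻¹ = r (-i) := rfl

lemma r_one_zpow' {n : ℕ} (k : ℤ) : (r 1 : DihedralGroup n) ^ k = r (k : ZMod n) := by
  cases k with
  | ofNat m => simp [zpow_natCast, r_one_pow]
  | negSucc m =>
      rw [zpow_negSucc, r_one_pow, r_inv']
      congr 1
      push_cast
      ring

lemma mem_zpowers_r_one {n : ℕ} [NeZero n] (x : DihedralGroup n) :
    x ∈ zpowers (r 1) ↔ ∃ i, x = r i := by
  constructor
  · rintro ⟨k, rfl⟩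
    exact ⟨(k : ZMod n), (r_one_zpow' k)⟩
  · rintro ⟨i, rfl⟩
    refine ⟨(i.val : ℤ), ?_⟩
    show (r 1 : DihedralGroup n) ^ (i.val : ℤ) = r i
    rw [r_one_zpow']
    congr 1
    push_cast
    exact ZMod.natCast_rightInverse i

lemma mem_zpowers_sr {n : ℕ} (i : ZMod n) (x : DihedralGroup n) :
    x ∈ zpowers (sr i) ↔ x = 1 ∨ x = sr i := by
  constructor
  · rintro ⟨k, rfl⟩
    have hsq : (sr i : DihedralGroup n) ^ (2 : ℤ) = 1 := by
      rw [show (2:ℤ) = 1 + 1 by norm_num, zpow_add, zpow_one, sr_mul_self]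
    rcases Int.even_or_odd k with ⟨m, hm⟩ | ⟨m, hm⟩
    · left
      show (sr i : DihedralGroup n) ^ k = 1
      rw [hm, show m + m = 2 * m by ring, zpow_mul, hsq, one_zpow]
    · right
      show (sr i : DihedralGroup n) ^ k = sr i
      rw [hm, zpow_add, zpow_mul, hsq, one_zpow, one_mul, zpow_one]
  · rintro (rfl | rfl)
    · exact one_mem _
    · exact mem_zpowers _

theorem stmt14 (G : Type*) [Group G] [Finite G]
    (h : Nonempty ((G ⧸ Subgroup.center G) ≃* DihedralGroup 9)) :
    (Cent G).ncard = 11 := by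
  obtain ⟨φ⟩ := h
  set π : G →* DihedralGroup 9 := φ.toMonoidHom.comp (QuotientGroup.mk' (center G)) with hπ
  have hsurj : Function.Surjective π :=
    φ.surjective.comp (QuotientGroup.mk'_surjective _)
  have hker : ∀ x : G, π x = 1 ↔ x ∈ center G := by
    intro x
    rw [hπ]
    simp [QuotientGroup.eq_one_iff]
  set A : Subgroup G := comap π (zpowers (r 1)) with hAdef
  set B : ZMod 9 → Subgroup G := fun i => comap π (zpowers (sr i)) with hBdef
  -- A is commutative
  obtain ⟨g, hg⟩ := hsurj (r 1)
  have d1 : ∀ i : ZMod 9, -i = i → i = 0 := by decide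
  have d2 : ∀ j : ZMod 9, j = -j → j = 0 := by decide
  have d3 : ∀ i j : ZMod 9, j - i = i - j → j = i := by decide
  have d4 : ∀ i : ZMod 9, i + 1 ≠ i - 1 := by decide
  have hA : ∀ a b : G, a ∈ A → b ∈ A → a * b = b * a := by
    intro a b ha hb
    obtain ⟨m, hm'⟩ := ha
    obtain ⟨k, hk'⟩ := hb
    have hm : (r 1 : DihedralGroup 9) ^ m = π a := hm'
    have hk : (r 1 : DihedralGroup 9) ^ k = π b := hk'
    have hza : a * (g ^ m)⁻¹ ∈ center G := by
      rw [← hker, map_mul, map_inv, map_zpow, hg, hm, mul_inv_cancel]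
    have hzb : b * (g ^ k)⁻¹ ∈ center G := by
      rw [← hker, map_mul, map_inv, map_zpow, hg, hk, mul_inv_cancel]
    have ha' : a = (a * (g ^ m)⁻¹) * g ^ m := by group
    have hb' : b = (b * (g ^ k)⁻¹) * g ^ k := by group
    set z := a * (g ^ m)⁻¹
    set w := b * (g ^ k)⁻¹
    rw [ha', hb']
    have hgg : g ^ m * g ^ k = g ^ k * g ^ m := by
      rw [← zpow_add, ← zpow_add, add_comm]
    calc z * g ^ m * (w * g ^ k) = z * (g ^ m * w) * g ^ k := by group
      _ = z * (w * g ^ m) * g ^ k := by rw [(mem_center_iff.mp hzb _)]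
      _ = z * w * (g ^ m * g ^ k) := by group
      _ = w * z * (g ^ k * g ^ m) := by rw [hgg, (mem_center_iff.mp hzb z)]
      _ = w * (z * g ^ k) * g ^ m := by group
      _ = w * (g ^ k * z) * g ^ m := by rw [(mem_center_iff.mp hza _)]
      _ = w * g ^ k * (z * g ^ m) := by group
  -- classification of centralizers
  have key : ∀ x : G, centralizer {x} = ⊤ ∨ centralizer {x} = A ∨ ∃ i, centralizer {x} = B i := by
    intro x
    cases hx : π x with
    | r i =>
      by_cases hi : i = 0
      · left
        have hxc : x ∈ center G := by
          rw [← hker, hx, hi, ← one_def]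
        ext y
        simp only [mem_top, iff_true, mem_centralizer_iff, Set.mem_singleton_iff,
          forall_eq]
        exact (mem_center_iff.mp hxc y).symm
      · right; left
        have hxA : x ∈ A := by
          rw [hAdef, mem_comap, hx, mem_zpowers_r_one]
          exact ⟨i, rfl⟩
        ext y
        rw [mem_centralizer_iff]
        simp only [Set.mem_singleton_iff, forall_eq]
        constructor
        · intro hc
          have hcomm : π x * π y = π y * π x := by rw [← map_mul, hc, map_mul]
          rw [hAdef, mem_comap, mem_zpowers_r_one]
          cases hy : π y with
          | r j => exact ⟨j, rfl⟩
          | sr j =>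
            exfalso
            rw [hx, hy, r_mul_sr, sr_mul_r] at hcomm
            have hji : j - i = j + i := by injection hcomm
            have : -i = i := by
              have := hji
              rw [sub_eq_add_neg] at this
              exact add_left_cancel this
            exact hi (d1 i this)
        · intro hy
          exact hA x y hxA hy
    | sr i =>
      right; right
      refine ⟨i, ?_⟩
      ext y
      rw [mem_centralizer_iff]
      simp only [Set.mem_singleton_iff, forall_eq]
      constructor
      · intro hc
        have hcomm : π x * π y = π y * π x := by rw [← map_mul, hc, map_mul]
        rw [hBdef, mem_comap, mem_zpowers_sr]
        cases hy : π y with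
        | r j =>
          rw [hx, hy, sr_mul_r, r_mul_sr] at hcomm
          have hji : i + j = i - j := by injection hcomm
          have hj : j = 0 := by
            rw [sub_eq_add_neg] at hji
            exact d2 j (add_left_cancel hji)
          left; rw [hj, ← one_def]
        | sr j =>
          rw [hx, hy, sr_mul_sr, sr_mul_sr] at hcomm
          have hji : j - i = i - j := by injection hcomm
          have hj : j = i := d3 i j hji
          right; rw [hj]
      · intro hy
        rw [hBdef, mem_comap, mem_zpowers_sr] at hy
        rcases hy with hy | hy
        · have : y ∈ center G := (hker y).mp hy
          exact (mem_center_iff.mp this x)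
        · have hz : y * x⁻¹ ∈ center G := by
            rw [← hker, map_mul, map_inv, hx, hy, mul_inv_cancel]
          have hy' : y = (y * x⁻¹) * x := by group
          rw [hy']
          calc x * (y * x⁻¹ * x) = (y * x⁻¹) * x * x := by
                rw [← mul_assoc, mem_center_iff.mp hz x]
            _ = y * x⁻¹ * x * x := rfl
  -- witnesses
  have wit_top : centralizer ({(1 : G)} : Set G) = ⊤ := by
    ext y; simp [mem_centralizer_iff]
  obtain ⟨s, hs⟩ := hsurj (sr 0)
  have wit_A : centralizer {g} = A := by
    rcases key g with htop | hA' | ⟨i, hBi⟩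
    · exfalso
      have : s ∈ centralizer ({g} : Set G) := htop ▸ mem_top s
      rw [mem_centralizer_iff] at this
      have hc := this g (Set.mem_singleton g)
      have hcomm : π g * π s = π s * π g := by rw [← map_mul, hc, map_mul]
      rw [hg, hs, r_mul_sr, sr_mul_r] at hcomm
      have hji : (0 : ZMod 9) - 1 = 0 + 1 := by injection hcomm
      exact absurd hji (by decide)
    · exact hA'
    · exfalso
      have hgB : g ∈ centralizer ({g} : Set G) := by
        rw [mem_centralizer_iff]; simp
      rw [hBi, hBdef, mem_comap, hg, mem_zpowers_sr] at hgB
      rcases hgB with h1 | h1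
      · exact absurd h1 (by decide)
      · cases h1
  have wit_B : ∀ i, centralizer {(hsurj (sr i)).choose} = B i := by
    intro i
    have hx : π (hsurj (sr i)).choose = sr i := (hsurj (sr i)).choose_spec
    set x := (hsurj (sr i)).choose
    rcases key x with htop | hA' | ⟨j, hBj⟩
    · exfalso
      have : g ∈ centralizer ({x} : Set G) := htop ▸ mem_top g
      rw [mem_centralizer_iff] at this
      have hc := this x (Set.mem_singleton x)
      have hcomm : π x * π g = π g * π x := by rw [← map_mul, hc, map_mul]
      rw [hg, hx, sr_mul_r, r_mul_sr] at hcomm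
      have hji : i + 1 = i - 1 := by injection hcomm
      exact d4 i hji
    · exfalso
      have hxA : x ∈ centralizer ({x} : Set G) := by
        rw [mem_centralizer_iff]; simp
      rw [hA', hAdef, mem_comap, hx, mem_zpowers_r_one] at hxA
      obtain ⟨k, hk⟩ := hxA
      exact absurd hk (by simp)
    · have hij : j = i := by
        have hxB : x ∈ centralizer ({x} : Set G) := by
          rw [mem_centralizer_iff]; simp
        rw [hBj, hBdef, mem_comap, hx, mem_zpowers_sr] at hxB
        rcases hxB with h1 | h1
        · exfalso; rw [one_def] at h1; cases h1
        · injection h1 with h1; exact h1.symm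
      rw [hBj, hij]
  -- the set equality
  have hset : Cent G = insert ⊤ (insert A (Set.range B)) := by
    ext H
    constructor
    · rintro ⟨x, rfl⟩
      show centralizer {x} ∈ insert ⊤ (insert A (Set.range B))
      rcases key x with h1 | h1 | ⟨i, h1⟩
      · rw [h1]; exact Set.mem_insert _ _
      · rw [h1]; exact Set.mem_insert_of_mem _ (Set.mem_insert _ _)
      · rw [h1]
        exact Set.mem_insert_of_mem _ (Set.mem_insert_of_mem _ ⟨i, rfl⟩)
    · rintro (rfl | rfl | ⟨i, rfl⟩)
      · exact ⟨1, wit_top⟩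
      · exact ⟨g, wit_A⟩
      · exact ⟨_, wit_B i⟩
  rw [hset]
  -- distinctness
  have hinj := comap_injective (f := π) hsurj
  have hAtop : A ≠ ⊤ := by
    intro hEq
    rw [hAdef, ← comap_top π] at hEq
    have := hinj hEq
    have : sr 0 ∈ zpowers (r (1 : ZMod 9)) := this ▸ mem_top _
    rw [mem_zpowers_r_one] at this
    obtain ⟨i, hi⟩ := this
    exact absurd hi (by simp)
  have hBtop : ∀ i, B i ≠ ⊤ := by
    intro i hEq
    rw [hBdef] at hEq
    rw [← comap_top π] at hEq
    have := hinj hEq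
    have : r 1 ∈ zpowers (sr (i : ZMod 9)) := this ▸ mem_top _
    rw [mem_zpowers_sr] at this
    rcases this with h1 | h1
    · exact absurd h1 (by decide)
    · exact absurd h1 (by simp)
  have hBA : ∀ i, B i ≠ A := by
    intro i hEq
    rw [hBdef, hAdef] at hEq
    have := hinj hEq
    have : r 1 ∈ zpowers (sr (i : ZMod 9)) := by
      rw [this]; rw [mem_zpowers_r_one]; exact ⟨1, rfl⟩
    rw [mem_zpowers_sr] at this
    rcases this with h1 | h1
    · exact absurd h1 (by decide)
    · exact absurd h1 (by simp)
  have hBinj : Function.Injective B := by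
    intro i j hEq
    rw [hBdef] at hEq
    have := hinj hEq
    have hmem : sr i ∈ zpowers (sr (j : ZMod 9)) := by
      rw [← this]; exact mem_zpowers _
    rw [mem_zpowers_sr] at hmem
    rcases hmem with h1 | h1
    · rw [one_def] at h1
      cases h1
    · injection h1
  -- cardinality
  have hrange : (Set.range B).ncard = 9 := by
    rw [← Set.image_univ, Set.ncard_image_of_injective _ hBinj, Set.ncard_univ]
    simp [Nat.card_eq_fintype_card]
  have hAnot : A ∉ Set.range B := by
    rintro ⟨i, hi⟩
    exact hBA i hi
  have htopnot : ⊤ ∉ insert A (Set.range B) := by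
    rintro (hEq | ⟨i, hi⟩)
    · exact hAtop hEq.symm
    · exact hBtop i hi
  rw [Set.ncard_insert_of_notMem htopnot, Set.ncard_insert_of_notMem hAnot, hrange]
end

section
/- If a finite group G is the union of three proper subgroups H1, H2, H3, then the intersection H1 ∩ H2 ∩ H3 has index 4 in G. -/
/-- A group is not the union of two proper subgroups: there is an element
outside both. -/
private lemma two_union_aux {G : Type*} [Group G] {A B : Subgroup G}
    (hA : A ≠ ⊤) (hB : B ≠ ⊤) : ∃ g : G, g ∉ A ∧ g ∉ B := by
  rw [Ne, Subgroup.eq_top_iff'] at hA hB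
  push_neg at hA hB
  obtain ⟨x, hx⟩ := hA
  obtain ⟨y, hy⟩ := hB
  by_cases hxB : x ∈ B
  · by_cases hyA : y ∈ A
    · refine ⟨x * y, fun h => hx ?_, fun h => hy ?_⟩
      · exact (mul_mem_cancel_right hyA).1 h
      · exact (mul_mem_cancel_left hxB).1 h
    · exact ⟨y, hyA, hy⟩
  · exact ⟨x, hx, hxB⟩

private lemma prod_mem_aux {G : Type*} [Group G] {A B C : Subgroup G}
    (hcov : ∀ g : G, g ∈ A ∨ g ∈ B ∨ g ∈ C)
    {x y : G} (hxA : x ∈ A) (hxB : x ∉ B) (hyB : y ∈ B) (hyA : y ∉ A) :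
    x * y ∈ C := by
  rcases hcov (x * y) with h | h | h
  · exact absurd ((mul_mem_cancel_left hxA).1 h) hyA
  · exact absurd ((mul_mem_cancel_right hyB).1 h) hxB
  · exact h

private lemma inter_le_aux {G : Type*} [Group G] {A B C : Subgroup G}
    (hcov : ∀ g : G, g ∈ A ∨ g ∈ B ∨ g ∈ C)
    {a : G} (haA : a ∈ A) (haB : a ∉ B) (haC : a ∉ C)
    {x : G} (hxB : x ∈ B) (hxC : x ∈ C) : x ∈ A := by
  rcases hcov (a * x) with h | h | h
  · exact (mul_mem_cancel_left haA).1 h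
  · exact absurd ((mul_mem_cancel_right hxB).1 h) haB
  · exact absurd ((mul_mem_cancel_right hxC).1 h) haC

/-- if `x, y` lie only in `A`, `b` only in `B`, `c` only in `C`,
then `x⁻¹ * y` lies in all three subgroups. -/
private lemma inv_mul_mem_aux {G : Type*} [Group G] {A B C : Subgroup G}
    (hcov : ∀ g : G, g ∈ A ∨ g ∈ B ∨ g ∈ C)
    {x y b c : G}
    (hxA : x ∈ A) (hxB : x ∉ B) (hxC : x ∉ C)
    (hyA : y ∈ A) (hyB : y ∉ B) (hyC : y ∉ C)
    (hbB : b ∈ B) (hbA : b ∉ A) (hbC : b ∉ C)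
    (hcC : c ∈ C) (hcA : c ∉ A) (hcB : c ∉ B) :
    x⁻¹ * y ∈ A ∧ x⁻¹ * y ∈ B ∧ x⁻¹ * y ∈ C := by
  have hcov' : ∀ g : G, g ∈ B ∨ g ∈ A ∨ g ∈ C := fun g => by
    rcases hcov g with h | h | h <;> tauto
  have hcov'' : ∀ g : G, g ∈ C ∨ g ∈ A ∨ g ∈ B := fun g => by
    rcases hcov g with h | h | h <;> tauto
  have hbx : b * x ∈ C := prod_mem_aux hcov' hbB hbA hxA hxB
  have hby : b * y ∈ C := prod_mem_aux hcov' hbB hbA hyA hyB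
  have hcx : c * x ∈ B := prod_mem_aux hcov'' hcC hcA hxA hxC
  have hcy : c * y ∈ B := prod_mem_aux hcov'' hcC hcA hyA hyC
  have e1 : x⁻¹ * y = (b * x)⁻¹ * (b * y) := by group
  have e2 : x⁻¹ * y = (c * x)⁻¹ * (c * y) := by group
  refine ⟨mul_mem (inv_mem hxA) hyA, ?_, ?_⟩
  · rw [e2]; exact mul_mem (inv_mem hcx) hcy
  · rw [e1]; exact mul_mem (inv_mem hbx) hby

theorem stmt15 (G : Type*) [Group G] [Finite G] (H1 H2 H3 : Subgroup G)
    (h1 : H1 ≠ ⊤) (h2 : H2 ≠ ⊤) (h3 : H3 ≠ ⊤)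
    (hcover : ∀ g : G, g ∈ H1 ∨ g ∈ H2 ∨ g ∈ H3) :
    (H1 ⊓ H2 ⊓ H3).index = 4 := by
  set K : Subgroup G := H1 ⊓ H2 ⊓ H3 with hK
  have memK : ∀ g : G, g ∈ K ↔ g ∈ H1 ∧ g ∈ H2 ∧ g ∈ H3 := by
    intro g
    simp [hK, Subgroup.mem_inf, and_assoc]
  -- elements only in one subgroup
  obtain ⟨a, ha2, ha3⟩ := two_union_aux h2 h3
  have ha1 : a ∈ H1 := (hcover a).resolve_right (fun h => h.elim ha2 ha3)
  obtain ⟨b, hb1, hb3⟩ := two_union_aux h1 h3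
  have hb2 : b ∈ H2 := by rcases hcover b with h | h | h <;> tauto
  obtain ⟨c, hc1, hc2⟩ := two_union_aux h1 h2
  have hc3 : c ∈ H3 := by rcases hcover c with h | h | h <;> tauto
  have hcov213 : ∀ g : G, g ∈ H2 ∨ g ∈ H1 ∨ g ∈ H3 := fun g => by
    rcases hcover g with h | h | h <;> tauto
  have hcov312 : ∀ g : G, g ∈ H3 ∨ g ∈ H1 ∨ g ∈ H2 := fun g => by
    rcases hcover g with h | h | h <;> tauto
  have hKle1 : K ≤ H1 := fun g hg => ((memK g).1 hg).1
  have hKle2 : K ≤ H2 := fun g hg => ((memK g).1 hg).2.1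
  -- pairwise distinctness of the four cosets
  have keyne : ∀ x : G, x ∉ K →
      ¬ ((QuotientGroup.mk (1 : G) : G ⧸ K) = QuotientGroup.mk x) := by
    intro x hx h
    rw [QuotientGroup.eq] at h
    exact hx (by simpa using h)
  have ne0a : (QuotientGroup.mk (1 : G) : G ⧸ K) ≠ QuotientGroup.mk a :=
    keyne a (fun h => ha2 ((memK a).1 h).2.1)
  have ne0b : (QuotientGroup.mk (1 : G) : G ⧸ K) ≠ QuotientGroup.mk b :=
    keyne b (fun h => hb1 ((memK b).1 h).1)
  have ne0c : (QuotientGroup.mk (1 : G) : G ⧸ K) ≠ QuotientGroup.mk c :=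
    keyne c (fun h => hc1 ((memK c).1 h).1)
  have neab : (QuotientGroup.mk a : G ⧸ K) ≠ QuotientGroup.mk b := by
    intro h
    rw [QuotientGroup.eq] at h
    exact hb1 (by simpa using mul_mem ha1 (hKle1 h))
  have neac : (QuotientGroup.mk a : G ⧸ K) ≠ QuotientGroup.mk c := by
    intro h
    rw [QuotientGroup.eq] at h
    exact hc1 (by simpa using mul_mem ha1 (hKle1 h))
  have nebc : (QuotientGroup.mk b : G ⧸ K) ≠ QuotientGroup.mk c := by
    intro h
    rw [QuotientGroup.eq] at h
    exact hc2 (by simpa using mul_mem hb2 (hKle2 h))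
  -- every coset is one of the four
  have hsurj : (Set.univ : Set (G ⧸ K)) =
      {QuotientGroup.mk (1 : G), QuotientGroup.mk a,
       QuotientGroup.mk b, QuotientGroup.mk c} := by
    apply Set.eq_of_subset_of_subset
    · rintro q -
      obtain ⟨g, rfl⟩ := QuotientGroup.mk_surjective q
      by_cases hg1 : g ∈ H1
      · by_cases hg2 : g ∈ H2
        · -- g ∈ H1 ∩ H2 ⊆ H3, so g ∈ K
          have hg3 : g ∈ H3 := inter_le_aux hcov312 hc3 hc1 hc2 hg1 hg2
          have hgK : g ∈ K := (memK g).2 ⟨hg1, hg2, hg3⟩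
          have : (QuotientGroup.mk (1 : G) : G ⧸ K) = QuotientGroup.mk g :=
            (QuotientGroup.eq).2 (by simpa using hgK)
          rw [← this]
          exact Set.mem_insert _ _
        · by_cases hg3 : g ∈ H3
          · exact absurd (inter_le_aux hcov213 hb2 hb1 hb3 hg1 hg3) hg2
          · -- g only in H1 : same coset as a
            have h := inv_mul_mem_aux hcover ha1 ha2 ha3 hg1 hg2 hg3
              hb2 hb1 hb3 hc3 hc1 hc2
            have : (QuotientGroup.mk a : G ⧸ K) = QuotientGroup.mk g :=
              (QuotientGroup.eq).2 ((memK _).2 ⟨h.1, h.2.1, h.2.2⟩)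
            rw [← this]
            exact Set.mem_insert_of_mem _ (Set.mem_insert _ _)
      · by_cases hg2 : g ∈ H2
        · by_cases hg3 : g ∈ H3
          · exact absurd (inter_le_aux hcover ha1 ha2 ha3 hg2 hg3) hg1
          · -- g only in H2 : same coset as b
            have h := inv_mul_mem_aux hcov213 hb2 hb1 hb3 hg2 hg1 hg3
              ha1 ha2 ha3 hc3 hc2 hc1
            have : (QuotientGroup.mk b : G ⧸ K) = QuotientGroup.mk g :=
              (QuotientGroup.eq).2 ((memK _).2 ⟨h.2.1, h.1, h.2.2⟩)
            rw [← this]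
            exact Set.mem_insert_of_mem _ (Set.mem_insert_of_mem _
              (Set.mem_insert _ _))
        · -- g only in H3 : same coset as c
          have hg3 : g ∈ H3 := by rcases hcover g with h | h | h <;> tauto
          have h := inv_mul_mem_aux hcov312 hc3 hc1 hc2 hg3 hg1 hg2
            ha1 ha3 ha2 hb2 hb3 hb1
          have : (QuotientGroup.mk c : G ⧸ K) = QuotientGroup.mk g :=
            (QuotientGroup.eq).2 ((memK _).2 ⟨h.2.1, h.2.2, h.1⟩)
          rw [← this]
          exact Set.mem_insert_of_mem _ (Set.mem_insert_of_mem _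
            (Set.mem_insert_of_mem _ rfl))
    · exact fun q _ => Set.mem_univ q
  -- count the cosets
  show Nat.card (G ⧸ K) = 4
  rw [← Set.ncard_univ, hsurj]
  rw [Set.ncard_insert_of_notMem (by simp [ne0a, ne0b, ne0c])]
  rw [Set.ncard_insert_of_notMem (by simp [neab, neac])]
  rw [Set.ncard_insert_of_notMem (by simp [nebc])]
  rw [Set.ncard_singleton]
end

section
/- If G is a finite group with |Cent(G)| = 9, then the maximal size r of a set of pairwise non-commuting elements of G satisfies 5 ≤ r ≤ 8. -/
namespace Stmt16

variable {G : Type*} [Group G]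

/-- no 5 pairwise non-commuting elements -/
def NC5 (G : Type*) [Group G] : Prop :=
  ∀ ⦃x1 x2 x3 x4 x5 : G⦄, ¬Commute x1 x2 → ¬Commute x1 x3 → ¬Commute x1 x4 → ¬Commute x1 x5 →
    ¬Commute x2 x3 → ¬Commute x2 x4 → ¬Commute x2 x5 →
    ¬Commute x3 x4 → ¬Commute x3 x5 → ¬Commute x4 x5 → False

/-- no 4 pairwise non-commuting elements -/
def NC4 (G : Type*) [Group G] : Prop :=
  ∀ ⦃x1 x2 x3 x4 : G⦄, ¬Commute x1 x2 → ¬Commute x1 x3 → ¬Commute x1 x4 →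
    ¬Commute x2 x3 → ¬Commute x2 x4 → ¬Commute x3 x4 → False

/-- no 3 pairwise non-commuting elements -/
def NC3 (G : Type*) [Group G] : Prop :=
  ∀ ⦃x1 x2 x3 : G⦄, ¬Commute x1 x2 → ¬Commute x1 x3 → ¬Commute x2 x3 → False

lemma nsymm {a b : G} (h : ¬Commute a b) : ¬Commute b a := fun hc => h hc.symm

lemma ne_of_ncomm {a b : G} (h : ¬Commute a b) : a ≠ b := by
  rintro rfl; exact h (Commute.refl a)

/-- if `x` commutes with `b` then `b` doesn't commute with `x*c` whenever `b` doesn't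
commute with `c`. -/
lemma A1 {x b c : G} (hxb : Commute x b) (h : ¬Commute b c) : ¬Commute b (x * c) := by
  intro hc
  apply h
  have h1 : x * (b * c) = x * (c * b) := by
    calc x * (b * c) = (x * b) * c := by rw [mul_assoc]
    _ = (b * x) * c := by rw [hxb.eq]
    _ = b * (x * c) := by rw [mul_assoc]
    _ = (x * c) * b := hc.eq
    _ = x * (c * b) := by rw [mul_assoc]
  exact mul_left_cancel h1

lemma A2 {x b : G} (h : ¬Commute x b) : ¬Commute b (x * b) := by
  intro hc
  apply h
  have h1 : (b * x) * b = (x * b) * b := by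
    rw [mul_assoc]; exact hc.eq
  exact (mul_right_cancel h1).symm

/-- if `v` commutes with `b` and `x` doesn't, then `b` doesn't commute with `x*v`. -/
lemma A5 {x v b : G} (hvb : Commute v b) (h : ¬Commute x b) : ¬Commute b (x * v) := by
  intro hc
  apply h
  have h1 : (b * x) * v = (x * b) * v := by
    calc (b * x) * v = b * (x * v) := by rw [mul_assoc]
    _ = (x * v) * b := hc.eq
    _ = x * (v * b) := by rw [mul_assoc]
    _ = x * (b * v) := by rw [hvb.eq]
    _ = (x * b) * v := by rw [mul_assoc]
  exact (mul_right_cancel h1).symm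

lemma B1 {x b c : G} (hxb : Commute x b) (hxc : Commute x c) (h : ¬Commute b c) :
    ¬Commute (b * x) (c * x) := by
  intro hc
  apply h
  have h1 : (b * c) * (x * x) = (c * b) * (x * x) := by
    calc (b * c) * (x * x) = b * ((c * x) * x) := by simp only [mul_assoc]
    _ = b * ((x * c) * x) := by rw [hxc.symm.eq]
    _ = (b * x) * (c * x) := by simp only [mul_assoc]
    _ = (c * x) * (b * x) := hc.eq
    _ = c * ((x * b) * x) := by simp only [mul_assoc]
    _ = c * ((b * x) * x) := by rw [hxb.symm.eq]
    _ = (c * b) * (x * x) := by simp only [mul_assoc]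
  exact mul_right_cancel h1

lemma B2 {x b c : G} (hxc : Commute x c) (h : ¬Commute b c) : ¬Commute (b * x) c := by
  intro hc
  apply h
  have h1 : (b * c) * x = (c * b) * x := by
    calc (b * c) * x = b * (c * x) := by rw [mul_assoc]
    _ = b * (x * c) := by rw [hxc.eq]
    _ = (b * x) * c := by rw [mul_assoc]
    _ = c * (b * x) := hc.eq
    _ = (c * b) * x := by rw [mul_assoc]
  exact mul_right_cancel h1

lemma B3 {x b c : G} (hxb : Commute x b) (h : ¬Commute b c) : ¬Commute b (c * x) := by
  intro hc
  apply h
  have h1 : (b * c) * x = (c * b) * x := by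
    calc (b * c) * x = b * (c * x) := by rw [mul_assoc]
    _ = (c * x) * b := hc.eq
    _ = c * (x * b) := by rw [mul_assoc]
    _ = c * (b * x) := by rw [hxb.eq]
    _ = (c * b) * x := by rw [mul_assoc]
  exact mul_right_cancel h1

lemma B4 {x w b : G} (hwb : Commute w b) (hw : ¬Commute w x) : ¬Commute w (b * x) := by
  intro hc
  apply hw
  have h1 : b * (w * x) = b * (x * w) := by
    calc b * (w * x) = (b * w) * x := by rw [mul_assoc]
    _ = (w * b) * x := by rw [hwb.symm.eq]
    _ = w * (b * x) := by rw [mul_assoc]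
    _ = (b * x) * w := hc.eq
    _ = b * (x * w) := by rw [mul_assoc]
  exact mul_left_cancel h1

end Stmt16
namespace Stmt16

variable {G : Type*} [Group G]

/-- an element commuting with all four members of a maximal non-commuting 4-set is central -/
lemma L1 (nc5 : NC5 G) (b1 b2 b3 b4 : G)
    (n12 : ¬Commute b1 b2) (n13 : ¬Commute b1 b3) (n14 : ¬Commute b1 b4)
    (n23 : ¬Commute b2 b3) (n24 : ¬Commute b2 b4) (n34 : ¬Commute b3 b4)
    (x : G) (h1 : Commute x b1) (h2 : Commute x b2) (h3 : Commute x b3) (h4 : Commute x b4) :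
    ∀ g, Commute x g := by
  intro g
  by_contra hw0
  classical
  set c : G → G := fun b => if Commute g b then b * x else b with hcdef
  have hA : ∀ b, ¬Commute g (c b) := by
    intro b hcomm
    by_cases hwb : Commute g b
    · rw [hcdef] at hcomm; simp only [if_pos hwb] at hcomm
      exact B4 hwb (fun hh => hw0 hh.symm) hcomm
    · rw [hcdef] at hcomm; simp only [if_neg hwb] at hcomm
      exact hwb hcomm
  have hB : ∀ b b', Commute x b → Commute x b' → ¬Commute b b' → ¬Commute (c b) (c b') := by
    intro b b' hxb hxb' h hcomm
    rw [hcdef] at hcomm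
    by_cases hwb : Commute g b <;> by_cases hwb' : Commute g b' <;>
      simp only [if_pos, if_neg, hwb, hwb', if_true, if_false] at hcomm
    · exact B1 hxb hxb' h hcomm
    · exact B2 hxb' h hcomm
    · exact B3 hxb h hcomm
    · exact h hcomm
  exact nc5 (hB _ _ h1 h2 n12) (hB _ _ h1 h3 n13) (hB _ _ h1 h4 n14) (nsymm (hA b1))
    (hB _ _ h2 h3 n23) (hB _ _ h2 h4 n24) (nsymm (hA b2))
    (hB _ _ h3 h4 n34) (nsymm (hA b3)) (nsymm (hA b4))

/-- no element commutes with exactly three members -/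
lemma L2 (nc5 : NC5 G) (b1 b2 b3 b4 : G)
    (n12 : ¬Commute b1 b2) (n13 : ¬Commute b1 b3) (n14 : ¬Commute b1 b4)
    (n23 : ¬Commute b2 b3) (n24 : ¬Commute b2 b4) (n34 : ¬Commute b3 b4)
    (x : G) (h1 : Commute x b1) (h2 : Commute x b2) (h3 : Commute x b3)
    (h4 : ¬Commute x b4) : False :=
  nc5 n12 n13 n14 (A1 h1 n14) n23 n24 (A1 h2 n24) n34 (A1 h3 n34) (A2 h4)

/-- two elements not commuting with the last three members commute with each other -/
lemma L3 (nc5 : NC5 G) (b2 b3 b4 : G)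
    (n23 : ¬Commute b2 b3) (n24 : ¬Commute b2 b4) (n34 : ¬Commute b3 b4)
    (x y : G) (hx2 : ¬Commute x b2) (hx3 : ¬Commute x b3) (hx4 : ¬Commute x b4)
    (hy2 : ¬Commute y b2) (hy3 : ¬Commute y b3) (hy4 : ¬Commute y b4) : Commute x y := by
  by_contra h
  exact nc5 h hx2 hx3 hx4 hy2 hy3 hy4 n23 n24 n34

/-- key relation for "pair" elements -/
lemma L4 (nc5 : NC5 G) (b1 b2 b3 b4 : G)
    (n12 : ¬Commute b1 b2) (n13 : ¬Commute b1 b3) (n14 : ¬Commute b1 b4)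
    (n23 : ¬Commute b2 b3) (n24 : ¬Commute b2 b4) (n34 : ¬Commute b3 b4)
    (x : G) (h1 : Commute x b1) (h2 : Commute x b2) (h3 : ¬Commute x b3)
    (h4 : ¬Commute x b4) : Commute b4 (x * b3) := by
  by_contra h
  exact nc5 n12 n13 n14 (A1 h1 n13) n23 n24 (A1 h2 n23) n34 (A2 h3) h

/-- conjugation relation for pair elements -/
lemma L6 (nc5 : NC5 G) (b1 b2 b3 b4 : G)
    (n12 : ¬Commute b1 b2) (n13 : ¬Commute b1 b3) (n14 : ¬Commute b1 b4)
    (n23 : ¬Commute b2 b3) (n24 : ¬Commute b2 b4) (n34 : ¬Commute b3 b4)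
    (x : G) (h1 : Commute x b1) (h2 : Commute x b2) (h3 : ¬Commute x b3)
    (h4 : ¬Commute x b4) : b4 * x = x * b3 * b4 * b3⁻¹ := by
  have hc := (L4 nc5 b1 b2 b3 b4 n12 n13 n14 n23 n24 n34 x h1 h2 h3 h4).eq
  have h1' : b4 * x * b3 = x * b3 * b4 := by rw [mul_assoc]; exact hc
  calc b4 * x = b4 * x * b3 * b3⁻¹ := (mul_inv_cancel_right _ _).symm
  _ = x * b3 * b4 * b3⁻¹ := by rw [h1']

/-- complementary pair patterns cannot coexist -/
lemma L7 (nc5 : NC5 G) (b1 b2 b3 b4 : G)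
    (n12 : ¬Commute b1 b2) (n13 : ¬Commute b1 b3) (n14 : ¬Commute b1 b4)
    (n23 : ¬Commute b2 b3) (n24 : ¬Commute b2 b4) (n34 : ¬Commute b3 b4)
    (x v : G) (hx1 : Commute x b1) (hx2 : Commute x b2) (hx3 : ¬Commute x b3)
    (hx4 : ¬Commute x b4)
    (hv3 : Commute v b3) (hv4 : Commute v b4) (hv1 : ¬Commute v b1) (hv2 : ¬Commute v b2) :
    False :=
  nc5 n12 n13 n14 (A1 hx1 (nsymm hv1)) n23 n24 (A1 hx2 (nsymm hv2)) n34
    (A5 hv3 hx3) (A5 hv4 hx4)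

end Stmt16
namespace Stmt16

variable {G : Type*} [Group G]

/-- auxiliary case of the mixed-class lemma: `u*v` commutes with `b3` but not `b4` -/
lemma L8aux (nc5 : NC5 G) (b1 b2 b3 b4 : G)
    (n12 : ¬Commute b1 b2) (n13 : ¬Commute b1 b3) (n14 : ¬Commute b1 b4)
    (n23 : ¬Commute b2 b3) (n24 : ¬Commute b2 b4) (n34 : ¬Commute b3 b4)
    (u v : G)
    (hu1 : Commute u b1) (hu2 : ¬Commute u b2) (hu3 : ¬Commute u b3) (hu4 : ¬Commute u b4)
    (hv2 : Commute v b2) (hv1 : ¬Commute v b1) (hv3 : ¬Commute v b3) (hv4 : ¬Commute v b4)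
    (huv : Commute u v)
    (huv1 : ¬Commute (u*v) b1) (huv2 : ¬Commute (u*v) b2)
    (c3 : Commute (u*v) b3) (c4 : ¬Commute (u*v) b4) : False := by
  have huvu : Commute (u*v) u := Commute.mul_left (Commute.refl u) huv.symm
  have huvv : Commute (u*v) v := Commute.mul_left huv (Commute.refl v)
  have hclub : b4 * u = u * b2 * b4 * b2⁻¹ :=
    L6 nc5 b1 (u*v) b2 b4 (nsymm huv1) n12 n14 huv2 c4 n24 u hu1 huvu.symm hu2 hu4
  have hheart : b4 * v = v * b1 * b4 * b1⁻¹ :=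
    L6 nc5 b2 (u*v) b1 b4 (nsymm huv2) (nsymm n12) n24 huv1 c4 n14 v hv2 huvv.symm hv1 hv4
  have hspade : b4 * (u*v) = (u*v) * b2 * b4 * b2⁻¹ :=
    L6 nc5 u b3 b2 b4 hu3 hu2 hu4 (nsymm n23) n34 n24 (u*v) huvu c3 huv2 c4
  have e1 : b2 * (b4 * (b2⁻¹ * v)) = v * (b2 * (b4 * b2⁻¹)) := by
    have t1 : b4 * (u * v) = u * (b2 * (b4 * (b2⁻¹ * v))) := by
      calc b4 * (u*v) = (b4 * u) * v := (mul_assoc _ _ _).symm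
      _ = (u * b2 * b4 * b2⁻¹) * v := by rw [hclub]
      _ = u * (b2 * (b4 * (b2⁻¹ * v))) := by simp only [mul_assoc]
    have t2 : b4 * (u * v) = u * (v * (b2 * (b4 * b2⁻¹))) := by
      calc b4 * (u*v) = (u*v) * b2 * b4 * b2⁻¹ := hspade
      _ = u * (v * (b2 * (b4 * b2⁻¹))) := by simp only [mul_assoc]
    exact mul_left_cancel (t1.symm.trans t2)
  have e2 : b2⁻¹ * v = v * b2⁻¹ := (hv2.inv_right).symm.eq
  rw [e2] at e1
  have e3 : b4 * v = v * (b1 * (b4 * b1⁻¹)) := by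
    calc b4 * v = v * b1 * b4 * b1⁻¹ := hheart
    _ = v * (b1 * (b4 * b1⁻¹)) := by simp only [mul_assoc]
  have e4 : b2 * (v * (b1 * (b4 * (b1⁻¹ * b2⁻¹)))) = v * (b2 * (b4 * b2⁻¹)) := by
    calc b2 * (v * (b1 * (b4 * (b1⁻¹ * b2⁻¹))))
        = b2 * ((b4 * v) * b2⁻¹) := by rw [e3]; simp only [mul_assoc]
    _ = b2 * (b4 * (v * b2⁻¹)) := by simp only [mul_assoc]
    _ = v * (b2 * (b4 * b2⁻¹)) := e1
  have e5 : b2 * v = v * b2 := hv2.symm.eq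
  have e6 : b2 * (b1 * (b4 * (b1⁻¹ * b2⁻¹))) = b2 * (b4 * b2⁻¹) := by
    apply mul_left_cancel (a := v)
    calc v * (b2 * (b1 * (b4 * (b1⁻¹ * b2⁻¹))))
        = (v * b2) * (b1 * (b4 * (b1⁻¹ * b2⁻¹))) := (mul_assoc _ _ _).symm
    _ = (b2 * v) * (b1 * (b4 * (b1⁻¹ * b2⁻¹))) := by rw [e5]
    _ = b2 * (v * (b1 * (b4 * (b1⁻¹ * b2⁻¹)))) := mul_assoc _ _ _
    _ = v * (b2 * (b4 * b2⁻¹)) := e4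
  have e7 : b1 * (b4 * (b1⁻¹ * b2⁻¹)) = b4 * b2⁻¹ := mul_left_cancel e6
  apply n14
  have e8 : b1 * b4 * b1⁻¹ * b2⁻¹ = b4 * b2⁻¹ := by
    calc b1 * b4 * b1⁻¹ * b2⁻¹ = b1 * (b4 * (b1⁻¹ * b2⁻¹)) := by simp only [mul_assoc]
    _ = b4 * b2⁻¹ := e7
  have e9 : b1 * b4 * b1⁻¹ = b4 := mul_right_cancel e8
  calc b1 * b4 = (b1 * b4 * b1⁻¹) * b1 := (inv_mul_cancel_right _ _).symm
  _ = b4 * b1 := by rw [e9]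

/-- two commuting non-central elements lie in the same singleton class -/
lemma L8 (nc5 : NC5 G) (b1 b2 b3 b4 : G)
    (n12 : ¬Commute b1 b2) (n13 : ¬Commute b1 b3) (n14 : ¬Commute b1 b4)
    (n23 : ¬Commute b2 b3) (n24 : ¬Commute b2 b4) (n34 : ¬Commute b3 b4)
    (u v : G)
    (hu1 : Commute u b1) (hu2 : ¬Commute u b2) (hu3 : ¬Commute u b3) (hu4 : ¬Commute u b4)
    (hv2 : Commute v b2) (hv1 : ¬Commute v b1) (hv3 : ¬Commute v b3) (hv4 : ¬Commute v b4)
    (huv : Commute u v) : False := by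
  have huv1 : ¬Commute (u*v) b1 := nsymm (A1 hu1 (nsymm hv1))
  have huv2 : ¬Commute (u*v) b2 := nsymm (A5 hv2 hu2)
  by_cases c3 : Commute (u*v) b3 <;> by_cases c4 : Commute (u*v) b4
  · -- u*v is a pair element of pattern {3,4}
    have hb1uv : b1 * (u*v) = (u*v) * b2 * b1 * b2⁻¹ :=
      L6 nc5 b3 b4 b2 b1 n34 (nsymm n23) (nsymm n13) (nsymm n24) (nsymm n14) (nsymm n12)
        (u*v) c3 c4 huv2 huv1
    -- hence b1 * v = v * b2 * b1 * b2⁻¹ and b1 commutes with v*b2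
    have e1 : b1 * v = v * b2 * b1 * b2⁻¹ := by
      have t1 : b1 * (u * v) = u * (b1 * v) := by
        calc b1 * (u*v) = (b1 * u) * v := (mul_assoc _ _ _).symm
        _ = (u * b1) * v := by rw [hu1.symm.eq]
        _ = u * (b1 * v) := mul_assoc _ _ _
      have t2 : b1 * (u * v) = u * (v * b2 * b1 * b2⁻¹) := by
        calc b1 * (u*v) = (u*v) * b2 * b1 * b2⁻¹ := hb1uv
        _ = u * (v * b2 * b1 * b2⁻¹) := by simp only [mul_assoc]
      have := mul_left_cancel (t1.symm.trans t2)
      simpa [mul_assoc] using this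
    have hw1 : Commute b1 (v * b2) := by
      show b1 * (v * b2) = (v * b2) * b1
      calc b1 * (v * b2) = (b1 * v) * b2 := (mul_assoc _ _ _).symm
      _ = (v * b2 * b1 * b2⁻¹) * b2 := by rw [e1]
      _ = v * b2 * b1 := inv_mul_cancel_right _ _
    have hw2 : Commute (v * b2) b2 := Commute.mul_left hv2 (Commute.refl b2)
    have hwu : ¬Commute u (v * b2) := A1 huv.symm hu2
    by_cases w3 : Commute (v*b2) b3 <;> by_cases w4 : Commute (v*b2) b4
    · exact hwu ((L1 nc5 b1 b2 b3 b4 n12 n13 n14 n23 n24 n34 (v*b2) hw1.symm hw2 w3 w4) u).symm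
    · exact L2 nc5 b1 b2 b3 b4 n12 n13 n14 n23 n24 n34 (v*b2) hw1.symm hw2 w3 w4
    · exact L2 nc5 b1 b2 b4 b3 n12 n14 n13 n24 n23 (nsymm n34) (v*b2) hw1.symm hw2 w4 w3
    · exact L7 nc5 b1 b2 b3 b4 n12 n13 n14 n23 n24 n34 (v*b2) (u*v) hw1.symm hw2 w3 w4
        c3 c4 huv1 huv2
  · exact L8aux nc5 b1 b2 b3 b4 n12 n13 n14 n23 n24 n34 u v hu1 hu2 hu3 hu4
      hv2 hv1 hv3 hv4 huv huv1 huv2 c3 c4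
  · exact L8aux nc5 b1 b2 b4 b3 n12 n14 n13 n24 n23 (nsymm n34) u v hu1 hu2 hu4 hu3
      hv2 hv1 hv4 hv3 huv huv1 huv2 c4 c3
  · exact nc5 n12 n13 n14 (nsymm huv1) n23 n24 (nsymm huv2) n34 (nsymm c3) (nsymm c4)

end Stmt16
namespace Stmt16

variable {G : Type*} [Group G]

/-- there are no "pair" elements: nothing commutes with exactly two members -/
lemma L9 (nc5 : NC5 G) (b1 b2 b3 b4 : G)
    (n12 : ¬Commute b1 b2) (n13 : ¬Commute b1 b3) (n14 : ¬Commute b1 b4)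
    (n23 : ¬Commute b2 b3) (n24 : ¬Commute b2 b4) (n34 : ¬Commute b3 b4)
    (x : G) (h1 : Commute x b1) (h2 : Commute x b2) (h3 : ¬Commute x b3)
    (h4 : ¬Commute x b4) : False := by
  set w : G := x * b1 * b2 with hwdef
  have hxw : Commute x w := ((Commute.refl x).mul_right h1).mul_right h2
  have hw1 : ¬Commute w b1 := by
    intro hc
    apply n12
    have t1 : w * b1 = (x * b1) * (b2 * b1) := by
      rw [hwdef]; simp only [mul_assoc]
    have t2 : b1 * w = (x * b1) * (b1 * b2) := by
      rw [hwdef]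
      calc b1 * (x * b1 * b2) = ((b1 * x) * b1) * b2 := by simp only [mul_assoc]
      _ = ((x * b1) * b1) * b2 := by rw [h1.symm.eq]
      _ = (x * b1) * (b1 * b2) := by simp only [mul_assoc]
    have := t1.symm.trans (hc.eq.trans t2)
    exact (mul_left_cancel this).symm
  have hw2 : ¬Commute w b2 := by
    intro hc
    apply n12
    have t1 : w * b2 = ((x * b1) * b2) * b2 := by rw [hwdef]
    have t2 : b2 * w = ((x * b2) * b1) * b2 := by
      rw [hwdef]
      calc b2 * (x * b1 * b2) = ((b2 * x) * b1) * b2 := by simp only [mul_assoc]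
      _ = ((x * b2) * b1) * b2 := by rw [h2.symm.eq]
    have t3 : (x * b1) * b2 = (x * b2) * b1 := mul_right_cancel (t1.symm.trans (hc.eq.trans t2))
    have t4 : x * (b1 * b2) = x * (b2 * b1) := by
      calc x * (b1 * b2) = (x * b1) * b2 := (mul_assoc _ _ _).symm
      _ = (x * b2) * b1 := t3
      _ = x * (b2 * b1) := mul_assoc _ _ _
    exact mul_left_cancel t4
  by_cases w3 : Commute w b3 <;> by_cases w4 : Commute w b4
  · exact L7 nc5 b1 b2 b3 b4 n12 n13 n14 n23 n24 n34 x w h1 h2 h3 h4 w3 w4 hw1 hw2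
  · -- w in class b3, x*b3 in class b4, and they commute : contradiction by L8
    have hy04 : Commute (x*b3) b4 :=
      (L4 nc5 b1 b2 b3 b4 n12 n13 n14 n23 n24 n34 x h1 h2 h3 h4).symm
    have hy01 : ¬Commute (x*b3) b1 := nsymm (A1 h1 n13)
    have hy02 : ¬Commute (x*b3) b2 := nsymm (A1 h2 n23)
    have hy03 : ¬Commute (x*b3) b3 := nsymm (A2 h3)
    have hwy0 : Commute w (x*b3) := (hxw.symm).mul_right w3
    exact L8 nc5 b3 b4 b1 b2 n34 (nsymm n13) (nsymm n23) (nsymm n14) (nsymm n24) n12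
      w (x*b3) w3 w4 hw1 hw2 hy04 hy03 hy01 hy02 hwy0
  · -- symmetric : w in class b4, x*b4 in class b3
    have hy03 : Commute (x*b4) b3 :=
      (L4 nc5 b1 b2 b4 b3 n12 n14 n13 n24 n23 (nsymm n34) x h1 h2 h4 h3).symm
    have hy01 : ¬Commute (x*b4) b1 := nsymm (A1 h1 n14)
    have hy02 : ¬Commute (x*b4) b2 := nsymm (A1 h2 n24)
    have hy04 : ¬Commute (x*b4) b4 := nsymm (A2 h4)
    have hwy0 : Commute w (x*b4) := (hxw.symm).mul_right w4
    exact L8 nc5 b4 b3 b1 b2 (nsymm n34) (nsymm n14) (nsymm n24) (nsymm n13) (nsymm n23) n12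
      w (x*b4) w4 w3 hw1 hw2 hy03 hy04 hy01 hy02 hwy0
  · exact nc5 n12 n13 n14 (nsymm hw1) n23 n24 (nsymm hw2) n34 (nsymm w3) (nsymm w4)

end Stmt16
namespace Stmt16

variable {G : Type*} [Group G]

/-- every non-central element commutes with exactly one of the four -/
lemma classify (nc5 : NC5 G) (b1 b2 b3 b4 : G)
    (n12 : ¬Commute b1 b2) (n13 : ¬Commute b1 b3) (n14 : ¬Commute b1 b4)
    (n23 : ¬Commute b2 b3) (n24 : ¬Commute b2 b4) (n34 : ¬Commute b3 b4)
    (x : G) (hx : ¬∀ g, Commute x g) :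
    (Commute x b1 ∧ ¬Commute x b2 ∧ ¬Commute x b3 ∧ ¬Commute x b4) ∨
    (Commute x b2 ∧ ¬Commute x b1 ∧ ¬Commute x b3 ∧ ¬Commute x b4) ∨
    (Commute x b3 ∧ ¬Commute x b1 ∧ ¬Commute x b2 ∧ ¬Commute x b4) ∨
    (Commute x b4 ∧ ¬Commute x b1 ∧ ¬Commute x b2 ∧ ¬Commute x b3) := by
  by_cases c1 : Commute x b1 <;> by_cases c2 : Commute x b2 <;>
    by_cases c3 : Commute x b3 <;> by_cases c4 : Commute x b4
  · exact absurd (L1 nc5 b1 b2 b3 b4 n12 n13 n14 n23 n24 n34 x c1 c2 c3 c4) hx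
  · exact (L2 nc5 b1 b2 b3 b4 n12 n13 n14 n23 n24 n34 x c1 c2 c3 c4).elim
  · exact (L2 nc5 b1 b2 b4 b3 n12 n14 n13 n24 n23 (nsymm n34) x c1 c2 c4 c3).elim
  · exact (L9 nc5 b1 b2 b3 b4 n12 n13 n14 n23 n24 n34 x c1 c2 c3 c4).elim
  · exact (L2 nc5 b1 b3 b4 b2 n13 n14 n12 n34 (nsymm n23) (nsymm n24) x c1 c3 c4 c2).elim
  · exact (L9 nc5 b1 b3 b2 b4 n13 n12 n14 (nsymm n23) n34 n24 x c1 c3 c2 c4).elim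
  · exact (L9 nc5 b1 b4 b2 b3 n14 n12 n13 (nsymm n24) (nsymm n34) n23 x c1 c4 c2 c3).elim
  · exact Or.inl ⟨c1, c2, c3, c4⟩
  · exact (L2 nc5 b2 b3 b4 b1 n23 n24 (nsymm n12) n34 (nsymm n13) (nsymm n14) x c2 c3 c4 c1).elim
  · exact (L9 nc5 b2 b3 b1 b4 n23 (nsymm n12) n24 (nsymm n13) n34 n14 x c2 c3 c1 c4).elim
  · exact (L9 nc5 b2 b4 b1 b3 n24 (nsymm n12) n23 (nsymm n14) (nsymm n34) n13 x c2 c4 c1 c3).elim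
  · exact Or.inr (Or.inl ⟨c2, c1, c3, c4⟩)
  · exact (L9 nc5 b3 b4 b1 b2 n34 (nsymm n13) (nsymm n23) (nsymm n14) (nsymm n24) n12
      x c3 c4 c1 c2).elim
  · exact Or.inr (Or.inr (Or.inl ⟨c3, c1, c2, c4⟩))
  · exact Or.inr (Or.inr (Or.inr ⟨c4, c1, c2, c3⟩))
  · exact (nc5 n12 n13 n14 (nsymm c1) n23 n24 (nsymm c2) n34 (nsymm c3) (nsymm c4)).elim

/-- the centralizer of a non-central element of class `b1` is the centralizer of `b1` -/
lemma Ceq (nc5 : NC5 G) (b1 b2 b3 b4 : G)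
    (n12 : ¬Commute b1 b2) (n13 : ¬Commute b1 b3) (n14 : ¬Commute b1 b4)
    (n23 : ¬Commute b2 b3) (n24 : ¬Commute b2 b4) (n34 : ¬Commute b3 b4)
    (x : G) (c1 : Commute x b1) (c2 : ¬Commute x b2) (c3 : ¬Commute x b3)
    (c4 : ¬Commute x b4) :
    Subgroup.centralizer {x} = Subgroup.centralizer {b1} := by
  ext g
  simp only [Subgroup.mem_centralizer_iff, Set.mem_singleton_iff, forall_eq]
  constructor
  · intro hg
    by_cases hgc : ∀ h, Commute g h
    · exact ((hgc b1).symm).eq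
    · rcases classify nc5 b1 b2 b3 b4 n12 n13 n14 n23 n24 n34 g hgc with
        ⟨d1, _, _, _⟩ | ⟨d2, d1, d3, d4⟩ | ⟨d3, d1, d2, d4⟩ | ⟨d4, d1, d2, d3⟩
      · exact d1.symm.eq
      · exact (L8 nc5 b1 b2 b3 b4 n12 n13 n14 n23 n24 n34 x g c1 c2 c3 c4
          d2 d1 d3 d4 (show Commute x g from hg)).elim
      · exact (L8 nc5 b1 b3 b2 b4 n13 n12 n14 (nsymm n23) n34 n24 x g c1 c3 c2 c4
          d3 d1 d2 d4 (show Commute x g from hg)).elim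
      · exact (L8 nc5 b1 b4 b2 b3 n14 n12 n13 (nsymm n24) (nsymm n34) n23 x g c1 c4 c2 c3
          d4 d1 d2 d3 (show Commute x g from hg)).elim
  · intro hg
    by_cases hgc : ∀ h, Commute g h
    · exact ((hgc x).symm).eq
    · rcases classify nc5 b1 b2 b3 b4 n12 n13 n14 n23 n24 n34 g hgc with
        ⟨d1, d2, d3, d4⟩ | ⟨d2, d1, d3, d4⟩ | ⟨d3, d1, d2, d4⟩ | ⟨d4, d1, d2, d3⟩
      · exact (L3 nc5 b2 b3 b4 n23 n24 n34 x g c2 c3 c4 d2 d3 d4).eq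
      · exact absurd ((show Commute b1 g from hg).symm) d1
      · exact absurd ((show Commute b1 g from hg).symm) d1
      · exact absurd ((show Commute b1 g from hg).symm) d1

lemma ncard_le5 {α : Type*} (a b c d e : α) : ({a, b, c, d, e} : Set α).ncard ≤ 5 := by
  have h1 : ({a, b, c, d, e} : Set α).ncard ≤ ({b, c, d, e} : Set α).ncard + 1 :=
    Set.ncard_insert_le _ _
  have h2 : ({b, c, d, e} : Set α).ncard ≤ ({c, d, e} : Set α).ncard + 1 :=
    Set.ncard_insert_le _ _
  have h3 : ({c, d, e} : Set α).ncard ≤ ({d, e} : Set α).ncard + 1 :=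
    Set.ncard_insert_le _ _
  have h4 : ({d, e} : Set α).ncard ≤ ({e} : Set α).ncard + 1 :=
    Set.ncard_insert_le _ _
  have h5 : ({e} : Set α).ncard = 1 := Set.ncard_singleton _
  omega

lemma ncard_le4 {α : Type*} (a b c d : α) : ({a, b, c, d} : Set α).ncard ≤ 4 := by
  have h2 : ({a, b, c, d} : Set α).ncard ≤ ({b, c, d} : Set α).ncard + 1 :=
    Set.ncard_insert_le _ _
  have h3 : ({b, c, d} : Set α).ncard ≤ ({c, d} : Set α).ncard + 1 :=
    Set.ncard_insert_le _ _
  have h4 : ({c, d} : Set α).ncard ≤ ({d} : Set α).ncard + 1 :=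
    Set.ncard_insert_le _ _
  have h5 : ({d} : Set α).ncard = 1 := Set.ncard_singleton _
  omega

/-- conclusion in the case `r = 4` -/
lemma final4 (nc5 : NC5 G) (a1 a2 a3 a4 : G)
    (n12 : ¬Commute a1 a2) (n13 : ¬Commute a1 a3) (n14 : ¬Commute a1 a4)
    (n23 : ¬Commute a2 a3) (n24 : ¬Commute a2 a4) (n34 : ¬Commute a3 a4) :
    (Cent G).ncard ≤ 5 := by
  have hsub : Cent G ⊆ ({⊤, Subgroup.centralizer {a1}, Subgroup.centralizer {a2},
      Subgroup.centralizer {a3}, Subgroup.centralizer {a4}} : Set (Subgroup G)) := by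
    rintro S ⟨x, rfl⟩
    show Subgroup.centralizer {x} ∈ _
    by_cases hx : ∀ g, Commute x g
    · have : Subgroup.centralizer {x} = (⊤ : Subgroup G) := by
        ext g
        simp only [Subgroup.mem_centralizer_iff, Set.mem_singleton_iff, forall_eq,
          Subgroup.mem_top, iff_true]
        exact (hx g).eq
      rw [this]; simp only [Set.mem_insert_iff, Set.mem_singleton_iff]; tauto
    · rcases classify nc5 a1 a2 a3 a4 n12 n13 n14 n23 n24 n34 x hx with
        ⟨c1, c2, c3, c4⟩ | ⟨c2, c1, c3, c4⟩ | ⟨c3, c1, c2, c4⟩ | ⟨c4, c1, c2, c3⟩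
      · rw [Ceq nc5 a1 a2 a3 a4 n12 n13 n14 n23 n24 n34 x c1 c2 c3 c4]
        simp only [Set.mem_insert_iff, Set.mem_singleton_iff]; tauto
      · rw [Ceq nc5 a2 a1 a3 a4 (nsymm n12) n23 n24 n13 n14 n34 x c2 c1 c3 c4]
        simp only [Set.mem_insert_iff, Set.mem_singleton_iff]; tauto
      · rw [Ceq nc5 a3 a1 a2 a4 (nsymm n13) (nsymm n23) n34 n12 n14 n24 x c3 c1 c2 c4]
        simp only [Set.mem_insert_iff, Set.mem_singleton_iff]; tauto
      · rw [Ceq nc5 a4 a1 a2 a3 (nsymm n14) (nsymm n24) (nsymm n34) n12 n13 n23 x c4 c1 c2 c3]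
        simp only [Set.mem_insert_iff, Set.mem_singleton_iff]; tauto
  exact le_trans (Set.ncard_le_ncard hsub (Set.toFinite _)) (ncard_le5 _ _ _ _ _)

end Stmt16
namespace Stmt16

variable {G : Type*} [Group G]

lemma T1 (nc4 : NC4 G) (b1 b2 b3 : G)
    (n12 : ¬Commute b1 b2) (n13 : ¬Commute b1 b3) (n23 : ¬Commute b2 b3)
    (x : G) (h1 : Commute x b1) (h2 : Commute x b2) (h3 : Commute x b3) :
    ∀ g, Commute x g := by
  intro g
  by_contra hw0
  classical
  set c : G → G := fun b => if Commute g b then b * x else b with hcdef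
  have hA : ∀ b, ¬Commute g (c b) := by
    intro b hcomm
    by_cases hwb : Commute g b
    · rw [hcdef] at hcomm; simp only [if_pos hwb] at hcomm
      exact B4 hwb (fun hh => hw0 hh.symm) hcomm
    · rw [hcdef] at hcomm; simp only [if_neg hwb] at hcomm
      exact hwb hcomm
  have hB : ∀ b b', Commute x b → Commute x b' → ¬Commute b b' → ¬Commute (c b) (c b') := by
    intro b b' hxb hxb' h hcomm
    rw [hcdef] at hcomm
    by_cases hwb : Commute g b <;> by_cases hwb' : Commute g b' <;>
      simp only [if_pos, if_neg, hwb, hwb', if_true, if_false] at hcomm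
    · exact B1 hxb hxb' h hcomm
    · exact B2 hxb' h hcomm
    · exact B3 hxb h hcomm
    · exact h hcomm
  exact nc4 (hB _ _ h1 h2 n12) (hB _ _ h1 h3 n13) (nsymm (hA b1))
    (hB _ _ h2 h3 n23) (nsymm (hA b2)) (nsymm (hA b3))

lemma T2 (nc4 : NC4 G) (b1 b2 b3 : G)
    (n12 : ¬Commute b1 b2) (n13 : ¬Commute b1 b3) (n23 : ¬Commute b2 b3)
    (x : G) (h1 : Commute x b1) (h2 : Commute x b2) (h3 : ¬Commute x b3) : False :=
  nc4 n12 n13 (A1 h1 n13) n23 (A1 h2 n23) (A2 h3)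

lemma T3 (nc4 : NC4 G) (b2 b3 : G) (n23 : ¬Commute b2 b3)
    (x y : G) (hx2 : ¬Commute x b2) (hx3 : ¬Commute x b3)
    (hy2 : ¬Commute y b2) (hy3 : ¬Commute y b3) : Commute x y := by
  by_contra h
  exact nc4 h hx2 hx3 hy2 hy3 n23

lemma T8 (nc4 : NC4 G) (b1 b2 b3 : G)
    (n12 : ¬Commute b1 b2) (n13 : ¬Commute b1 b3) (n23 : ¬Commute b2 b3)
    (u v : G)
    (hu1 : Commute u b1) (hu2 : ¬Commute u b2) (hu3 : ¬Commute u b3)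
    (hv2 : Commute v b2) (hv1 : ¬Commute v b1) (hv3 : ¬Commute v b3)
    (huv : Commute u v) : False := by
  have huv1 : ¬Commute (u*v) b1 := nsymm (A1 hu1 (nsymm hv1))
  have huv2 : ¬Commute (u*v) b2 := nsymm (A5 hv2 hu2)
  by_cases c3 : Commute (u*v) b3
  · exact T2 nc4 b1 (u*v) b2 (nsymm huv1) n12 huv2 u hu1 ((Commute.refl u).mul_right huv) hu2
  · exact nc4 n12 n13 (nsymm huv1) n23 (nsymm huv2) (nsymm c3)

lemma classify3 (nc4 : NC4 G) (b1 b2 b3 : G)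
    (n12 : ¬Commute b1 b2) (n13 : ¬Commute b1 b3) (n23 : ¬Commute b2 b3)
    (x : G) (hx : ¬∀ g, Commute x g) :
    (Commute x b1 ∧ ¬Commute x b2 ∧ ¬Commute x b3) ∨
    (Commute x b2 ∧ ¬Commute x b1 ∧ ¬Commute x b3) ∨
    (Commute x b3 ∧ ¬Commute x b1 ∧ ¬Commute x b2) := by
  by_cases c1 : Commute x b1 <;> by_cases c2 : Commute x b2 <;> by_cases c3 : Commute x b3
  · exact absurd (T1 nc4 b1 b2 b3 n12 n13 n23 x c1 c2 c3) hx
  · exact (T2 nc4 b1 b2 b3 n12 n13 n23 x c1 c2 c3).elim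
  · exact (T2 nc4 b1 b3 b2 n13 n12 (nsymm n23) x c1 c3 c2).elim
  · exact Or.inl ⟨c1, c2, c3⟩
  · exact (T2 nc4 b2 b3 b1 n23 (nsymm n12) (nsymm n13) x c2 c3 c1).elim
  · exact Or.inr (Or.inl ⟨c2, c1, c3⟩)
  · exact Or.inr (Or.inr ⟨c3, c1, c2⟩)
  · exact (nc4 n12 n13 (nsymm c1) n23 (nsymm c2) (nsymm c3)).elim

lemma Ceq3 (nc4 : NC4 G) (b1 b2 b3 : G)
    (n12 : ¬Commute b1 b2) (n13 : ¬Commute b1 b3) (n23 : ¬Commute b2 b3)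
    (x : G) (c1 : Commute x b1) (c2 : ¬Commute x b2) (c3 : ¬Commute x b3) :
    Subgroup.centralizer {x} = Subgroup.centralizer {b1} := by
  ext g
  simp only [Subgroup.mem_centralizer_iff, Set.mem_singleton_iff, forall_eq]
  constructor
  · intro hg
    by_cases hgc : ∀ h, Commute g h
    · exact ((hgc b1).symm).eq
    · rcases classify3 nc4 b1 b2 b3 n12 n13 n23 g hgc with
        ⟨d1, _, _⟩ | ⟨d2, d1, d3⟩ | ⟨d3, d1, d2⟩
      · exact d1.symm.eq
      · exact (T8 nc4 b1 b2 b3 n12 n13 n23 x g c1 c2 c3 d2 d1 d3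
          (show Commute x g from hg)).elim
      · exact (T8 nc4 b1 b3 b2 n13 n12 (nsymm n23) x g c1 c3 c2 d3 d1 d2
          (show Commute x g from hg)).elim
  · intro hg
    by_cases hgc : ∀ h, Commute g h
    · exact ((hgc x).symm).eq
    · rcases classify3 nc4 b1 b2 b3 n12 n13 n23 g hgc with
        ⟨d1, d2, d3⟩ | ⟨d2, d1, d3⟩ | ⟨d3, d1, d2⟩
      · exact (T3 nc4 b2 b3 n23 x g c2 c3 d2 d3).eq
      · exact absurd ((show Commute b1 g from hg).symm) d1
      · exact absurd ((show Commute b1 g from hg).symm) d1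

/-- conclusion in the case `r = 3` -/
lemma final3 (nc4 : NC4 G) (a1 a2 a3 : G)
    (n12 : ¬Commute a1 a2) (n13 : ¬Commute a1 a3) (n23 : ¬Commute a2 a3) :
    (Cent G).ncard ≤ 4 := by
  have hsub : Cent G ⊆ ({⊤, Subgroup.centralizer {a1}, Subgroup.centralizer {a2},
      Subgroup.centralizer {a3}} : Set (Subgroup G)) := by
    rintro S ⟨x, rfl⟩
    show Subgroup.centralizer {x} ∈ _
    by_cases hx : ∀ g, Commute x g
    · have : Subgroup.centralizer {x} = (⊤ : Subgroup G) := by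
        ext g
        simp only [Subgroup.mem_centralizer_iff, Set.mem_singleton_iff, forall_eq,
          Subgroup.mem_top, iff_true]
        exact (hx g).eq
      rw [this]; simp only [Set.mem_insert_iff, Set.mem_singleton_iff]; tauto
    · rcases classify3 nc4 a1 a2 a3 n12 n13 n23 x hx with
        ⟨c1, c2, c3⟩ | ⟨c2, c1, c3⟩ | ⟨c3, c1, c2⟩
      · rw [Ceq3 nc4 a1 a2 a3 n12 n13 n23 x c1 c2 c3]
        simp only [Set.mem_insert_iff, Set.mem_singleton_iff]; tauto
      · rw [Ceq3 nc4 a2 a1 a3 (nsymm n12) n23 n13 x c2 c1 c3]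
        simp only [Set.mem_insert_iff, Set.mem_singleton_iff]; tauto
      · rw [Ceq3 nc4 a3 a1 a2 (nsymm n13) (nsymm n23) n12 x c3 c1 c2]
        simp only [Set.mem_insert_iff, Set.mem_singleton_iff]; tauto
  exact le_trans (Set.ncard_le_ncard hsub (Set.toFinite _)) (ncard_le4 _ _ _ _)

/-- the case `r = 2` is impossible -/
lemma final2 (nc3 : NC3 G) (a1 a2 : G) (n12 : ¬Commute a1 a2) : False := by
  have key : ∀ x : G, Commute x a1 → Commute x a2 := by
    intro x h1
    by_contra h2
    exact nc3 n12 (A1 h1 n12) (A2 h2)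
  exact n12 (key a1 (Commute.refl a1))

end Stmt16
namespace Stmt16

variable {G : Type*} [Group G] [DecidableEq G]

lemma pairwise2 {x1 x2 : G} (h12 : ¬Commute x1 x2) :
    (↑({x1, x2} : Finset G) : Set G).Pairwise (fun a b => a * b ≠ b * a) := by
  have h21 := nsymm h12
  intro a ha b hb hne
  simp only [Finset.coe_insert, Set.mem_insert_iff, Finset.coe_singleton,
    Set.mem_singleton_iff] at ha hb
  rcases ha with rfl | rfl <;> rcases hb with rfl | rfl <;>
    first
      | exact absurd rfl hne
      | assumption

lemma card2 {x1 x2 : G} (h12 : ¬Commute x1 x2) : ({x1, x2} : Finset G).card = 2 := by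
  have e12 := ne_of_ncomm h12
  rw [Finset.card_insert_of_notMem (by simp [e12]), Finset.card_singleton]

lemma pairwise3 {x1 x2 x3 : G} (h12 : ¬Commute x1 x2) (h13 : ¬Commute x1 x3)
    (h23 : ¬Commute x2 x3) :
    (↑({x1, x2, x3} : Finset G) : Set G).Pairwise (fun a b => a * b ≠ b * a) := by
  have h21 := nsymm h12; have h31 := nsymm h13; have h32 := nsymm h23
  intro a ha b hb hne
  simp only [Finset.coe_insert, Set.mem_insert_iff, Finset.coe_singleton,
    Set.mem_singleton_iff] at ha hb
  rcases ha with rfl | rfl | rfl <;> rcases hb with rfl | rfl | rfl <;>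
    first
      | exact absurd rfl hne
      | assumption

lemma card3 {x1 x2 x3 : G} (h12 : ¬Commute x1 x2) (h13 : ¬Commute x1 x3)
    (h23 : ¬Commute x2 x3) : ({x1, x2, x3} : Finset G).card = 3 := by
  have e12 := ne_of_ncomm h12; have e13 := ne_of_ncomm h13; have e23 := ne_of_ncomm h23
  rw [Finset.card_insert_of_notMem (by simp [e12, e13]),
    Finset.card_insert_of_notMem (by simp [e23]), Finset.card_singleton]

lemma pairwise5 {x1 x2 x3 x4 x5 : G} (h12 : ¬Commute x1 x2) (h13 : ¬Commute x1 x3)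
    (h14 : ¬Commute x1 x4) (h15 : ¬Commute x1 x5) (h23 : ¬Commute x2 x3)
    (h24 : ¬Commute x2 x4) (h25 : ¬Commute x2 x5) (h34 : ¬Commute x3 x4)
    (h35 : ¬Commute x3 x5) (h45 : ¬Commute x4 x5) :
    (↑({x1, x2, x3, x4, x5} : Finset G) : Set G).Pairwise (fun a b => a * b ≠ b * a) := by
  have h21 := nsymm h12; have h31 := nsymm h13; have h41 := nsymm h14; have h51 := nsymm h15
  have h32 := nsymm h23; have h42 := nsymm h24; have h52 := nsymm h25
  have h43 := nsymm h34; have h53 := nsymm h35; have h54 := nsymm h45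
  intro a ha b hb hne
  simp only [Finset.coe_insert, Set.mem_insert_iff, Finset.coe_singleton,
    Set.mem_singleton_iff] at ha hb
  rcases ha with rfl | rfl | rfl | rfl | rfl <;> rcases hb with rfl | rfl | rfl | rfl | rfl <;>
    first
      | exact absurd rfl hne
      | assumption

lemma card5 {x1 x2 x3 x4 x5 : G} (h12 : ¬Commute x1 x2) (h13 : ¬Commute x1 x3)
    (h14 : ¬Commute x1 x4) (h15 : ¬Commute x1 x5) (h23 : ¬Commute x2 x3)
    (h24 : ¬Commute x2 x4) (h25 : ¬Commute x2 x5) (h34 : ¬Commute x3 x4)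
    (h35 : ¬Commute x3 x5) (h45 : ¬Commute x4 x5) :
    ({x1, x2, x3, x4, x5} : Finset G).card = 5 := by
  have e12 := ne_of_ncomm h12; have e13 := ne_of_ncomm h13; have e14 := ne_of_ncomm h14
  have e15 := ne_of_ncomm h15; have e23 := ne_of_ncomm h23; have e24 := ne_of_ncomm h24
  have e25 := ne_of_ncomm h25; have e34 := ne_of_ncomm h34; have e35 := ne_of_ncomm h35
  have e45 := ne_of_ncomm h45
  rw [Finset.card_insert_of_notMem (by simp [e12, e13, e14, e15]),
    Finset.card_insert_of_notMem (by simp [e23, e24, e25]),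
    Finset.card_insert_of_notMem (by simp [e34, e35]),
    Finset.card_insert_of_notMem (by simp [e45]), Finset.card_singleton]

lemma top_mem_Cent : (⊤ : Subgroup G) ∈ Cent G :=
  ⟨1, by ext g; simp [Subgroup.mem_centralizer_iff]⟩

end Stmt16
open Stmt16 in
theorem stmt16 (G : Type*) [Group G] [Finite G] (h : (Cent G).ncard = 9) (r : ℕ)
    (hr : IsGreatest {n : ℕ | ∃ s : Finset G,
      (s : Set G).Pairwise (fun a b => a * b ≠ b * a) ∧ s.card = n} r) :
    5 ≤ r ∧ r ≤ 8 := by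
  classical
  obtain ⟨⟨s, hsP, hsC⟩, hub⟩ := hr
  have h1r : 1 ≤ r := by
    refine hub ⟨{1}, ?_, Finset.card_singleton _⟩
    rw [Finset.coe_singleton]
    exact Set.pairwise_singleton _ _
  have hfin : (Cent G).Finite := Set.finite_range _
  have h5 : 5 ≤ r := by
    by_contra hlt
    push_neg at hlt
    interval_cases r
    · -- r = 1 : G is abelian
      have hab : ∀ x y : G, Commute x y := by
        intro x y
        by_contra hxy
        have h2 := hub ⟨{x, y}, pairwise2 hxy, card2 hxy⟩
        omega
      have hC1 : Cent G = {⊤} := by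
        apply Set.eq_singleton_iff_unique_mem.mpr
        refine ⟨top_mem_Cent, ?_⟩
        rintro S ⟨x, rfl⟩
        show Subgroup.centralizer {x} = ⊤
        ext g
        simp only [Subgroup.mem_centralizer_iff, Set.mem_singleton_iff, forall_eq,
          Subgroup.mem_top, iff_true]
        exact (hab x g).eq
      rw [hC1, Set.ncard_singleton] at h
      omega
    · -- r = 2
      obtain ⟨a, b, hab, rfl⟩ := Finset.card_eq_two.mp hsC
      have nab : ¬Commute a b := hsP (by simp) (by simp) hab
      have nc3 : NC3 G := by
        intro x1 x2 x3 h12 h13 h23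
        have h3 := hub ⟨{x1, x2, x3}, pairwise3 h12 h13 h23, card3 h12 h13 h23⟩
        omega
      exact final2 nc3 a b nab
    · -- r = 3
      obtain ⟨a, b, c, hab, hac, hbc, rfl⟩ := Finset.card_eq_three.mp hsC
      have nab : ¬Commute a b := hsP (by simp) (by simp) hab
      have nac : ¬Commute a c := hsP (by simp) (by simp) hac
      have nbc : ¬Commute b c := hsP (by simp) (by simp) hbc
      have nc4 : NC4 G := by
        intro x1 x2 x3 x4 h12 h13 h14 h23 h24 h34
        have h21 := nsymm h12; have h31 := nsymm h13; have h41 := nsymm h14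
        have h32 := nsymm h23; have h42 := nsymm h24; have h43 := nsymm h34
        have e12 := ne_of_ncomm h12; have e13 := ne_of_ncomm h13; have e14 := ne_of_ncomm h14
        have e23 := ne_of_ncomm h23; have e24 := ne_of_ncomm h24; have e34 := ne_of_ncomm h34
        have hpw : (↑({x1, x2, x3, x4} : Finset G) : Set G).Pairwise
            (fun a b => a * b ≠ b * a) := by
          intro u hu v hv hne
          simp only [Finset.coe_insert, Set.mem_insert_iff, Finset.coe_singleton,
            Set.mem_singleton_iff] at hu hv
          rcases hu with rfl | rfl | rfl | rfl <;> rcases hv with rfl | rfl | rfl | rfl <;>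
            first
              | exact absurd rfl hne
              | assumption
        have hcard : ({x1, x2, x3, x4} : Finset G).card = 4 := by
          rw [Finset.card_insert_of_notMem (by simp [e12, e13, e14]),
            Finset.card_insert_of_notMem (by simp [e23, e24]),
            Finset.card_insert_of_notMem (by simp [e34]), Finset.card_singleton]
        have h4 := hub ⟨{x1, x2, x3, x4}, hpw, hcard⟩
        omega
      have := final3 nc4 a b c nab nac nbc
      omega
    · -- r = 4
      obtain ⟨a, t, hat, hins, ht3⟩ := Finset.card_eq_succ.mp hsC
      obtain ⟨b, c, d, hbc, hbd, hcd, rfl⟩ := Finset.card_eq_three.mp ht3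
      have hmema : a ∈ s := by rw [← hins]; exact Finset.mem_insert_self _ _
      have hmemb : b ∈ s := by rw [← hins]; simp
      have hmemc : c ∈ s := by rw [← hins]; simp
      have hmemd : d ∈ s := by rw [← hins]; simp
      have heab : a ≠ b := by rintro rfl; exact hat (by simp)
      have heac : a ≠ c := by rintro rfl; exact hat (by simp)
      have head : a ≠ d := by rintro rfl; exact hat (by simp)
      have nab : ¬Commute a b := hsP (by simpa using hmema) (by simpa using hmemb) heab
      have nac : ¬Commute a c := hsP (by simpa using hmema) (by simpa using hmemc) heac
      have nad : ¬Commute a d := hsP (by simpa using hmema) (by simpa using hmemd) head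
      have nbc : ¬Commute b c := hsP (by simpa using hmemb) (by simpa using hmemc) hbc
      have nbd : ¬Commute b d := hsP (by simpa using hmemb) (by simpa using hmemd) hbd
      have ncd : ¬Commute c d := hsP (by simpa using hmemc) (by simpa using hmemd) hcd
      have nc5 : NC5 G := by
        intro x1 x2 x3 x4 x5 h12 h13 h14 h15 h23 h24 h25 h34 h35 h45
        have h5' := hub ⟨{x1, x2, x3, x4, x5},
          pairwise5 h12 h13 h14 h15 h23 h24 h25 h34 h35 h45,
          card5 h12 h13 h14 h15 h23 h24 h25 h34 h35 h45⟩
        omega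
      have := final4 nc5 a b c d nab nac nad nbc nbd ncd
      omega
  refine ⟨h5, ?_⟩
  -- upper bound : r ≤ 8
  have htop : (⊤ : Subgroup G) ∈ Cent G := top_mem_Cent
  have hinj : Set.InjOn (fun x : G => Subgroup.centralizer {x}) ↑s := by
    intro a ha b hb hab'
    by_contra hne
    have hnc : a * b ≠ b * a := hsP ha hb hne
    have hb' : b ∈ Subgroup.centralizer ({b} : Set G) := by
      simp [Subgroup.mem_centralizer_iff]
    have hb'' : b ∈ Subgroup.centralizer ({a} : Set G) := by
      have : Subgroup.centralizer ({a} : Set G) = Subgroup.centralizer ({b} : Set G) := hab'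
      rw [this]; exact hb'
    exact hnc (Subgroup.mem_centralizer_iff.mp hb'' a rfl)
  have himg : (fun x : G => Subgroup.centralizer {x}) '' ↑s ⊆ Cent G \ {⊤} := by
    rintro S ⟨x, hx, rfl⟩
    refine ⟨⟨x, rfl⟩, ?_⟩
    intro htopx
    have htopx' : Subgroup.centralizer ({x} : Set G) = ⊤ := htopx
    obtain ⟨y, hy, hyx⟩ := Finset.exists_mem_ne (by omega : 1 < s.card) x
    have hnc : y * x ≠ x * y := hsP (Finset.mem_coe.mpr hy) hx hyx
    have : y ∈ Subgroup.centralizer ({x} : Set G) := by rw [htopx']; trivial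
    exact hnc (Subgroup.mem_centralizer_iff.mp this x rfl).symm
  calc r = s.card := hsC.symm
  _ = (↑s : Set G).ncard := (Set.ncard_coe_finset s).symm
  _ = ((fun x : G => Subgroup.centralizer {x}) '' ↑s).ncard :=
      (Set.ncard_image_of_injOn hinj).symm
  _ ≤ (Cent G \ {⊤}).ncard := Set.ncard_le_ncard himg hfin.diff
  _ = (Cent G).ncard - 1 := by rw [Set.ncard_diff_singleton_of_mem htop]
  _ = 8 := by rw [h]
end

section
/- Every finite group G with |Cent(G)| = 9 is solvable. -/
open Subgroup Pointwise

section CentHelpers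
variable {W : Type*} [Group W]

theorem solv_ext (N : Subgroup W) [N.Normal]
    (h1 : IsSolvable N) (h2 : IsSolvable (W ⧸ N)) : IsSolvable W := by
  haveI : Group.IsSolvable N := h1; haveI : Group.IsSolvable (W ⧸ N) := h2
  exact solvable_of_ker_le_range N.subtype (QuotientGroup.mk' N)
    (by rw [QuotientGroup.ker_mk', Subgroup.range_subtype N])

theorem solv_small [Finite W] (h : Nat.card W ≤ 3) : IsSolvable W := by
  have h1 : 1 ≤ Nat.card W := Nat.one_le_iff_ne_zero.mpr (Nat.card_ne_zero.mpr ⟨⟨1⟩, ‹_›⟩)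
  interval_cases h' : (Nat.card W)
  · obtain ⟨hs, -⟩ := Nat.card_eq_one_iff_unique.mp h'
    exact (inferInstance : Group.IsSolvable W)
  · haveI : Fact (Nat.Prime 2) := ⟨by norm_num⟩
    haveI := isCyclic_of_prime_card (α := W) (p := 2) h'
    exact isSolvable_of_comm (IsCyclic.commGroup.mul_comm)
  · haveI : Fact (Nat.Prime 3) := ⟨by norm_num⟩
    haveI := isCyclic_of_prime_card (α := W) (p := 3) h'
    exact isSolvable_of_comm (IsCyclic.commGroup.mul_comm)

theorem solv_of_sub_perm [Finite W] (H : Subgroup W) (h1 : IsSolvable H)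
    (h2 : IsSolvable (Equiv.Perm (W ⧸ H))) : IsSolvable W := by
  set f := MulAction.toPermHom W (W ⧸ H) with hf
  have hker : f.ker ≤ H := by
    rw [hf, ← Subgroup.normalCore_eq_ker]; exact Subgroup.normalCore_le H
  have hks : IsSolvable f.ker := by
    haveI : Group.IsSolvable H := h1
    exact solvable_of_solvable_injective (Subgroup.inclusion_injective hker)
  have hq : IsSolvable (W ⧸ f.ker) := by
    haveI : Group.IsSolvable (Equiv.Perm (W ⧸ H)) := h2
    exact solvable_of_solvable_injective (QuotientGroup.kerLift_injective f)
  exact solv_ext f.ker hks hq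

theorem solv_perm3 (X : Type*) [Fintype X] (h : Fintype.card X ≤ 3) :
    IsSolvable (Equiv.Perm X) := by
  letI := Classical.decEq X
  rcases Nat.lt_or_ge (Fintype.card X) 3 with h2 | h3
  · apply solv_small
    rw [Nat.card_eq_fintype_card, Fintype.card_perm]
    calc Nat.factorial (Fintype.card X) ≤ Nat.factorial 2 := Nat.factorial_le (by omega)
    _ ≤ 3 := by norm_num [Nat.factorial]
  · have hc3 : Fintype.card X = 3 := le_antisymm h h3
    haveI : Nontrivial X := Fintype.one_lt_card_iff_nontrivial.mp (by omega)
    have hf : Fintype.card (Equiv.Perm X) = 6 := by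
      rw [Fintype.card_perm, hc3]; decide
    have hA : 2 * Fintype.card (alternatingGroup X) = 6 := by
      rw [two_mul_card_alternatingGroup, hf]
    have hA3 : Nat.card (alternatingGroup X) = 3 := by
      rw [Nat.card_eq_fintype_card]; omega
    refine solv_ext (alternatingGroup X) (solv_small (by omega)) (solv_small ?_)
    have h6 := Subgroup.card_eq_card_quotient_mul_card_subgroup (alternatingGroup X)
    have hp : Nat.card (Equiv.Perm X) = 6 := by rw [Nat.card_eq_fintype_card]; exact hf
    rw [hp, hA3] at h6
    omega

theorem solv_perm4 (X : Type*) [Fintype X] (h : Fintype.card X ≤ 4) :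
    IsSolvable (Equiv.Perm X) := by
  letI := Classical.decEq X
  rcases Nat.lt_or_ge (Fintype.card X) 4 with h2 | h4
  · exact solv_perm3 X (by omega)
  · have hc4 : Fintype.card X = 4 := le_antisymm h h4
    haveI : Nontrivial X := Fintype.one_lt_card_iff_nontrivial.mp (by omega)
    have hf : Fintype.card (Equiv.Perm X) = 24 := by
      rw [Fintype.card_perm, hc4]; decide
    have hA : 2 * Fintype.card (alternatingGroup X) = 24 := by
      rw [two_mul_card_alternatingGroup, hf]
    have hA12 : Nat.card (alternatingGroup X) = 12 := by
      rw [Nat.card_eq_fintype_card]; omega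
    haveI : Fact (Nat.Prime 2) := ⟨by norm_num⟩
    obtain ⟨V⟩ := (inferInstance : Nonempty (Sylow 2 (alternatingGroup X)))
    have hV4 : Nat.card V.toSubgroup = 4 := by
      obtain ⟨n, hn⟩ := V.isPGroup'.exists_card_eq
      have hodd : ¬ (2 ∣ V.toSubgroup.index) := V.not_dvd_index
      have hmul : Nat.card V.toSubgroup * V.toSubgroup.index = 12 := by
        rw [Subgroup.card_mul_index, hA12]
      rw [hn] at hmul ⊢
      match n, hmul with
      | 0, hmul => omega
      | 1, hmul => norm_num at hmul; omega
      | 2, hmul => norm_num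
      | (n+3), hmul =>
        exfalso
        have h8 : (8 : ℕ) ∣ 12 := by
          refine ⟨2 ^ n * V.toSubgroup.index, ?_⟩
          rw [← hmul]; ring
        norm_num at h8
    have hVsolv : IsSolvable V.toSubgroup := by
      haveI := (V.isPGroup').isNilpotent
      exact (inferInstance : Group.IsSolvable V.toSubgroup)
    have hQ3 : Nat.card (alternatingGroup X ⧸ V.toSubgroup) = 3 := by
      have h2 := Subgroup.card_eq_card_quotient_mul_card_subgroup V.toSubgroup
      rw [hA12, hV4] at h2; omega
    have hAsolv : IsSolvable (alternatingGroup X) := by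
      refine solv_of_sub_perm V.toSubgroup hVsolv ?_
      haveI : Fintype (alternatingGroup X ⧸ V.toSubgroup) := Fintype.ofFinite _
      refine solv_perm3 _ ?_
      rw [← Nat.card_eq_fintype_card, hQ3]
    refine solv_ext (alternatingGroup X) hAsolv (solv_small ?_)
    have h6 := Subgroup.card_eq_card_quotient_mul_card_subgroup (alternatingGroup X)
    have hp : Nat.card (Equiv.Perm X) = 24 := by rw [Nat.card_eq_fintype_card]; exact hf
    rw [hp, hA12] at h6
    omega
theorem five_le_index [Finite W] (hns : ¬IsSolvable W)
    (hsub : ∀ K : Subgroup W, K ≠ ⊤ → IsSolvable K) (H : Subgroup W) (hH : H ≠ ⊤) :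
    5 ≤ H.index := by
  by_contra hlt
  push_neg at hlt
  have h0 : H.index ≠ 0 := Subgroup.index_ne_zero_of_finite
  have h1 : H.index ≠ 1 := fun e => hH (Subgroup.index_eq_one.mp e)
  apply hns
  refine solv_of_sub_perm H (hsub H hH) ?_
  haveI : Fintype (W ⧸ H) := Fintype.ofFinite _
  refine solv_perm4 _ ?_
  rw [← Nat.card_eq_fintype_card, ← Subgroup.index_eq_card]
  omega

theorem sup_solv (H K : Subgroup W) [hHn : H.Normal]
    (hH : IsSolvable H) (hK : IsSolvable K) : IsSolvable ↥(H ⊔ K) := by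
  set J := H ⊔ K with hJ
  have h1 : IsSolvable (H.subgroupOf J) := by
    haveI : Group.IsSolvable H := hH
    exact solvable_of_solvable_injective (f := (Subgroup.subgroupOfEquivOfLe (le_sup_left : H ≤ J)).toMonoidHom) (MulEquiv.injective _)
  have h2 : IsSolvable (J ⧸ H.subgroupOf J) := by
    haveI : Group.IsSolvable K := hK
    refine solvable_of_surjective
      (f := (QuotientGroup.mk' (H.subgroupOf J)).comp (Subgroup.inclusion le_sup_right)) ?_
    intro q
    obtain ⟨j, rfl⟩ := QuotientGroup.mk'_surjective _ q
    have hj : (j : W) ∈ (↑H * ↑K : Set W) := by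
      rw [← Subgroup.normal_mul H K]; exact j.2
    obtain ⟨h, hh, k, hk, hhk⟩ := hj
    refine ⟨⟨k, hk⟩, ?_⟩
    simp only [MonoidHom.comp_apply, QuotientGroup.mk'_apply]
    rw [QuotientGroup.eq]
    have : ((Subgroup.inclusion (le_sup_right : K ≤ J) ⟨k, hk⟩ : J) : W) = k := rfl
    refine Subgroup.mem_subgroupOf.mpr ?_
    show (((Subgroup.inclusion (le_sup_right : K ≤ J)) ⟨k, hk⟩)⁻¹ * j : J).1 ∈ H
    have hco : (((Subgroup.inclusion (le_sup_right : K ≤ J)) ⟨k, hk⟩)⁻¹ * j : J).1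
        = k⁻¹ * (h * k) := by
      simp only [Subgroup.coe_mul, InvMemClass.coe_inv, this]
      rw [← hhk]
    rw [hco]
    have : k⁻¹ * (h * k) = k⁻¹ * h * k := by group
    rw [this]
    simpa using hHn.conj_mem h hh k⁻¹
  haveI : (H.subgroupOf J).Normal := Subgroup.normal_subgroupOf
  exact solv_ext (H.subgroupOf J) h1 h2
theorem finset_sup_solv {ι : Type*} (s : Finset ι) (f : ι → Subgroup W)
    (hn : ∀ i, (f i).Normal) (hs : ∀ i, IsSolvable (f i)) :
    (s.sup f).Normal ∧ IsSolvable ↥(s.sup f) := by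
  classical
  induction s using Finset.induction with
  | empty =>
    refine ⟨by simp only [Finset.sup_empty]; infer_instance, ?_⟩
    exact (inferInstance : Group.IsSolvable (⊥ : Subgroup W))
  | @insert a s ha ih =>
    rw [Finset.sup_insert]
    obtain ⟨ihn, ihs⟩ := ih
    haveI := hn a
    haveI := ihn
    exact ⟨Subgroup.sup_normal _ _, sup_solv _ _ (hs a) ihs⟩

theorem centralizer_conj_eq (x : W) (hx : (Subgroup.centralizer ({x} : Set W)).Normal)
    (g : W) :
    Subgroup.centralizer ({g * x * g⁻¹} : Set W) = Subgroup.centralizer ({x} : Set W) := by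
  ext u
  have h1 : u ∈ Subgroup.centralizer ({g * x * g⁻¹} : Set W) ↔
      x * (g⁻¹ * u * g) = (g⁻¹ * u * g) * x := by
    simp only [Subgroup.mem_centralizer_iff, Set.mem_singleton_iff, forall_eq]
    constructor <;> intro h
    · have := congrArg (fun w => g⁻¹ * w * g) h
      simp only [mul_assoc, inv_mul_cancel_left, mul_inv_cancel_left] at this ⊢
      simpa [mul_assoc] using this
    · have := congrArg (fun w => g * w * g⁻¹) h
      simp only [mul_assoc, inv_mul_cancel_left, mul_inv_cancel_left] at this ⊢
      simpa [mul_assoc] using this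
  rw [h1]
  have h2 : (x * (g⁻¹ * u * g) = (g⁻¹ * u * g) * x) ↔
      (g⁻¹ * u * g) ∈ Subgroup.centralizer ({x} : Set W) := by
    simp only [Subgroup.mem_centralizer_iff, Set.mem_singleton_iff, forall_eq]
  rw [h2]
  constructor
  · intro h
    have := hx.conj_mem _ h g
    simp only [mul_assoc, inv_mul_cancel_left, mul_inv_cancel_left] at this
    simpa [mul_assoc] using this
  · intro h
    have := hx.conj_mem u h g⁻¹
    simpa [mul_assoc] using this

theorem normalClosure_mul_comm (x : W) (hx : (Subgroup.centralizer ({x} : Set W)).Normal) :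
    ∀ a ∈ Subgroup.normalClosure ({x} : Set W), ∀ b ∈ Subgroup.normalClosure ({x} : Set W),
      a * b = b * a := by
  have hSc : ∀ y ∈ Group.conjugatesOfSet ({x} : Set W),
      ∀ z ∈ Group.conjugatesOfSet ({x} : Set W), y * z = z * y := by
    intro y hy z hz
    rw [Group.mem_conjugatesOfSet_iff] at hy hz
    obtain ⟨a, ha, hya⟩ := hy
    obtain ⟨b, hb, hzb⟩ := hz
    rw [Set.mem_singleton_iff] at ha hb
    rw [ha] at hya
    rw [hb] at hzb
    obtain ⟨c, hc⟩ := isConj_iff.mp hya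
    obtain ⟨d, hd⟩ := isConj_iff.mp hzb
    have hz' : z ∈ Subgroup.centralizer ({y} : Set W) := by
      rw [← hc, centralizer_conj_eq x hx c, ← hd]
      have : d * x * d⁻¹ ∈ Subgroup.centralizer ({d * x * d⁻¹} : Set W) := by
        simp [Subgroup.mem_centralizer_iff]
      rwa [centralizer_conj_eq x hx d] at this
    exact Subgroup.mem_centralizer_iff.mp hz' y rfl
  have hle : Subgroup.normalClosure ({x} : Set W) ≤
      Subgroup.centralizer (Group.conjugatesOfSet ({x} : Set W)) := by
    show Subgroup.closure _ ≤ _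
    rw [Subgroup.closure_le]
    intro y hy
    rw [SetLike.mem_coe, Subgroup.mem_centralizer_iff]
    intro m hm
    exact hSc m hm y hy
  intro a ha b hb
  have haC := hle ha
  have hSa : Group.conjugatesOfSet ({x} : Set W) ⊆ ↑(Subgroup.centralizer ({a} : Set W)) := by
    intro y hy
    rw [SetLike.mem_coe, Subgroup.mem_centralizer_iff]
    intro m hm
    rw [Set.mem_singleton_iff] at hm
    subst hm
    exact (Subgroup.mem_centralizer_iff.mp haC y hy).symm
  have hb' : b ∈ Subgroup.centralizer ({a} : Set W) := by
    have hle2 : Subgroup.normalClosure ({x} : Set W) ≤ Subgroup.centralizer ({a} : Set W) := by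
      show Subgroup.closure _ ≤ _
      rw [Subgroup.closure_le]
      exact hSa
    exact hle2 hb
  exact Subgroup.mem_centralizer_iff.mp hb' a rfl

theorem normalClosure_solv (x : W) (hx : (Subgroup.centralizer ({x} : Set W)).Normal) :
    IsSolvable (Subgroup.normalClosure ({x} : Set W)) := by
  apply isSolvable_of_comm
  rintro ⟨a, ha⟩ ⟨b, hb⟩
  exact Subtype.ext (normalClosure_mul_comm x hx a ha b hb)

theorem top_mem_cent : (⊤ : Subgroup W) ∈ Cent W := by
  refine ⟨1, ?_⟩
  ext g
  simp [Subgroup.mem_centralizer_iff]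

theorem cent_subgroup_le [Finite W] (H : Subgroup W) :
    (Cent ↥H).ncard ≤ (Cent W).ncard := by
  haveI : Finite (Subgroup W) :=
    Finite.of_injective (fun K : Subgroup W => (K : Set W)) SetLike.coe_injective
  haveI : Finite (Subgroup ↥H) :=
    Finite.of_injective (fun K : Subgroup ↥H => (K : Set ↥H)) SetLike.coe_injective
  have key : Cent ↥H ⊆ (fun K : Subgroup W => K.subgroupOf H) '' (Cent W) := by
    rintro _ ⟨x, rfl⟩
    refine ⟨Subgroup.centralizer {(x : W)}, ⟨(x : W), rfl⟩, ?_⟩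
    ext g
    simp only [Subgroup.mem_subgroupOf, Subgroup.mem_centralizer_iff, Set.mem_singleton_iff,
      forall_eq]
    simp [Subtype.ext_iff]
  calc (Cent ↥H).ncard ≤ ((fun K : Subgroup W => K.subgroupOf H) '' (Cent W)).ncard :=
        Set.ncard_le_ncard key (Set.toFinite _)
  _ ≤ (Cent W).ncard := Set.ncard_image_le (Set.toFinite _)

theorem card_sup_mul_card_inf [Finite W] (D T : Subgroup W) [T.Normal] :
    Nat.card ↥(D ⊔ T) * Nat.card ↥(D ⊓ T) = Nat.card D * Nat.card T := by
  have e := QuotientGroup.quotientInfEquivProdNormalQuotient D T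
  have h1 : Nat.card D = Nat.card (D ⧸ T.subgroupOf D) * Nat.card ↥(T.subgroupOf D) :=
    Subgroup.card_eq_card_quotient_mul_card_subgroup _
  have h2 : Nat.card ↥(D ⊔ T) =
      Nat.card ((D ⊔ T : Subgroup W) ⧸ T.subgroupOf (D ⊔ T)) *
        Nat.card ↥(T.subgroupOf (D ⊔ T)) :=
    Subgroup.card_eq_card_quotient_mul_card_subgroup _
  have hq : Nat.card (D ⧸ T.subgroupOf D) =
      Nat.card ((D ⊔ T : Subgroup W) ⧸ T.subgroupOf (D ⊔ T)) := Nat.card_congr e.toEquiv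
  have h3 : Nat.card ↥(T.subgroupOf D) = Nat.card ↥(D ⊓ T) := by
    have hT : T.subgroupOf D = (D ⊓ T).subgroupOf D := by
      ext g
      simp [Subgroup.mem_subgroupOf, g.property]
    rw [hT]
    exact Nat.card_congr (Subgroup.subgroupOfEquivOfLe inf_le_left).toEquiv
  have h4 : Nat.card ↥(T.subgroupOf (D ⊔ T)) = Nat.card T :=
    Nat.card_congr (Subgroup.subgroupOfEquivOfLe le_sup_right).toEquiv
  rw [h1, h2, hq, h3, h4]
  ring

theorem cover_count {α : Type*} [Finite α] (t : Set α) (F : Finset (Set α)) :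
    (t ∪ ⋃ s ∈ F, s).ncard ≤ t.ncard + ∑ s ∈ F, (s \ t).ncard := by
  classical
  induction F using Finset.induction with
  | empty => simp
  | @insert a F ha ih =>
    have hre : (t ∪ ⋃ s ∈ insert a F, s) ⊆ (a \ t) ∪ (t ∪ ⋃ s ∈ F, s) := by
      intro x hx
      rcases hx with hx | hx
      · exact Or.inr (Or.inl hx)
      · simp only [Set.mem_iUnion] at hx
        obtain ⟨s, hs, hxs⟩ := hx
        rcases Finset.mem_insert.mp hs with rfl | hs
        · by_cases hxt : x ∈ t
          · exact Or.inr (Or.inl hxt)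
          · exact Or.inl ⟨hxs, hxt⟩
        · exact Or.inr (Or.inr (Set.mem_biUnion hs hxs))
    calc (t ∪ ⋃ s ∈ insert a F, s).ncard ≤ ((a \ t) ∪ (t ∪ ⋃ s ∈ F, s)).ncard :=
          Set.ncard_le_ncard hre (Set.toFinite _)
    _ ≤ (a \ t).ncard + (t ∪ ⋃ s ∈ F, s).ncard := Set.ncard_union_le _ _
    _ ≤ (a \ t).ncard + (t.ncard + ∑ s ∈ F, (s \ t).ncard) := by omega
    _ = t.ncard + ∑ s ∈ insert a F, (s \ t).ncard := by
        rw [Finset.sum_insert ha]; ring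

theorem mem_centralizer_conj_iff (x g u : W) :
    u ∈ Subgroup.centralizer ({g * x * g⁻¹} : Set W) ↔
      g⁻¹ * u * g ∈ Subgroup.centralizer ({x} : Set W) := by
  simp only [Subgroup.mem_centralizer_iff, Set.mem_singleton_iff, forall_eq]
  constructor <;> intro h
  · have := congrArg (fun w => g⁻¹ * w * g) h
    simp only [mul_assoc, inv_mul_cancel_left, mul_inv_cancel_left] at this ⊢
    simpa [mul_assoc] using this
  · have := congrArg (fun w => g * w * g⁻¹) h
    simp only [mul_assoc, inv_mul_cancel_left, mul_inv_cancel_left] at this ⊢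
    simpa [mul_assoc] using this

theorem smul_centralizer (g : ConjAct W) (x : W) :
    g • Subgroup.centralizer ({x} : Set W) =
      Subgroup.centralizer ({ConjAct.ofConjAct g * x * (ConjAct.ofConjAct g)⁻¹} : Set W) := by
  ext u
  rw [Subgroup.mem_pointwise_smul_iff_inv_smul_mem, mem_centralizer_conj_iff]
  simp [ConjAct.smul_def]

theorem smul_of_normal (g : ConjAct W) (C : Subgroup W) (h : C.Normal) : g • C = C :=
  h.conjAct g

theorem normal_of_smul_normal (g : ConjAct W) (C : Subgroup W) (h : (g • C).Normal) :
    C.Normal := by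
  have : C = g⁻¹ • (g • C) := (inv_smul_smul g C).symm
  rw [this, smul_of_normal _ _ h]
  exact h

theorem stab_mem_of_mem (D : Subgroup W) (u : W) (hu : u ∈ D) :
    ConjAct.toConjAct u • D = D := by
  ext v
  rw [Subgroup.mem_pointwise_smul_iff_inv_smul_mem]
  simp only [ConjAct.smul_def, map_inv, ConjAct.ofConjAct_toConjAct, inv_inv]
  constructor
  · intro hv
    have := D.mul_mem (D.mul_mem hu hv) (D.inv_mem hu)
    simpa [mul_assoc, inv_mul_cancel_left, mul_inv_cancel_left] using this
  · intro hv
    exact D.mul_mem (D.mul_mem (D.inv_mem hu) hv) hu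

theorem conj_normal_iff (C : Subgroup W)
    (h : ∀ g : ConjAct W, g • C = C) : C.Normal := by
  refine Subgroup.Normal.of_conjugate_fixed (fun g => ?_)
  have hb : MulAut.conj g • C = ConjAct.toConjAct g • C := by
    ext u
    rw [Subgroup.mem_pointwise_smul_iff_inv_smul_mem,
      Subgroup.mem_pointwise_smul_iff_inv_smul_mem]
    simp [ConjAct.smul_def, MulAut.smul_def]
  rw [hb, h]


end CentHelpers

universe u

theorem key_induction : ∀ (n : ℕ) (G : Type u) [Group G] [Finite G],
    Nat.card G ≤ n → (Cent G).ncard ≤ 9 → IsSolvable G := by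
  intro n
  induction n with
  | zero =>
    intro G _ _ hc _
    have h1 : 0 < Nat.card G := Nat.card_pos
    exact absurd (h1.trans_le hc) (lt_irrefl 0)
  | succ n IH =>
    intro G _ _ hcard h9
    by_contra hG
    classical
    haveI : Fintype G := Fintype.ofFinite G
    haveI : Finite (Subgroup G) :=
      Finite.of_injective (fun K : Subgroup G => (K : Set G)) SetLike.coe_injective
    -- all proper subgroups are solvable
    have hsub : ∀ K : Subgroup G, K ≠ ⊤ → IsSolvable K := by
      intro K hK
      refine IH ↥K ?_ ((cent_subgroup_le K).trans h9)
      have hle : Nat.card ↥K ≤ Nat.card G :=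
        Nat.le_of_dvd Nat.card_pos (Subgroup.card_subgroup_dvd_card K)
      have hne : Nat.card ↥K ≠ Nat.card G := fun e => hK (Subgroup.eq_top_of_card_eq K e)
      omega
    have hidx : ∀ K : Subgroup G, K ≠ ⊤ → 5 ≤ K.index := five_le_index hG hsub
    -- the solvable normal subgroup T
    let T : Subgroup G :=
      (Finset.univ : Finset {x : G // (Subgroup.centralizer ({x} : Set G)).Normal}).sup
        (fun x => Subgroup.normalClosure ({(x : G)} : Set G))
    obtain ⟨hTnormal, hTsolv⟩ := finset_sup_solv
      (Finset.univ : Finset {x : G // (Subgroup.centralizer ({x} : Set G)).Normal})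
      (fun x => Subgroup.normalClosure ({(x : G)} : Set G))
      (fun i => Subgroup.normalClosure_normal) (fun i => normalClosure_solv i.1 i.2)
    haveI := hTnormal
    have hmemT : ∀ x : G, (Subgroup.centralizer ({x} : Set G)).Normal → x ∈ T := by
      intro x hx
      have hle := Finset.le_sup
        (f := fun y : {x : G // (Subgroup.centralizer ({x} : Set G)).Normal} =>
          Subgroup.normalClosure ({(y : G)} : Set G)) (Finset.mem_univ ⟨x, hx⟩)
      exact hle (Subgroup.subset_normalClosure rfl)
    have hTne : T ≠ ⊤ := by
      intro e
      apply hG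
      have hTsolv' : IsSolvable ((⊤ : Subgroup G)) := e ▸ hTsolv
      haveI : Group.IsSolvable (⊤ : Subgroup G) := hTsolv'
      exact solvable_of_surjective (f := (Subgroup.topEquiv (G := G)).toMonoidHom)
        (Subgroup.topEquiv (G := G)).surjective
    -- the set of non-normal centralizers
    set Q : Set (Subgroup G) := {C | C ∈ Cent G ∧ ¬ C.Normal} with hQdef
    have hQtop : (⊤ : Subgroup G) ∉ Q := fun h => h.2 inferInstance
    have hQ8 : Q.ncard ≤ 8 := by
      have hQsub : Q ⊆ Cent G \ {⊤} := by
        intro C hC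
        refine ⟨hC.1, ?_⟩
        intro he
        rw [Set.mem_singleton_iff] at he
        exact hQtop (he ▸ hC)
      calc Q.ncard ≤ (Cent G \ {⊤}).ncard := Set.ncard_le_ncard hQsub (Set.toFinite _)
      _ = (Cent G).ncard - 1 := Set.ncard_diff_singleton_of_mem top_mem_cent
      _ ≤ 8 := by omega
    have hcover : ∀ g : G, g ∉ T →
        Subgroup.centralizer ({g} : Set G) ∈ Q ∧ g ∈ Subgroup.centralizer ({g} : Set G) := by
      intro g hg
      have hnn : ¬ (Subgroup.centralizer ({g} : Set G)).Normal := fun h => hg (hmemT g h)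
      exact ⟨⟨⟨g, rfl⟩, hnn⟩, by simp [Subgroup.mem_centralizer_iff]⟩
    obtain ⟨g0, hg0⟩ : ∃ g : G, g ∉ T := by
      by_contra he
      push_neg at he
      exact hTne ((Subgroup.eq_top_iff' T).mpr he)
    set D0 := Subgroup.centralizer ({g0} : Set G) with hD0def
    have hD0Q : D0 ∈ Q := (hcover g0 hg0).1
    -- ConjAct transports
    haveI : Finite (ConjAct G) := Finite.of_equiv G ConjAct.toConjAct.toEquiv
    have hns' : ¬IsSolvable (ConjAct G) := by
      intro h
      apply hG
      haveI : Group.IsSolvable (ConjAct G) := h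
      exact solvable_of_surjective (f := ConjAct.ofConjAct.toMonoidHom)
        ConjAct.ofConjAct.surjective
    have hsub' : ∀ K : Subgroup (ConjAct G), K ≠ ⊤ → IsSolvable K := by
      intro K hK
      have hK' : K.map (ConjAct.ofConjAct.toMonoidHom : ConjAct G →* G) ≠ ⊤ := by
        intro e
        apply hK
        apply Subgroup.map_injective (f := (ConjAct.ofConjAct.toMonoidHom : ConjAct G →* G))
          ConjAct.ofConjAct.injective
        rw [e, Subgroup.map_top_of_surjective (ConjAct.ofConjAct.toMonoidHom : ConjAct G →* G) ConjAct.ofConjAct.surjective]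
      haveI : Group.IsSolvable (K.map (ConjAct.ofConjAct.toMonoidHom : ConjAct G →* G)) := hsub _ hK'
      exact solvable_of_solvable_injective
        (f := (Subgroup.equivMapOfInjective K ConjAct.ofConjAct.toMonoidHom
          ConjAct.ofConjAct.injective).toMonoidHom)
        (MulEquiv.injective _)
    -- orbits of non-normal centralizers are large and stay in Q
    have horbQ : ∀ C, C ∈ Q → (MulAction.orbit (ConjAct G) C ⊆ Q ∧
        5 ≤ (MulAction.orbit (ConjAct G) C).ncard) := by
      intro C hC
      obtain ⟨⟨y, hy⟩, hCn⟩ := hC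
      have hy' : Subgroup.centralizer ({y} : Set G) = C := hy
      have hsubQ : MulAction.orbit (ConjAct G) C ⊆ Q := by
        rintro E ⟨g, rfl⟩
        constructor
        · show g • C ∈ Cent G
          rw [← hy', smul_centralizer]
          exact ⟨_, rfl⟩
        · intro hEn
          exact hCn (normal_of_smul_normal g C hEn)
      refine ⟨hsubQ, ?_⟩
      set St := MulAction.stabilizer (ConjAct G) C with hStdef
      have hStne : St ≠ ⊤ := by
        intro e
        apply hCn
        apply conj_normal_iff
        intro g
        have hgSt : g ∈ St := e ▸ Subgroup.mem_top g
        exact hgSt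
      have h5 : 5 ≤ St.index := five_le_index hns' hsub' St hStne
      have hcardO : (MulAction.orbit (ConjAct G) C).ncard = St.index := by
        rw [← Nat.card_coe_set_eq,
          Nat.card_congr (MulAction.orbitEquivQuotientStabilizer (ConjAct G) C),
          Subgroup.index_eq_card]
      omega
    -- Q is a single orbit
    obtain ⟨hOQ, hO5⟩ := horbQ D0 hD0Q
    set O : Set (Subgroup G) := MulAction.orbit (ConjAct G) D0 with hOdef
    have hQO : Q ⊆ O := by
      intro C hC
      obtain ⟨hOQ', hO5'⟩ := horbQ C hC
      by_cases hdisj : Disjoint O (MulAction.orbit (ConjAct G) C)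
      · exfalso
        have hunion : (O ∪ MulAction.orbit (ConjAct G) C) ⊆ Q := Set.union_subset hOQ hOQ'
        have := Set.ncard_union_eq hdisj (Set.toFinite _) (Set.toFinite _)
        have hle := Set.ncard_le_ncard hunion (Set.toFinite _)
        omega
      · rw [Set.not_disjoint_iff] at hdisj
        obtain ⟨E, hE1, hE2⟩ := hdisj
        obtain ⟨g, hg⟩ := hE1
        obtain ⟨h, hh⟩ := hE2
        have hg' : g • D0 = E := hg
        have hh' : h • C = E := hh
        refine ⟨h⁻¹ * g, ?_⟩
        show (h⁻¹ * g) • D0 = C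
        rw [mul_smul, hg', ← hh', inv_smul_smul]
    -- cardinal bookkeeping
    set gg := Nat.card G with hggdef
    set t := Nat.card ↥T with htdef
    set d := Nat.card ↥D0 with hddef
    have hgpos : 1 ≤ gg := Nat.card_pos
    have htpos : 1 ≤ t := Nat.card_pos
    have h5t : 5 * t ≤ gg := by
      have h5 := hidx T hTne
      have := Subgroup.card_mul_index T
      calc 5 * t = t * 5 := by ring
      _ ≤ t * T.index := Nat.mul_le_mul_left t h5
      _ = gg := this
    -- s * d ≤ gg
    have hsd : Q.ncard * d ≤ gg := by
      set St := MulAction.stabilizer (ConjAct G) D0 with hStdef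
      have hdSt : d ≤ Nat.card St := by
        refine Nat.card_le_card_of_injective
          (fun u : ↥D0 => (⟨ConjAct.toConjAct u.1, stab_mem_of_mem D0 u.1 u.2⟩ : ↥St)) ?_
        intro a b hab
        have := congrArg (fun z : ↥St => ConjAct.ofConjAct z.1) hab
        simp only [ConjAct.ofConjAct_toConjAct] at this
        exact Subtype.ext this
      have hOcard : O.ncard = St.index := by
        rw [← Nat.card_coe_set_eq,
          Nat.card_congr (MulAction.orbitEquivQuotientStabilizer (ConjAct G) D0),
          Subgroup.index_eq_card]
      have hoi : St.index * Nat.card St = Nat.card (ConjAct G) := by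
        rw [mul_comm]
        exact Subgroup.card_mul_index St
      have hgg' : Nat.card (ConjAct G) = gg := Nat.card_congr ConjAct.ofConjAct.toEquiv
      calc Q.ncard * d ≤ O.ncard * Nat.card St :=
            Nat.mul_le_mul (Set.ncard_le_ncard hQO (Set.toFinite _)) hdSt
      _ = St.index * Nat.card St := by rw [hOcard]
      _ = gg := by rw [hoi, hgg']
    -- every member of Q has the same cardinality d
    have hcardQ : ∀ D ∈ Q, Nat.card ↥D = d := by
      intro D hD
      obtain ⟨g, hg⟩ := hQO hD
      rw [← hg]
      exact (Nat.card_congr (Subgroup.equivSMul g D0).toEquiv).symm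
    -- case split on whether some D ⊔ T = ⊤
    by_cases hDT : ∃ D ∈ Q, D ⊔ T = ⊤
    · obtain ⟨D, hDQ, hDsup⟩ := hDT
      have hDne : D ≠ ⊤ := fun e => hQtop (e ▸ hDQ)
      have hDsolv : IsSolvable D := hsub D hDne
      have hquot : IsSolvable (G ⧸ T) := by
        haveI : Group.IsSolvable D := hDsolv
        refine solvable_of_surjective (f := (QuotientGroup.mk' T).comp D.subtype) ?_
        intro q
        obtain ⟨w, rfl⟩ := QuotientGroup.mk'_surjective T q
        have hw : w ∈ (↑D * ↑T : Set G) := by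
          rw [← Subgroup.mul_normal D T, hDsup]
          trivial
        obtain ⟨a, ha, b, hb, hab⟩ := hw
        refine ⟨⟨a, ha⟩, ?_⟩
        simp only [MonoidHom.comp_apply, QuotientGroup.mk'_apply, Subgroup.coe_subtype]
        rw [← hab, QuotientGroup.mk_mul]
        have : ((b : G) : G ⧸ T) = 1 := (QuotientGroup.eq_one_iff b).mpr hb
        rw [this, mul_one]
      exact hG (solv_ext T hTsolv hquot)
    · push_neg at hDT
      -- counting contradiction
      have hperD : ∀ D ∈ Q, 5 * (d * t) ≤ gg * Nat.card ↥(D ⊓ T) := by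
        intro D hD
        have hne : D ⊔ T ≠ ⊤ := hDT D hD
        have h5 := hidx _ hne
        have hprod : Nat.card ↥(D ⊔ T) * Nat.card ↥(D ⊓ T) = Nat.card ↥D * t :=
          card_sup_mul_card_inf D T
        have hci : Nat.card ↥(D ⊔ T) * (D ⊔ T).index = gg := Subgroup.card_mul_index _
        calc 5 * (d * t) = 5 * (Nat.card ↥D * t) := by rw [hcardQ D hD]
        _ ≤ (D ⊔ T).index * (Nat.card ↥D * t) := Nat.mul_le_mul_right _ h5
        _ = (D ⊔ T).index * (Nat.card ↥(D ⊔ T) * Nat.card ↥(D ⊓ T)) := by rw [hprod]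
        _ = (Nat.card ↥(D ⊔ T) * (D ⊔ T).index) * Nat.card ↥(D ⊓ T) := by ring
        _ = gg * Nat.card ↥(D ⊓ T) := by rw [hci]
      -- coverage inequality
      have hQfin : Q.Finite := Set.toFinite _
      set QF : Finset (Subgroup G) := hQfin.toFinset with hQFdef
      have hQFQ : ∀ D, D ∈ QF ↔ D ∈ Q := fun D => Set.Finite.mem_toFinset hQfin
      set F : Finset (Set G) := QF.image (fun D : Subgroup G => (D : Set G)) with hFdef
      have hcovset : (Set.univ : Set G) ⊆ (↑T : Set G) ∪ ⋃ s ∈ F, s := by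
        intro g _
        by_cases hgT : g ∈ T
        · exact Or.inl hgT
        · obtain ⟨hQmem, hgmem⟩ := hcover g hgT
          refine Or.inr ?_
          simp only [Set.mem_iUnion]
          refine ⟨↑(Subgroup.centralizer ({g} : Set G)), ?_, hgmem⟩
          rw [hFdef]
          exact Finset.mem_image_of_mem _ ((hQFQ _).mpr hQmem)
      have hstep1 : gg ≤ t + ∑ s ∈ F, (s \ ↑T).ncard := by
        have h1 : ((Set.univ : Set G)).ncard ≤ ((↑T : Set G) ∪ ⋃ s ∈ F, s).ncard :=
          Set.ncard_le_ncard hcovset (Set.toFinite _)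
        have h2 := cover_count (↑T : Set G) F
        have h3 : ((Set.univ : Set G)).ncard = gg := Set.ncard_univ G
        have h4 : (↑T : Set G).ncard = t := by
          rw [← Nat.card_coe_set_eq]
          rfl
        omega
      have hsum_eq : ∑ s ∈ F, (s \ ↑T).ncard = ∑ D ∈ QF, ((↑D : Set G) \ ↑T).ncard := by
        rw [hFdef]
        refine Finset.sum_image ?_
        intro x hx y hy hxy
        exact SetLike.coe_injective hxy
      have hdiff : ∀ D ∈ QF, ((↑D : Set G) \ ↑T).ncard + Nat.card ↥(D ⊓ T) = d ∧
          Nat.card ↥(D ⊓ T) ≤ d := by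
        intro D hD
        have hDQ := (hQFQ D).mp hD
        have hsubset : (↑(D ⊓ T) : Set G) ⊆ (↑D : Set G) := by
          rw [Subgroup.coe_inf]
          exact Set.inter_subset_left
        have heq : (↑D : Set G) \ (↑T : Set G) = (↑D : Set G) \ (↑(D ⊓ T) : Set G) := by
          rw [Subgroup.coe_inf, Set.diff_self_inter]
        have hdd := Set.ncard_diff hsubset (Set.toFinite _)
        have hcD : (↑D : Set G).ncard = d := by
          rw [← Nat.card_coe_set_eq]
          rw [← hcardQ D hDQ]
          rfl
        have hcDT : (↑(D ⊓ T) : Set G).ncard = Nat.card ↥(D ⊓ T) := by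
          rw [← Nat.card_coe_set_eq]
          rfl
        have hlecard : Nat.card ↥(D ⊓ T) ≤ d := by
          rw [← hcD, ← hcDT]
          exact Set.ncard_le_ncard hsubset (Set.toFinite _)
        constructor
        · rw [heq, hdd, hcD, hcDT]
          omega
        · exact hlecard
      have hQcard : QF.card = Q.ncard := (Set.ncard_eq_toFinset_card Q hQfin).symm
      -- pass to integers
      have hmainZ : (gg : ℤ) ≤ t + ∑ D ∈ QF, ((d : ℤ) - (Nat.card ↥(D ⊓ T) : ℤ)) := by
        have hsum2 : ∑ D ∈ QF, (((↑D : Set G) \ ↑T).ncard : ℤ) =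
            ∑ D ∈ QF, ((d : ℤ) - (Nat.card ↥(D ⊓ T) : ℤ)) := by
          refine Finset.sum_congr rfl ?_
          intro D hD
          obtain ⟨h1, h2⟩ := hdiff D hD
          have : (((↑D : Set G) \ ↑T).ncard : ℤ) + (Nat.card ↥(D ⊓ T) : ℤ) = (d : ℤ) := by
            exact_mod_cast congrArg (fun z : ℕ => (z : ℤ)) h1
          linarith
        have hcast : (gg : ℤ) ≤ (t : ℤ) + ∑ D ∈ QF, (((↑D : Set G) \ ↑T).ncard : ℤ) := by
          rw [hsum_eq] at hstep1
          exact_mod_cast hstep1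
        rw [hsum2] at hcast
        exact hcast
      have hZ : (gg : ℤ) * gg ≤ gg * t + (Q.ncard : ℤ) * ((gg : ℤ) * d - 5 * (d * t)) := by
        have hg0 : (0 : ℤ) ≤ (gg : ℤ) := by positivity
        calc (gg : ℤ) * gg ≤ gg * (t + ∑ D ∈ QF, ((d : ℤ) - (Nat.card ↥(D ⊓ T) : ℤ))) :=
              mul_le_mul_of_nonneg_left hmainZ hg0
        _ = gg * t + ∑ D ∈ QF, ((gg : ℤ) * d - gg * (Nat.card ↥(D ⊓ T) : ℤ)) := by
            rw [mul_add, Finset.mul_sum]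
            congr 1
            refine Finset.sum_congr rfl ?_
            intro D hD
            ring
        _ ≤ gg * t + ∑ D ∈ QF, ((gg : ℤ) * d - 5 * (d * t)) := by
            refine add_le_add (le_refl _) (Finset.sum_le_sum ?_)
            intro D hD
            have := hperD D ((hQFQ D).mp hD)
            have hcast : (5 : ℤ) * ((d : ℤ) * t) ≤ (gg : ℤ) * (Nat.card ↥(D ⊓ T) : ℤ) := by
              exact_mod_cast this
            linarith
        _ = gg * t + (QF.card : ℤ) * ((gg : ℤ) * d - 5 * (d * t)) := by
            rw [Finset.sum_const, nsmul_eq_mul]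
        _ = gg * t + (Q.ncard : ℤ) * ((gg : ℤ) * d - 5 * (d * t)) := by rw [hQcard]
      have hc1 : (Q.ncard : ℤ) * d ≤ (gg : ℤ) := by exact_mod_cast hsd
      have hc2 : (5 : ℤ) * t ≤ (gg : ℤ) := by exact_mod_cast h5t
      have hc3 : (1 : ℤ) ≤ (gg : ℤ) := by exact_mod_cast hgpos
      have hc4 : (1 : ℤ) ≤ (t : ℤ) := by exact_mod_cast htpos
      have hkey : (Q.ncard : ℤ) * ((gg : ℤ) * d - 5 * (d * t)) =
          ((Q.ncard : ℤ) * d) * ((gg : ℤ) - 5 * t) := by ring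
      have hkey2 : ((Q.ncard : ℤ) * d) * ((gg : ℤ) - 5 * t) ≤ (gg : ℤ) * ((gg : ℤ) - 5 * t) :=
        mul_le_mul_of_nonneg_right hc1 (by linarith)
      nlinarith [hZ, hkey, hkey2, hc3, hc4]


theorem stmt18 (G : Type*) [Group G] [Finite G] (h : (Cent G).ncard = 9) :
    IsSolvable G :=
  key_induction (Nat.card G) G le_rfl (by rw [h])
end

section
/- If G is a finite group with |Cent(G)| = 9, then G is a CA-group: C_G(x) is abelian for every x ∈ G \ Z(G). -/
namespace Stmt19Aux

variable {G : Type*} [Group G]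

abbrev Cc (w : G) : Subgroup G := Subgroup.centralizer {w}

lemma mem_Cc {w g : G} : g ∈ Cc w ↔ Commute w g := by
  simp [Cc, Subgroup.mem_centralizer_iff, Commute, SemiconjBy]

lemma self_mem_Cc (w : G) : w ∈ Cc w := mem_Cc.2 (Commute.refl w)

lemma cancel_right {a b c : G} (h : Commute a (b * c)) (hc : Commute a c) : Commute a b := by
  have := h.mul_right hc.inv_right
  simpa [mul_assoc] using this

lemma cancel_left {a b c : G} (h : Commute a (b * c)) (hb : Commute a b) : Commute a c := by
  have := hb.inv_right.mul_right h
  simpa [mul_assoc] using this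

lemma ne_of_mem_not_mem {D E : Subgroup G} {w : G} (h : w ∈ D) (h' : w ∉ E) : D ≠ E :=
  fun he => h' (he ▸ h)

lemma center_commute {z : G} (hz : z ∈ Subgroup.center G) (g : G) : Commute g z :=
  Subgroup.mem_center_iff.1 hz g

lemma mem_center_of_Cc_eq_top {w : G} (h : Cc w = ⊤) : w ∈ Subgroup.center G := by
  rw [Subgroup.mem_center_iff]
  intro g
  have : g ∈ Cc w := by rw [h]; trivial
  exact (mem_Cc.1 this).eq.symm

lemma Cc_eq_top_of_center {w : G} (h : w ∈ Subgroup.center G) : Cc w = ⊤ := by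
  rw [Subgroup.eq_top_iff']
  intro g
  exact mem_Cc.2 (center_commute h g).symm

lemma ten_le_ncard [Finite G] {t : Set (Subgroup G)} (hfin : t.Finite)
    {D0 D1 D2 D3 D4 D5 D6 D7 D8 D9 : Subgroup G}
    (m0 : D0 ∈ t) (m1 : D1 ∈ t) (m2 : D2 ∈ t) (m3 : D3 ∈ t) (m4 : D4 ∈ t) (m5 : D5 ∈ t) (m6 : D6 ∈ t) (m7 : D7 ∈ t) (m8 : D8 ∈ t) (m9 : D9 ∈ t)
    (h01 : D0 ≠ D1) (h02 : D0 ≠ D2) (h03 : D0 ≠ D3) (h04 : D0 ≠ D4) (h05 : D0 ≠ D5)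
    (h06 : D0 ≠ D6) (h07 : D0 ≠ D7) (h08 : D0 ≠ D8) (h09 : D0 ≠ D9) (h12 : D1 ≠ D2)
    (h13 : D1 ≠ D3) (h14 : D1 ≠ D4) (h15 : D1 ≠ D5) (h16 : D1 ≠ D6) (h17 : D1 ≠ D7)
    (h18 : D1 ≠ D8) (h19 : D1 ≠ D9) (h23 : D2 ≠ D3) (h24 : D2 ≠ D4) (h25 : D2 ≠ D5)
    (h26 : D2 ≠ D6) (h27 : D2 ≠ D7) (h28 : D2 ≠ D8) (h29 : D2 ≠ D9) (h34 : D3 ≠ D4)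
    (h35 : D3 ≠ D5) (h36 : D3 ≠ D6) (h37 : D3 ≠ D7) (h38 : D3 ≠ D8) (h39 : D3 ≠ D9)
    (h45 : D4 ≠ D5) (h46 : D4 ≠ D6) (h47 : D4 ≠ D7) (h48 : D4 ≠ D8) (h49 : D4 ≠ D9)
    (h56 : D5 ≠ D6) (h57 : D5 ≠ D7) (h58 : D5 ≠ D8) (h59 : D5 ≠ D9) (h67 : D6 ≠ D7)
    (h68 : D6 ≠ D8) (h69 : D6 ≠ D9) (h78 : D7 ≠ D8) (h79 : D7 ≠ D9) (h89 : D8 ≠ D9) :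
    10 ≤ t.ncard := by
  have hsub : ({D0, D1, D2, D3, D4, D5, D6, D7, D8, D9} : Set (Subgroup G)) ⊆ t := by
    intro D hD
    simp only [Set.mem_insert_iff, Set.mem_singleton_iff] at hD
    rcases hD with rfl|rfl|rfl|rfl|rfl|rfl|rfl|rfl|rfl|rfl <;> assumption
  have hcard : ({D0, D1, D2, D3, D4, D5, D6, D7, D8, D9} : Set (Subgroup G)).ncard = 10 := by
    rw [Set.ncard_insert_of_notMem (by simp [h01, h02, h03, h04, h05, h06, h07, h08, h09]) (Set.toFinite _),
        Set.ncard_insert_of_notMem (by simp [h12, h13, h14, h15, h16, h17, h18, h19]) (Set.toFinite _),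
        Set.ncard_insert_of_notMem (by simp [h23, h24, h25, h26, h27, h28, h29]) (Set.toFinite _),
        Set.ncard_insert_of_notMem (by simp [h34, h35, h36, h37, h38, h39]) (Set.toFinite _),
        Set.ncard_insert_of_notMem (by simp [h45, h46, h47, h48, h49]) (Set.toFinite _),
        Set.ncard_insert_of_notMem (by simp [h56, h57, h58, h59]) (Set.toFinite _),
        Set.ncard_insert_of_notMem (by simp [h67, h68, h69]) (Set.toFinite _),
        Set.ncard_insert_of_notMem (by simp [h78, h79]) (Set.toFinite _),
        Set.ncard_insert_of_notMem (by simp [h89]) (Set.toFinite _),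
        Set.ncard_singleton]
  calc 10 = ({D0, D1, D2, D3, D4, D5, D6, D7, D8, D9} : Set (Subgroup G)).ncard := hcard.symm
    _ ≤ t.ncard := Set.ncard_le_ncard hsub hfin

end Stmt19Aux

open Stmt19Aux in
theorem stmt19 (G : Type*) [Group G] [Finite G] (h : (Cent G).ncard = 9) :
    ∀ x : G, x ∉ Subgroup.center G →
      ∀ a ∈ Subgroup.centralizer {x}, ∀ b ∈ Subgroup.centralizer {x}, a * b = b * a := by
  intro x₀ hx₀ a₀ ha₀' b₀ hb₀'
  by_contra hne
  have hnab₀ : ¬ Commute a₀ b₀ := hne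
  have hCentFin : (Cent G).Finite := Set.finite_range _
  set Z := Subgroup.center G with hZdef
  -- Step 1: maximal proper centralizer above Cc x₀
  set P : Set (Subgroup G) := {D | D ∈ Cent G ∧ Cc x₀ ≤ D ∧ D ≠ ⊤} with hPdef
  have hx₀top : Cc x₀ ≠ ⊤ := fun ht => hx₀ (mem_center_of_Cc_eq_top ht)
  have hPne : P.Nonempty := ⟨Cc x₀, ⟨x₀, rfl⟩, le_refl _, hx₀top⟩
  have hPfin : P.Finite := Set.toFinite _
  obtain ⟨C, hCP, hCmax⟩ := Set.Finite.exists_maximalFor id P hPfin hPne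
  obtain ⟨⟨x, hx⟩, hCx₀le, hCtop⟩ := hCP
  subst hx
  simp only [id] at hCmax
  have hxZ : x ∉ Z := fun hz => hCtop (Cc_eq_top_of_center hz)
  have hxa₀ : Commute x a₀ := mem_Cc.1 (hCx₀le ha₀')
  have hxb₀ : Commute x b₀ := mem_Cc.1 (hCx₀le hb₀')
  have max' : ∀ D, D ∈ Cent G → Cc x ≤ D → D ≠ ⊤ → Cc x = D := by
    intro D hD hle htop
    exact le_antisymm hle (hCmax ⟨hD, le_trans hCx₀le hle, htop⟩ hle)
  by_cases hH1 : ∀ c, c ∈ Cc x → c ∉ Z → Cc c ≤ Cc x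
  · -- Case A
    obtain ⟨g, hg⟩ : ∃ g, g ∉ Cc x := by
      by_contra hh
      push_neg at hh
      exact hCtop ((Subgroup.eq_top_iff' _).2 hh)
    have hgx : ¬ Commute x g := fun hc => hg (mem_Cc.2 hc)
    have ha₀C : a₀ ∈ Cc x := mem_Cc.2 hxa₀
    have hb₀C : b₀ ∈ Cc x := mem_Cc.2 hxb₀
    have ha₀Z : a₀ ∉ Subgroup.center G := fun hz => hnab₀ (center_commute hz b₀).symm
    have hb₀Z : b₀ ∉ Subgroup.center G := fun hz => hnab₀ (center_commute hz a₀)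
    have hxab₀ : Commute x (a₀ * b₀) := hxa₀.mul_right hxb₀
    have hab₀C : a₀ * b₀ ∈ Cc x := mem_Cc.2 hxab₀
    have hab₀Z : a₀ * b₀ ∉ Subgroup.center G := fun hz =>
      hnab₀ (cancel_left (center_commute hz a₀) (Commute.refl a₀))
    -- key injectivity
    have key : ∀ c c' : G, Commute x c → Commute x c' → c * c'⁻¹ ∉ Subgroup.center G →
        Cc (c * g) ≠ Cc (c' * g) := by
      intro c c' hc hc' hw heq
      have h1 : c * g ∈ Cc (c' * g) := by rw [← heq]; exact self_mem_Cc _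
      have h2 : (c * g) * (c' * g)⁻¹ ∈ Cc (c' * g) := mul_mem h1 (inv_mem (self_mem_Cc _))
      have h3 : (c * g) * (c' * g)⁻¹ = c * c'⁻¹ := by group
      rw [h3] at h2
      have hwC : c * c'⁻¹ ∈ Cc x := mem_Cc.2 (hc.mul_right hc'.inv_right)
      have hle := hH1 _ hwC hw
      have h4 : c' * g ∈ Cc (c * c'⁻¹) := mem_Cc.2 (mem_Cc.1 h2).symm
      have h5 : Commute x (c' * g) := mem_Cc.1 (hle h4)
      exact hgx (cancel_left h5 hc')
    -- noncentrality of differences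
    have nz1x : (1 : G) * x⁻¹ ∉ Subgroup.center G := by
      intro hz
      exact hxZ (by simpa using inv_mem hz)
    have nz1a : (1 : G) * a₀⁻¹ ∉ Subgroup.center G := by
      intro hz
      have : a₀ ∈ Subgroup.center G := by simpa using inv_mem hz
      exact ha₀Z this
    have nz1b : (1 : G) * b₀⁻¹ ∉ Subgroup.center G := by
      intro hz
      have : b₀ ∈ Subgroup.center G := by simpa using inv_mem hz
      exact hb₀Z this
    have nz1ab : (1 : G) * (a₀ * b₀)⁻¹ ∉ Subgroup.center G := by
      intro hz
      have : a₀ * b₀ ∈ Subgroup.center G := by simpa using inv_mem hz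
      exact hab₀Z this
    have nzxa : x * a₀⁻¹ ∉ Subgroup.center G := by
      intro hz
      have h1 : Commute b₀ (x * a₀⁻¹) := center_commute hz b₀
      have h2 := (cancel_left h1 hxb₀.symm).inv_right
      rw [inv_inv] at h2
      exact hnab₀ h2.symm
    have nzxb : x * b₀⁻¹ ∉ Subgroup.center G := by
      intro hz
      have h1 : Commute a₀ (x * b₀⁻¹) := center_commute hz a₀
      have h2 := (cancel_left h1 hxa₀.symm).inv_right
      rw [inv_inv] at h2
      exact hnab₀ h2
    have nzxab : x * (a₀ * b₀)⁻¹ ∉ Subgroup.center G := by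
      intro hz
      have h1 : Commute a₀ (x * (a₀ * b₀)⁻¹) := center_commute hz a₀
      have h2 := (cancel_left h1 hxa₀.symm).inv_right
      rw [inv_inv] at h2
      exact hnab₀ (cancel_left h2 (Commute.refl a₀))
    have nzab' : a₀ * b₀⁻¹ ∉ Subgroup.center G := by
      intro hz
      have h1 : Commute b₀ (a₀ * b₀⁻¹) := center_commute hz b₀
      exact hnab₀ (cancel_right h1 (Commute.refl b₀).inv_right).symm
    have nzaab : a₀ * (a₀ * b₀)⁻¹ ∉ Subgroup.center G := by
      intro hz
      have h1 := center_commute hz a₀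
      have hb : b₀⁻¹ = a₀⁻¹ * (a₀ * (a₀ * b₀)⁻¹) * a₀ := by group
      have h2 : a₀⁻¹ * (a₀ * (a₀ * b₀)⁻¹) * a₀ = a₀ * (a₀ * b₀)⁻¹ := by
        rw [mul_assoc, ← h1.eq, inv_mul_cancel_left]
      have h3 : b₀ ∈ Subgroup.center G := by
        have h4 : b₀⁻¹ ∈ Subgroup.center G := by rw [hb, h2]; exact hz
        simpa using inv_mem h4
      exact hb₀Z h3
    have nzbab : b₀ * (a₀ * b₀)⁻¹ ∉ Subgroup.center G := by
      intro hz
      have he : b₀ * (a₀ * b₀)⁻¹ = a₀⁻¹ := by group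
      rw [he] at hz
      have : a₀ ∈ Subgroup.center G := by simpa using inv_mem hz
      exact ha₀Z this
    -- x nonmembership in F₂
    have nxg : x ∉ Cc g := fun hm => hgx (mem_Cc.1 hm).symm
    have nxmem : ∀ c : G, Commute x c → x ∉ Cc (c * g) := fun c hc hm =>
      hgx (cancel_left (mem_Cc.1 hm).symm hc)
    -- a₀ nonmembership helper
    have na₀ab : a₀ ∉ Cc (a₀ * b₀) := fun hm =>
      hnab₀ (cancel_left (mem_Cc.1 hm).symm (Commute.refl a₀))
    have h10 := ten_le_ncard (G := G) hCentFin
      (D0 := ⊤) (D1 := Cc x) (D2 := Cc a₀) (D3 := Cc b₀) (D4 := Cc (a₀ * b₀))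
      (D5 := Cc g) (D6 := Cc (x * g)) (D7 := Cc (a₀ * g)) (D8 := Cc (b₀ * g))
      (D9 := Cc (a₀ * b₀ * g))
      ⟨1, Cc_eq_top_of_center (Subgroup.one_mem _)⟩
      ⟨x, rfl⟩ ⟨a₀, rfl⟩ ⟨b₀, rfl⟩ ⟨a₀ * b₀, rfl⟩
      ⟨g, rfl⟩ ⟨x * g, rfl⟩ ⟨a₀ * g, rfl⟩ ⟨b₀ * g, rfl⟩ ⟨a₀ * b₀ * g, rfl⟩
      -- ⊤ vs F₁
      (ne_of_mem_not_mem (Subgroup.mem_top g) hg)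
      (ne_of_mem_not_mem (Subgroup.mem_top g) (fun hm => hg (hH1 _ ha₀C ha₀Z hm)))
      (ne_of_mem_not_mem (Subgroup.mem_top g) (fun hm => hg (hH1 _ hb₀C hb₀Z hm)))
      (ne_of_mem_not_mem (Subgroup.mem_top g) (fun hm => hg (hH1 _ hab₀C hab₀Z hm)))
      -- ⊤ vs F₂
      (ne_of_mem_not_mem (Subgroup.mem_top x) nxg)
      (ne_of_mem_not_mem (Subgroup.mem_top x) (nxmem x (Commute.refl x)))
      (ne_of_mem_not_mem (Subgroup.mem_top x) (nxmem a₀ hxa₀))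
      (ne_of_mem_not_mem (Subgroup.mem_top x) (nxmem b₀ hxb₀))
      (ne_of_mem_not_mem (Subgroup.mem_top x) (nxmem (a₀ * b₀) hxab₀))
      -- Cc x vs F₁
      (ne_of_mem_not_mem (mem_Cc.2 hxb₀) (fun hm => hnab₀ (mem_Cc.1 hm)))
      (ne_of_mem_not_mem (mem_Cc.2 hxa₀) (fun hm => hnab₀ (mem_Cc.1 hm).symm))
      (ne_of_mem_not_mem (mem_Cc.2 hxa₀) na₀ab)
      -- Cc x vs F₂
      (ne_of_mem_not_mem (self_mem_Cc x) nxg)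
      (ne_of_mem_not_mem (self_mem_Cc x) (nxmem x (Commute.refl x)))
      (ne_of_mem_not_mem (self_mem_Cc x) (nxmem a₀ hxa₀))
      (ne_of_mem_not_mem (self_mem_Cc x) (nxmem b₀ hxb₀))
      (ne_of_mem_not_mem (self_mem_Cc x) (nxmem (a₀ * b₀) hxab₀))
      -- Cc a₀ vs F₁
      (ne_of_mem_not_mem (self_mem_Cc a₀) (fun hm => hnab₀ (mem_Cc.1 hm).symm))
      (ne_of_mem_not_mem (self_mem_Cc a₀) na₀ab)
      -- Cc a₀ vs F₂
      (ne_of_mem_not_mem (mem_Cc.2 hxa₀.symm) nxg)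
      (ne_of_mem_not_mem (mem_Cc.2 hxa₀.symm) (nxmem x (Commute.refl x)))
      (ne_of_mem_not_mem (mem_Cc.2 hxa₀.symm) (nxmem a₀ hxa₀))
      (ne_of_mem_not_mem (mem_Cc.2 hxa₀.symm) (nxmem b₀ hxb₀))
      (ne_of_mem_not_mem (mem_Cc.2 hxa₀.symm) (nxmem (a₀ * b₀) hxab₀))
      -- Cc b₀ vs F₁
      (ne_of_mem_not_mem (self_mem_Cc b₀)
        (fun hm => hnab₀ (cancel_right (mem_Cc.1 hm).symm (Commute.refl b₀)).symm))
      -- Cc b₀ vs F₂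
      (ne_of_mem_not_mem (mem_Cc.2 hxb₀.symm) nxg)
      (ne_of_mem_not_mem (mem_Cc.2 hxb₀.symm) (nxmem x (Commute.refl x)))
      (ne_of_mem_not_mem (mem_Cc.2 hxb₀.symm) (nxmem a₀ hxa₀))
      (ne_of_mem_not_mem (mem_Cc.2 hxb₀.symm) (nxmem b₀ hxb₀))
      (ne_of_mem_not_mem (mem_Cc.2 hxb₀.symm) (nxmem (a₀ * b₀) hxab₀))
      -- Cc (a₀*b₀) vs F₂
      (ne_of_mem_not_mem (mem_Cc.2 hxab₀.symm) nxg)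
      (ne_of_mem_not_mem (mem_Cc.2 hxab₀.symm) (nxmem x (Commute.refl x)))
      (ne_of_mem_not_mem (mem_Cc.2 hxab₀.symm) (nxmem a₀ hxa₀))
      (ne_of_mem_not_mem (mem_Cc.2 hxab₀.symm) (nxmem b₀ hxb₀))
      (ne_of_mem_not_mem (mem_Cc.2 hxab₀.symm) (nxmem (a₀ * b₀) hxab₀))
      -- F₂ internal
      (by have := key 1 x (Commute.one_right x) (Commute.refl x) nz1x; simpa using this)
      (by have := key 1 a₀ (Commute.one_right x) hxa₀ nz1a; simpa using this)
      (by have := key 1 b₀ (Commute.one_right x) hxb₀ nz1b; simpa using this)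
      (by have := key 1 (a₀ * b₀) (Commute.one_right x) hxab₀ nz1ab; simpa using this)
      (key x a₀ (Commute.refl x) hxa₀ nzxa)
      (key x b₀ (Commute.refl x) hxb₀ nzxb)
      (key x (a₀ * b₀) (Commute.refl x) hxab₀ nzxab)
      (key a₀ b₀ hxa₀ hxb₀ nzab')
      (key a₀ (a₀ * b₀) hxa₀ hxab₀ nzaab)
      (key b₀ (a₀ * b₀) hxb₀ hxab₀ nzbab)
    omega
  · -- Case B
    push_neg at hH1
    obtain ⟨a, haC, haZ, hanle⟩ := hH1
    obtain ⟨u, hua, huC⟩ := SetLike.not_le_iff_exists.1 hanle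
    have hxa : Commute x a := mem_Cc.1 haC
    have hau : Commute a u := mem_Cc.1 hua
    have hnxu : ¬ Commute x u := fun hc => huC (mem_Cc.2 hc)
    have hbex : ∃ b, b ∈ Cc x ∧ ¬ Commute a b := by
      by_contra hh
      push_neg at hh
      have hle : Cc x ≤ Cc a := fun c hc => mem_Cc.2 (hh c hc)
      have heq : Cc x = Cc a := max' (Cc a) ⟨a, rfl⟩ hle
        (fun htop => haZ (mem_center_of_Cc_eq_top htop))
      exact huC (by rw [heq]; exact hua)
    obtain ⟨b, hbC, hnab⟩ := hbex
    have hxb : Commute x b := mem_Cc.1 hbC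
    -- derived noncommutation facts
    have hnxxu : ¬ Commute x (x * u) := fun hc => hnxu (cancel_left hc (Commute.refl x))
    have hnxau : ¬ Commute x (a * u) := fun hc => hnxu (cancel_left hc hxa)
    have hnxxau : ¬ Commute x (x * (a * u)) := fun hc => hnxau (cancel_left hc (Commute.refl x))
    have hnxbu : ¬ Commute x (b * u) := fun hc => hnxu (cancel_left hc hxb)
    have hnxxbu : ¬ Commute x (x * (b * u)) := fun hc => hnxbu (cancel_left hc (Commute.refl x))
    have nxmem : ∀ {w : G}, ¬ Commute x w → x ∉ Cc w := fun hnc hm => hnc (mem_Cc.1 hm).symm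
    have nx_u : x ∉ Cc u := nxmem hnxu
    have nx_xu : x ∉ Cc (x * u) := nxmem hnxxu
    have nx_au : x ∉ Cc (a * u) := nxmem hnxau
    have nx_xau : x ∉ Cc (x * (a * u)) := nxmem hnxxau
    have nx_bu : x ∉ Cc (b * u) := nxmem hnxbu
    have nx_xbu : x ∉ Cc (x * (b * u)) := nxmem hnxxbu
    -- x memberships in F₁
    have xm_C : x ∈ Cc x := self_mem_Cc x
    have xm_a : x ∈ Cc a := mem_Cc.2 hxa.symm
    have xm_xa : x ∈ Cc (x * a) := mem_Cc.2 (Commute.mul_left (Commute.refl x) hxa.symm)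
    have xm_b : x ∈ Cc b := mem_Cc.2 hxb.symm
    have xm_ab : x ∈ Cc (a * b) := mem_Cc.2 (Commute.mul_left hxa.symm hxb.symm)
    have hab_x : Commute (a * b) x := Commute.mul_left hxa.symm hxb.symm
    -- nonmemberships for F₁ internal
    have nb_a : b ∉ Cc a := fun hm => hnab (mem_Cc.1 hm)
    have nb_xa : b ∉ Cc (x * a) := fun hm => hnab (cancel_left (mem_Cc.1 hm).symm hxb.symm).symm
    have na_b : a ∉ Cc b := fun hm => hnab (mem_Cc.1 hm).symm
    have na_ab : a ∉ Cc (a * b) := fun hm => hnab (cancel_left (mem_Cc.1 hm).symm (Commute.refl a))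
    have nxa_b : x * a ∉ Cc b := fun hm => hnab (cancel_left (mem_Cc.1 hm) hxb.symm).symm
    have nxa_ab : x * a ∉ Cc (a * b) := by
      intro hm
      have h1 := cancel_left (mem_Cc.1 hm) hab_x
      exact hnab (cancel_left h1.symm (Commute.refl a))
    have nb_ab : b ∉ Cc (a * b) := fun hm =>
      hnab (cancel_right (mem_Cc.1 hm).symm (Commute.refl b)).symm
    -- F₁ disequalities
    have f12 : Cc x ≠ Cc a := ne_of_mem_not_mem (mem_Cc.2 hxb) nb_a
    have f13 : Cc x ≠ Cc (x * a) := ne_of_mem_not_mem (mem_Cc.2 hxb) nb_xa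
    have f14 : Cc x ≠ Cc b := ne_of_mem_not_mem (mem_Cc.2 hxa) na_b
    have f15 : Cc x ≠ Cc (a * b) := ne_of_mem_not_mem (mem_Cc.2 hxa) na_ab
    have f23 : Cc a ≠ Cc (x * a) := by
      intro heq
      have hm : u ∈ Cc (x * a) := by rw [← heq]; exact mem_Cc.2 hau
      exact hnxu (cancel_right (mem_Cc.1 hm).symm hau.symm).symm
    have f24 : Cc a ≠ Cc b := ne_of_mem_not_mem (self_mem_Cc a) na_b
    have f25 : Cc a ≠ Cc (a * b) := ne_of_mem_not_mem (self_mem_Cc a) na_ab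
    have f34 : Cc (x * a) ≠ Cc b := ne_of_mem_not_mem (self_mem_Cc (x * a)) nxa_b
    have f35 : Cc (x * a) ≠ Cc (a * b) := ne_of_mem_not_mem (self_mem_Cc (x * a)) nxa_ab
    have f45 : Cc b ≠ Cc (a * b) := ne_of_mem_not_mem (self_mem_Cc b) nb_ab
    -- ⊤ vs F₁
    have t1 : (⊤ : Subgroup G) ≠ Cc x := ne_of_mem_not_mem (Subgroup.mem_top u) huC
    have t2 : (⊤ : Subgroup G) ≠ Cc a := ne_of_mem_not_mem (Subgroup.mem_top b) nb_a
    have t3 : (⊤ : Subgroup G) ≠ Cc (x * a) := ne_of_mem_not_mem (Subgroup.mem_top b) nb_xa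
    have t4 : (⊤ : Subgroup G) ≠ Cc b := ne_of_mem_not_mem (Subgroup.mem_top a) na_b
    have t5 : (⊤ : Subgroup G) ≠ Cc (a * b) := ne_of_mem_not_mem (Subgroup.mem_top a) na_ab
    -- u memberships
    have um_u : u ∈ Cc u := self_mem_Cc u
    have um_au : u ∈ Cc (a * u) := mem_Cc.2 (Commute.mul_left hau (Commute.refl u))
    have nu_xu : u ∉ Cc (x * u) := fun hm =>
      hnxu (cancel_right (mem_Cc.1 hm).symm (Commute.refl u)).symm
    have hu_au : Commute u (a * u) := hau.symm.mul_right (Commute.refl u)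
    have nu_xau : u ∉ Cc (x * (a * u)) := fun hm =>
      hnxu (cancel_right (mem_Cc.1 hm).symm hu_au).symm
    have cmem : ∀ w : G, Cc w ∈ Cent G := fun w => ⟨w, rfl⟩
    have tmem : (⊤ : Subgroup G) ∈ Cent G := ⟨1, Cc_eq_top_of_center (Subgroup.one_mem _)⟩
    by_cases hα : Cc (a * u) = Cc u
    · -- case α
      have hUsubA : ∀ v, v ∈ Cc u → v ∈ Cc a := by
        intro v hv
        have hv' : v ∈ Cc (a * u) := by rw [hα]; exact hv
        exact mem_Cc.2 (cancel_right (mem_Cc.1 hv').symm (mem_Cc.1 hv).symm).symm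
      have N_bu : ¬ Commute b u := fun hc => hnab (mem_Cc.1 (hUsubA b (mem_Cc.2 hc.symm)))
      have nu_bu : u ∉ Cc (b * u) := fun hm =>
        N_bu (cancel_right (mem_Cc.1 hm).symm (Commute.refl u)).symm
      have hBne : Cc (b * u) ≠ Cc (x * (b * u)) := by
        intro heq
        have hm : x * (b * u) ∈ Cc (b * u) := by rw [heq]; exact self_mem_Cc _
        exact hnxbu (cancel_right (mem_Cc.1 hm) (Commute.refl _)).symm
      have hB2_ne_u : Cc (x * (b * u)) ≠ Cc u := by
        intro heq
        have hm : x * (b * u) ∈ Cc u := by rw [← heq]; exact self_mem_Cc _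
        have hm2 := hUsubA _ hm
        have h1 := cancel_left (mem_Cc.1 hm2) hxa.symm
        exact hnab (cancel_right h1 hau)
      have hB2_ne_xu : Cc (x * (b * u)) ≠ Cc (x * u) := by
        intro heq
        have hm : x * (b * u) ∈ Cc (x * u) := by rw [← heq]; exact self_mem_Cc _
        have hm2 : x * (b * u) * (x * u)⁻¹ ∈ Cc (x * u) := mul_mem hm (inv_mem (self_mem_Cc _))
        have he : x * (b * u) * (x * u)⁻¹ = x * b * x⁻¹ := by group
        have he2 : x * b * x⁻¹ = b := by rw [hxb.eq, mul_inv_cancel_right]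
        rw [he, he2] at hm2
        exact N_bu (cancel_left (mem_Cc.1 hm2).symm hxb.symm)
      by_cases hβ : Cc (x * (a * u)) = Cc (x * u)
      · -- case α ∧ β
        have hXUsubA : ∀ v, v ∈ Cc (x * u) → v ∈ Cc a := by
          intro v hv
          have hv' : v ∈ Cc (x * (a * u)) := by rw [hβ]; exact hv
          have c3 := (mem_Cc.1 hv').symm.mul_right (mem_Cc.1 hv).symm.inv_right
          have he : x * (a * u) * (x * u)⁻¹ = x * a * x⁻¹ := by group
          have he2 : x * a * x⁻¹ = a := by rw [hxa.eq, mul_inv_cancel_right]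
          rw [he, he2] at c3
          exact mem_Cc.2 c3.symm
        have g67 : Cc u ≠ Cc (x * u) := ne_of_mem_not_mem um_u nu_xu
        have g68 : Cc u ≠ Cc (b * u) := ne_of_mem_not_mem um_u nu_bu
        have g69 : Cc u ≠ Cc (x * (b * u)) := fun e => hB2_ne_u e.symm
        have g78 : Cc (x * u) ≠ Cc (b * u) := by
          intro heq
          have hm : b * u ∈ Cc (x * u) := by rw [heq]; exact self_mem_Cc _
          have hm2 : b * u * (x * u)⁻¹ ∈ Cc (x * u) := mul_mem hm (inv_mem (self_mem_Cc _))
          have he : b * u * (x * u)⁻¹ = b * x⁻¹ := by group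
          rw [he] at hm2
          have hm3 := hXUsubA _ hm2
          have h4 := (mem_Cc.1 hm3).mul_right hxa.symm
          rw [inv_mul_cancel_right] at h4
          exact hnab h4
        have g79 : Cc (x * u) ≠ Cc (x * (b * u)) := fun e => hB2_ne_xu e.symm
        have g89 : Cc (b * u) ≠ Cc (x * (b * u)) := hBne
        have h10 := ten_le_ncard (G := G) hCentFin
          (D0 := (⊤ : Subgroup G)) (D1 := Cc x) (D2 := Cc a) (D3 := Cc (x * a)) (D4 := Cc b)
          (D5 := Cc (a * b)) (D6 := Cc u) (D7 := Cc (x * u)) (D8 := Cc (b * u)) (D9 := Cc (x * (b * u)))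
          tmem (cmem x) (cmem a) (cmem (x * a)) (cmem b) (cmem (a * b)) (cmem u) (cmem (x * u)) (cmem (b * u)) (cmem (x * (b * u)))
          (t1)
          (t2)
          (t3)
          (t4)
          (t5)
          (ne_of_mem_not_mem (Subgroup.mem_top x) nx_u)
          (ne_of_mem_not_mem (Subgroup.mem_top x) nx_xu)
          (ne_of_mem_not_mem (Subgroup.mem_top x) nx_bu)
          (ne_of_mem_not_mem (Subgroup.mem_top x) nx_xbu)
          (f12)
          (f13)
          (f14)
          (f15)
          (ne_of_mem_not_mem xm_C nx_u)
          (ne_of_mem_not_mem xm_C nx_xu)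
          (ne_of_mem_not_mem xm_C nx_bu)
          (ne_of_mem_not_mem xm_C nx_xbu)
          (f23)
          (f24)
          (f25)
          (ne_of_mem_not_mem xm_a nx_u)
          (ne_of_mem_not_mem xm_a nx_xu)
          (ne_of_mem_not_mem xm_a nx_bu)
          (ne_of_mem_not_mem xm_a nx_xbu)
          (f34)
          (f35)
          (ne_of_mem_not_mem xm_xa nx_u)
          (ne_of_mem_not_mem xm_xa nx_xu)
          (ne_of_mem_not_mem xm_xa nx_bu)
          (ne_of_mem_not_mem xm_xa nx_xbu)
          (f45)
          (ne_of_mem_not_mem xm_b nx_u)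
          (ne_of_mem_not_mem xm_b nx_xu)
          (ne_of_mem_not_mem xm_b nx_bu)
          (ne_of_mem_not_mem xm_b nx_xbu)
          (ne_of_mem_not_mem xm_ab nx_u)
          (ne_of_mem_not_mem xm_ab nx_xu)
          (ne_of_mem_not_mem xm_ab nx_bu)
          (ne_of_mem_not_mem xm_ab nx_xbu)
          (g67)
          (g68)
          (g69)
          (g78)
          (g79)
          (g89)
        omega
      · -- case α ∧ ¬β
        have g67 : Cc u ≠ Cc (x * u) := ne_of_mem_not_mem um_u nu_xu
        have g68 : Cc u ≠ Cc (x * (a * u)) := ne_of_mem_not_mem um_u nu_xau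
        have g78 : Cc (x * u) ≠ Cc (x * (a * u)) := fun e => hβ e.symm
        by_cases hB1a : Cc (b * u) = Cc (x * u)
        · -- terminal (i): ninth centralizer is Cc (b * x⁻¹)
          have hm : b * u ∈ Cc (x * u) := by rw [← hB1a]; exact self_mem_Cc _
          have hm2 : b * u * (x * u)⁻¹ ∈ Cc (x * u) := mul_mem hm (inv_mem (self_mem_Cc _))
          have he : b * u * (x * u)⁻¹ = b * x⁻¹ := by group
          rw [he] at hm2
          have hwcm : Commute (x * u) (b * x⁻¹) := mem_Cc.1 hm2
          have cw_x : Commute x (b * x⁻¹) := hxb.mul_right (Commute.refl x).inv_right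
          have na_w : a ∉ Cc (b * x⁻¹) := by
            intro hmw
            have h1 := Commute.mul_left (mem_Cc.1 hmw) hxa
            rw [inv_mul_cancel_right] at h1
            exact hnab h1.symm
          have nxa_w : x * a ∉ Cc (b * x⁻¹) := fun hmw =>
            na_w (mem_Cc.2 (cancel_left (mem_Cc.1 hmw) cw_x.symm))
          have nxu_b : x * u ∉ Cc b := fun hmw =>
            N_bu (cancel_left (mem_Cc.1 hmw) hxb.symm)
          have nw_ab : b * x⁻¹ ∉ Cc (a * b) := by
            intro hmw
            have h1 := (mem_Cc.1 hmw).mul_right hab_x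
            rw [inv_mul_cancel_right] at h1
            exact hnab (cancel_right h1.symm (Commute.refl b)).symm
          have xm_w : x ∈ Cc (b * x⁻¹) := mem_Cc.2 cw_x.symm
          have h10 := ten_le_ncard (G := G) hCentFin
            (D0 := (⊤ : Subgroup G)) (D1 := Cc x) (D2 := Cc a) (D3 := Cc (x * a)) (D4 := Cc b)
            (D5 := Cc (a * b)) (D6 := Cc (b * x⁻¹)) (D7 := Cc u) (D8 := Cc (x * u)) (D9 := Cc (x * (a * u)))
            tmem (cmem x) (cmem a) (cmem (x * a)) (cmem b) (cmem (a * b)) (cmem (b * x⁻¹)) (cmem u) (cmem (x * u)) (cmem (x * (a * u)))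
            (t1)
            (t2)
            (t3)
            (t4)
            (t5)
            (ne_of_mem_not_mem (Subgroup.mem_top a) na_w)
            (ne_of_mem_not_mem (Subgroup.mem_top x) nx_u)
            (ne_of_mem_not_mem (Subgroup.mem_top x) nx_xu)
            (ne_of_mem_not_mem (Subgroup.mem_top x) nx_xau)
            (f12)
            (f13)
            (f14)
            (f15)
            (ne_of_mem_not_mem (mem_Cc.2 hxa) na_w)
            (ne_of_mem_not_mem xm_C nx_u)
            (ne_of_mem_not_mem xm_C nx_xu)
            (ne_of_mem_not_mem xm_C nx_xau)
            (f23)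
            (f24)
            (f25)
            (ne_of_mem_not_mem (self_mem_Cc a) na_w)
            (ne_of_mem_not_mem xm_a nx_u)
            (ne_of_mem_not_mem xm_a nx_xu)
            (ne_of_mem_not_mem xm_a nx_xau)
            (f34)
            (f35)
            (ne_of_mem_not_mem (self_mem_Cc (x * a)) nxa_w)
            (ne_of_mem_not_mem xm_xa nx_u)
            (ne_of_mem_not_mem xm_xa nx_xu)
            (ne_of_mem_not_mem xm_xa nx_xau)
            (f45)
            ((ne_of_mem_not_mem (mem_Cc.2 hwcm.symm) nxu_b).symm)
            (ne_of_mem_not_mem xm_b nx_u)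
            (ne_of_mem_not_mem xm_b nx_xu)
            (ne_of_mem_not_mem xm_b nx_xau)
            ((ne_of_mem_not_mem (self_mem_Cc (b * x⁻¹)) nw_ab).symm)
            (ne_of_mem_not_mem xm_ab nx_u)
            (ne_of_mem_not_mem xm_ab nx_xu)
            (ne_of_mem_not_mem xm_ab nx_xau)
            (ne_of_mem_not_mem xm_w nx_u)
            (ne_of_mem_not_mem xm_w nx_xu)
            (ne_of_mem_not_mem xm_w nx_xau)
            (g67)
            (g68)
            (g78)
          omega
        · by_cases hB1b : Cc (b * u) = Cc (x * (a * u))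
          · by_cases hB2b : Cc (x * (b * u)) = Cc (x * (a * u))
            · exact absurd (hB1b.trans hB2b.symm) hBne
            · -- ninth is Cc (x * (b * u))
              have g69 : Cc u ≠ Cc (x * (b * u)) := fun e => hB2_ne_u e.symm
              have g79 : Cc (x * u) ≠ Cc (x * (b * u)) := fun e => hB2_ne_xu e.symm
              have g89 : Cc (x * (a * u)) ≠ Cc (x * (b * u)) := fun e => hB2b e.symm
              have h10 := ten_le_ncard (G := G) hCentFin
                (D0 := (⊤ : Subgroup G)) (D1 := Cc x) (D2 := Cc a) (D3 := Cc (x * a)) (D4 := Cc b)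
                (D5 := Cc (a * b)) (D6 := Cc u) (D7 := Cc (x * u)) (D8 := Cc (x * (a * u))) (D9 := Cc (x * (b * u)))
                tmem (cmem x) (cmem a) (cmem (x * a)) (cmem b) (cmem (a * b)) (cmem u) (cmem (x * u)) (cmem (x * (a * u))) (cmem (x * (b * u)))
                (t1)
                (t2)
                (t3)
                (t4)
                (t5)
                (ne_of_mem_not_mem (Subgroup.mem_top x) nx_u)
                (ne_of_mem_not_mem (Subgroup.mem_top x) nx_xu)
                (ne_of_mem_not_mem (Subgroup.mem_top x) nx_xau)
                (ne_of_mem_not_mem (Subgroup.mem_top x) nx_xbu)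
                (f12)
                (f13)
                (f14)
                (f15)
                (ne_of_mem_not_mem xm_C nx_u)
                (ne_of_mem_not_mem xm_C nx_xu)
                (ne_of_mem_not_mem xm_C nx_xau)
                (ne_of_mem_not_mem xm_C nx_xbu)
                (f23)
                (f24)
                (f25)
                (ne_of_mem_not_mem xm_a nx_u)
                (ne_of_mem_not_mem xm_a nx_xu)
                (ne_of_mem_not_mem xm_a nx_xau)
                (ne_of_mem_not_mem xm_a nx_xbu)
                (f34)
                (f35)
                (ne_of_mem_not_mem xm_xa nx_u)
                (ne_of_mem_not_mem xm_xa nx_xu)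
                (ne_of_mem_not_mem xm_xa nx_xau)
                (ne_of_mem_not_mem xm_xa nx_xbu)
                (f45)
                (ne_of_mem_not_mem xm_b nx_u)
                (ne_of_mem_not_mem xm_b nx_xu)
                (ne_of_mem_not_mem xm_b nx_xau)
                (ne_of_mem_not_mem xm_b nx_xbu)
                (ne_of_mem_not_mem xm_ab nx_u)
                (ne_of_mem_not_mem xm_ab nx_xu)
                (ne_of_mem_not_mem xm_ab nx_xau)
                (ne_of_mem_not_mem xm_ab nx_xbu)
                (g67)
                (g68)
                (g69)
                (g78)
                (g79)
                (g89)
              omega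
          · -- ninth is Cc (b * u)
            have g69 : Cc u ≠ Cc (b * u) := ne_of_mem_not_mem um_u nu_bu
            have g79 : Cc (x * u) ≠ Cc (b * u) := fun e => hB1a e.symm
            have g89 : Cc (x * (a * u)) ≠ Cc (b * u) := fun e => hB1b e.symm
            have h10 := ten_le_ncard (G := G) hCentFin
              (D0 := (⊤ : Subgroup G)) (D1 := Cc x) (D2 := Cc a) (D3 := Cc (x * a)) (D4 := Cc b)
              (D5 := Cc (a * b)) (D6 := Cc u) (D7 := Cc (x * u)) (D8 := Cc (x * (a * u))) (D9 := Cc (b * u))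
              tmem (cmem x) (cmem a) (cmem (x * a)) (cmem b) (cmem (a * b)) (cmem u) (cmem (x * u)) (cmem (x * (a * u))) (cmem (b * u))
              (t1)
              (t2)
              (t3)
              (t4)
              (t5)
              (ne_of_mem_not_mem (Subgroup.mem_top x) nx_u)
              (ne_of_mem_not_mem (Subgroup.mem_top x) nx_xu)
              (ne_of_mem_not_mem (Subgroup.mem_top x) nx_xau)
              (ne_of_mem_not_mem (Subgroup.mem_top x) nx_bu)
              (f12)
              (f13)
              (f14)
              (f15)
              (ne_of_mem_not_mem xm_C nx_u)
              (ne_of_mem_not_mem xm_C nx_xu)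
              (ne_of_mem_not_mem xm_C nx_xau)
              (ne_of_mem_not_mem xm_C nx_bu)
              (f23)
              (f24)
              (f25)
              (ne_of_mem_not_mem xm_a nx_u)
              (ne_of_mem_not_mem xm_a nx_xu)
              (ne_of_mem_not_mem xm_a nx_xau)
              (ne_of_mem_not_mem xm_a nx_bu)
              (f34)
              (f35)
              (ne_of_mem_not_mem xm_xa nx_u)
              (ne_of_mem_not_mem xm_xa nx_xu)
              (ne_of_mem_not_mem xm_xa nx_xau)
              (ne_of_mem_not_mem xm_xa nx_bu)
              (f45)
              (ne_of_mem_not_mem xm_b nx_u)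
              (ne_of_mem_not_mem xm_b nx_xu)
              (ne_of_mem_not_mem xm_b nx_xau)
              (ne_of_mem_not_mem xm_b nx_bu)
              (ne_of_mem_not_mem xm_ab nx_u)
              (ne_of_mem_not_mem xm_ab nx_xu)
              (ne_of_mem_not_mem xm_ab nx_xau)
              (ne_of_mem_not_mem xm_ab nx_bu)
              (g67)
              (g68)
              (g69)
              (g78)
              (g79)
              (g89)
            omega
    · by_cases hβ : Cc (x * (a * u)) = Cc (x * u)
      · -- case ¬α ∧ β
        have hXUsubA : ∀ v, v ∈ Cc (x * u) → v ∈ Cc a := by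
          intro v hv
          have hv' : v ∈ Cc (x * (a * u)) := by rw [hβ]; exact hv
          have c3 := (mem_Cc.1 hv').symm.mul_right (mem_Cc.1 hv).symm.inv_right
          have he : x * (a * u) * (x * u)⁻¹ = x * a * x⁻¹ := by group
          have he2 : x * a * x⁻¹ = a := by rw [hxa.eq, mul_inv_cancel_right]
          rw [he, he2] at c3
          exact mem_Cc.2 c3.symm
        have N_bu : ¬ Commute b u := by
          intro hc
          have h1 : Commute b (x * u) := hxb.symm.mul_right hc
          have h2 := hXUsubA b (mem_Cc.2 h1.symm)
          exact hnab (mem_Cc.1 h2)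
        have nu_bu : u ∉ Cc (b * u) := fun hm =>
          N_bu (cancel_right (mem_Cc.1 hm).symm (Commute.refl u)).symm
        have g67 : Cc u ≠ Cc (a * u) := fun e => hα e.symm
        have g68 : Cc u ≠ Cc (x * u) := ne_of_mem_not_mem um_u nu_xu
        have g69 : Cc u ≠ Cc (b * u) := ne_of_mem_not_mem um_u nu_bu
        have g78 : Cc (a * u) ≠ Cc (x * u) := ne_of_mem_not_mem um_au nu_xu
        have g79 : Cc (a * u) ≠ Cc (b * u) := ne_of_mem_not_mem um_au nu_bu
        have g89 : Cc (x * u) ≠ Cc (b * u) := by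
          intro heq
          have hm : b * u ∈ Cc (x * u) := by rw [heq]; exact self_mem_Cc _
          have hm2 : b * u * (x * u)⁻¹ ∈ Cc (x * u) := mul_mem hm (inv_mem (self_mem_Cc _))
          have he : b * u * (x * u)⁻¹ = b * x⁻¹ := by group
          rw [he] at hm2
          have hm3 := hXUsubA _ hm2
          have h4 := (mem_Cc.1 hm3).mul_right hxa.symm
          rw [inv_mul_cancel_right] at h4
          exact hnab h4
        have h10 := ten_le_ncard (G := G) hCentFin
          (D0 := (⊤ : Subgroup G)) (D1 := Cc x) (D2 := Cc a) (D3 := Cc (x * a)) (D4 := Cc b)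
          (D5 := Cc (a * b)) (D6 := Cc u) (D7 := Cc (a * u)) (D8 := Cc (x * u)) (D9 := Cc (b * u))
          tmem (cmem x) (cmem a) (cmem (x * a)) (cmem b) (cmem (a * b)) (cmem u) (cmem (a * u)) (cmem (x * u)) (cmem (b * u))
          (t1)
          (t2)
          (t3)
          (t4)
          (t5)
          (ne_of_mem_not_mem (Subgroup.mem_top x) nx_u)
          (ne_of_mem_not_mem (Subgroup.mem_top x) nx_au)
          (ne_of_mem_not_mem (Subgroup.mem_top x) nx_xu)
          (ne_of_mem_not_mem (Subgroup.mem_top x) nx_bu)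
          (f12)
          (f13)
          (f14)
          (f15)
          (ne_of_mem_not_mem xm_C nx_u)
          (ne_of_mem_not_mem xm_C nx_au)
          (ne_of_mem_not_mem xm_C nx_xu)
          (ne_of_mem_not_mem xm_C nx_bu)
          (f23)
          (f24)
          (f25)
          (ne_of_mem_not_mem xm_a nx_u)
          (ne_of_mem_not_mem xm_a nx_au)
          (ne_of_mem_not_mem xm_a nx_xu)
          (ne_of_mem_not_mem xm_a nx_bu)
          (f34)
          (f35)
          (ne_of_mem_not_mem xm_xa nx_u)
          (ne_of_mem_not_mem xm_xa nx_au)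
          (ne_of_mem_not_mem xm_xa nx_xu)
          (ne_of_mem_not_mem xm_xa nx_bu)
          (f45)
          (ne_of_mem_not_mem xm_b nx_u)
          (ne_of_mem_not_mem xm_b nx_au)
          (ne_of_mem_not_mem xm_b nx_xu)
          (ne_of_mem_not_mem xm_b nx_bu)
          (ne_of_mem_not_mem xm_ab nx_u)
          (ne_of_mem_not_mem xm_ab nx_au)
          (ne_of_mem_not_mem xm_ab nx_xu)
          (ne_of_mem_not_mem xm_ab nx_bu)
          (g67)
          (g68)
          (g69)
          (g78)
          (g79)
          (g89)
        omega
      · -- case ¬α ∧ ¬β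
        have g67 : Cc u ≠ Cc (x * u) := ne_of_mem_not_mem um_u nu_xu
        have g68 : Cc u ≠ Cc (a * u) := fun e => hα e.symm
        have g69 : Cc u ≠ Cc (x * (a * u)) := ne_of_mem_not_mem um_u nu_xau
        have g78 : Cc (x * u) ≠ Cc (a * u) := (ne_of_mem_not_mem um_au nu_xu).symm
        have g79 : Cc (x * u) ≠ Cc (x * (a * u)) := fun e => hβ e.symm
        have g89 : Cc (a * u) ≠ Cc (x * (a * u)) := by
          intro heq
          have hm : x * (a * u) ∈ Cc (a * u) := by rw [heq]; exact self_mem_Cc _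
          exact hnxau (cancel_right (mem_Cc.1 hm) (Commute.refl _)).symm
        have h10 := ten_le_ncard (G := G) hCentFin
          (D0 := (⊤ : Subgroup G)) (D1 := Cc x) (D2 := Cc a) (D3 := Cc (x * a)) (D4 := Cc b)
          (D5 := Cc (a * b)) (D6 := Cc u) (D7 := Cc (x * u)) (D8 := Cc (a * u)) (D9 := Cc (x * (a * u)))
          tmem (cmem x) (cmem a) (cmem (x * a)) (cmem b) (cmem (a * b)) (cmem u) (cmem (x * u)) (cmem (a * u)) (cmem (x * (a * u)))
          (t1)
          (t2)
          (t3)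
          (t4)
          (t5)
          (ne_of_mem_not_mem (Subgroup.mem_top x) nx_u)
          (ne_of_mem_not_mem (Subgroup.mem_top x) nx_xu)
          (ne_of_mem_not_mem (Subgroup.mem_top x) nx_au)
          (ne_of_mem_not_mem (Subgroup.mem_top x) nx_xau)
          (f12)
          (f13)
          (f14)
          (f15)
          (ne_of_mem_not_mem xm_C nx_u)
          (ne_of_mem_not_mem xm_C nx_xu)
          (ne_of_mem_not_mem xm_C nx_au)
          (ne_of_mem_not_mem xm_C nx_xau)
          (f23)
          (f24)
          (f25)
          (ne_of_mem_not_mem xm_a nx_u)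
          (ne_of_mem_not_mem xm_a nx_xu)
          (ne_of_mem_not_mem xm_a nx_au)
          (ne_of_mem_not_mem xm_a nx_xau)
          (f34)
          (f35)
          (ne_of_mem_not_mem xm_xa nx_u)
          (ne_of_mem_not_mem xm_xa nx_xu)
          (ne_of_mem_not_mem xm_xa nx_au)
          (ne_of_mem_not_mem xm_xa nx_xau)
          (f45)
          (ne_of_mem_not_mem xm_b nx_u)
          (ne_of_mem_not_mem xm_b nx_xu)
          (ne_of_mem_not_mem xm_b nx_au)
          (ne_of_mem_not_mem xm_b nx_xau)
          (ne_of_mem_not_mem xm_ab nx_u)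
          (ne_of_mem_not_mem xm_ab nx_xu)
          (ne_of_mem_not_mem xm_ab nx_au)
          (ne_of_mem_not_mem xm_ab nx_xau)
          (g67)
          (g68)
          (g69)
          (g78)
          (g79)
          (g89)
        omega
end
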